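/- arXiv:2507.13125 — 8 statements merged into one kernel-verified Lean document; each statement's English description precedes it below -/
import Mathlib

section
/- Let t1 ∈ (0, t1*) and T = T(t1). Then the explicit function x* is of class C¹ on [0, T] and, with y* its derivative, the triple (x*, y*, u*) is admissible on [0, T]; it satisfies x*(0) = x*(T) = 1 and y*(0) = y*(T) = 0, and its cost ∫₀ᵀ u*(t) dt equals C(t1) = 2·t1·u_max + (T − 2·t1)·u_min. -/
open MeasureTheory Real Set Filter Topology

noncomputable section

/-- An admissible triple `(x, y, u)` on `[0, T]`: `u` is Lebesgue measurable with
`umin ≤ u(t) ≤ umax` almost everywhere on `[0, T]`, and `x, y` solve the integral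
equations `x(t) = x(0) + ∫₀ᵗ y` and `y(t) = y(0) − ∫₀ᵗ u·x` on `[0, T]`. -/
def OCAdmissible (umin umax T : ℝ) (x y u : ℝ → ℝ) : Prop :=
  Measurable u ∧
  (∀ᵐ t ∂(volume.restrict (Icc (0:ℝ) T)), umin ≤ u t ∧ u t ≤ umax) ∧
  (∀ t ∈ Icc (0:ℝ) T, x t = x 0 + ∫ s in (0:ℝ)..t, y s) ∧
  (∀ t ∈ Icc (0:ℝ) T, y t = y 0 - ∫ s in (0:ℝ)..t, u s * x s)

/-- The cost of a control `u` on `[0, T]`. -/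
def OCcost (T : ℝ) (u : ℝ → ℝ) : ℝ := ∫ t in (0:ℝ)..T, u t

/-- Periodicity of a trajectory on `[0, T]`. -/
def OCPeriodic (T : ℝ) (x y : ℝ → ℝ) : Prop := x 0 = x T ∧ y 0 = y T

/-- Nontriviality of a trajectory. -/
def OCNontrivial (x y : ℝ → ℝ) : Prop := 0 < x 0 ^ 2 + y 0 ^ 2

/-- An optimal solution of the periodic optimal control problem on `[0, T]`. -/
def OCOptimal (umin umax T : ℝ) (x y u : ℝ → ℝ) : Prop :=
  OCAdmissible umin umax T x y u ∧ OCPeriodic T x y ∧ OCNontrivial x y ∧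
  ∀ x' y' u' : ℝ → ℝ, OCAdmissible umin umax T x' y' u' → OCPeriodic T x' y' →
    OCNontrivial x' y' → OCcost T u ≤ OCcost T u'

/-- `t1* = (1/ω_max)·Arctan(ω_min/ω_max)` with `ω_min = √(−u_min)`, `ω_max = √u_max`. -/
def OCt1star (umin umax : ℝ) : ℝ :=
  (1 / Real.sqrt umax) * Real.arctan (Real.sqrt (-umin) / Real.sqrt umax)

/-- The period `T(t1)`. -/
def OCT (umin umax t1 : ℝ) : ℝ :=
  (1 / Real.sqrt (-umin)) *
    Real.log ((1 + (Real.sqrt umax / Real.sqrt (-umin)) * Real.tan (Real.sqrt umax * t1)) /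
              (1 - (Real.sqrt umax / Real.sqrt (-umin)) * Real.tan (Real.sqrt umax * t1)))
  + 2 * t1

/-- The optimal cost `C(t1) = 2·t1·u_max + (T(t1) − 2·t1)·u_min`. -/
def OCC (umin umax t1 : ℝ) : ℝ := 2 * t1 * umax + (OCT umin umax t1 - 2 * t1) * umin

/-- The explicit bang-bang control `u*` on `[0, T]`. -/
def OCustar (umin umax t1 T : ℝ) (t : ℝ) : ℝ :=
  if t1 < t ∧ t < T - t1 then umin else umax

/-- The explicit trajectory `x*` on `[0, T]`. -/
def OCxstar (umin umax t1 T : ℝ) (t : ℝ) : ℝ :=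
  if t ≤ t1 then Real.cos (Real.sqrt umax * t)
  else if t ≤ T - t1 then
    Real.cos (Real.sqrt umax * t1) * Real.cosh (Real.sqrt (-umin) * (t - t1))
      - (Real.sqrt umax / Real.sqrt (-umin)) * Real.sin (Real.sqrt umax * t1) *
        Real.sinh (Real.sqrt (-umin) * (t - t1))
  else Real.cos (Real.sqrt umax * (T - t))

/-- generic piecewise trajectory -/
def pX (ω ν t1 T : ℝ) (t : ℝ) : ℝ :=
  if t ≤ t1 then Real.cos (ω * t)
  else if t ≤ T - t1 then
    Real.cos (ω * t1) * Real.cosh (ν * (t - t1))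
      - ω / ν * Real.sin (ω * t1) * Real.sinh (ν * (t - t1))
  else Real.cos (ω * (T - t))

/-- generic piecewise derivative -/
def pY (ω ν t1 T : ℝ) (t : ℝ) : ℝ :=
  if t ≤ t1 then -(ω * Real.sin (ω * t))
  else if t ≤ T - t1 then
    ν * Real.cos (ω * t1) * Real.sinh (ν * (t - t1))
      - ω * Real.sin (ω * t1) * Real.cosh (ν * (t - t1))
  else ω * Real.sin (ω * (T - t))

/-- generic piecewise control (negated second derivative factor) -/
def pU (ω ν t1 T : ℝ) (t : ℝ) : ℝ :=
  if t1 < t ∧ t < T - t1 then -(ν ^ 2) else ω ^ 2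

section master

variable {ω ν t1 T : ℝ}

lemma f1d (t : ℝ) : HasDerivAt (fun s => Real.cos (ω * s)) (-(ω * Real.sin (ω * t))) t := by
  have h := ((hasDerivAt_id t).const_mul ω).cos
  refine h.congr_deriv ?_; simp only [id_eq]; ring

lemma f2d (hν : 0 < ν) (t : ℝ) :
    HasDerivAt (fun s => Real.cos (ω * t1) * Real.cosh (ν * (s - t1))
      - ω / ν * Real.sin (ω * t1) * Real.sinh (ν * (s - t1)))
      (ν * Real.cos (ω * t1) * Real.sinh (ν * (t - t1))
        - ω * Real.sin (ω * t1) * Real.cosh (ν * (t - t1))) t := by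
  have hin : HasDerivAt (fun s : ℝ => ν * (s - t1)) (ν * 1) t :=
    ((hasDerivAt_id t).sub_const t1).const_mul ν
  have h := ((hin.cosh).const_mul (Real.cos (ω * t1))).sub
    ((hin.sinh).const_mul (ω / ν * Real.sin (ω * t1)))
  refine h.congr_deriv ?_
  field_simp

lemma f3d (t : ℝ) : HasDerivAt (fun s => Real.cos (ω * (T - s))) (ω * Real.sin (ω * (T - t))) t := by
  have hin : HasDerivAt (fun s : ℝ => ω * (T - s)) (ω * (0 - 1)) t :=
    (((hasDerivAt_const t T).sub (hasDerivAt_id t))).const_mul ω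
  have h := hin.cos
  refine h.congr_deriv ?_; ring

lemma g1d (t : ℝ) : HasDerivAt (fun s => -(ω * Real.sin (ω * s))) (-(ω ^ 2 * Real.cos (ω * t))) t := by
  have h := (((hasDerivAt_id t).const_mul ω).sin.const_mul ω).neg
  refine h.congr_deriv ?_; simp only [id_eq]; ring

lemma g2d (hν : 0 < ν) (t : ℝ) :
    HasDerivAt (fun s => ν * Real.cos (ω * t1) * Real.sinh (ν * (s - t1))
      - ω * Real.sin (ω * t1) * Real.cosh (ν * (s - t1)))
      (ν ^ 2 * (Real.cos (ω * t1) * Real.cosh (ν * (t - t1))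
        - ω / ν * Real.sin (ω * t1) * Real.sinh (ν * (t - t1)))) t := by
  have hin : HasDerivAt (fun s : ℝ => ν * (s - t1)) (ν * 1) t :=
    ((hasDerivAt_id t).sub_const t1).const_mul ν
  have h := ((hin.sinh).const_mul (ν * Real.cos (ω * t1))).sub
    ((hin.cosh).const_mul (ω * Real.sin (ω * t1)))
  refine h.congr_deriv ?_
  field_simp

lemma g3d (t : ℝ) : HasDerivAt (fun s => ω * Real.sin (ω * (T - s)))
    (-(ω ^ 2 * Real.cos (ω * (T - t)))) t := by
  have hin : HasDerivAt (fun s : ℝ => ω * (T - s)) (ω * (0 - 1)) t :=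
    (((hasDerivAt_const t T).sub (hasDerivAt_id t))).const_mul ω
  have h := (hin.sin).const_mul ω
  refine h.congr_deriv ?_; ring

theorem pX_hasDeriv (hν : 0 < ν) (ht1 : 0 < t1) (hmid : t1 < T - t1)
    (M1 : Real.cos (ω * t1) * Real.cosh (ν * (T - 2 * t1))
      - ω / ν * Real.sin (ω * t1) * Real.sinh (ν * (T - 2 * t1)) = Real.cos (ω * t1))
    (M2 : ν * Real.cos (ω * t1) * Real.sinh (ν * (T - 2 * t1))
      - ω * Real.sin (ω * t1) * Real.cosh (ν * (T - 2 * t1)) = ω * Real.sin (ω * t1)) :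
    ∀ t, HasDerivAt (pX ω ν t1 T) (pY ω ν t1 T t) t := by
  have hT2 : ν * (T - t1 - t1) = ν * (T - 2 * t1) := by ring_nf
  have hxIcc : ∀ s ∈ Icc t1 (T - t1), pX ω ν t1 T s =
      Real.cos (ω * t1) * Real.cosh (ν * (s - t1))
        - ω / ν * Real.sin (ω * t1) * Real.sinh (ν * (s - t1)) := by
    intro s hs
    rcases eq_or_lt_of_le hs.1 with h | h
    · subst h; simp [pX]
    · simp [pX, not_le.2 h, hs.2]
  have hxIci : ∀ s ∈ Ici (T - t1), pX ω ν t1 T s = Real.cos (ω * (T - s)) := by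
    intro s hs
    rcases eq_or_lt_of_le (mem_Ici.1 hs) with h | h
    · have hs1 : ¬ s ≤ t1 := by rw [← h]; linarith
      have : pX ω ν t1 T s = Real.cos (ω * t1) * Real.cosh (ν * (s - t1))
          - ω / ν * Real.sin (ω * t1) * Real.sinh (ν * (s - t1)) := by
        simp [pX, hs1, le_of_eq h.symm]
      rw [this, ← h]
      rw [show ν * (T - t1 - t1) = ν * (T - 2 * t1) by ring, M1]
      rw [show T - (T - t1) = t1 by ring]
    · have hs1 : ¬ s ≤ t1 := by linarith
      have hs2 : ¬ s ≤ T - t1 := by linarith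
      simp [pX, hs1, hs2]
  intro t
  rcases lt_trichotomy t t1 with h1 | h1 | h1
  · have hev : pX ω ν t1 T =ᶠ[𝓝 t] fun s => Real.cos (ω * s) := by
      filter_upwards [Iio_mem_nhds h1] with s hs
      simp [pX, (mem_Iio.1 hs).le]
    have : pY ω ν t1 T t = -(ω * Real.sin (ω * t)) := by simp [pY, h1.le]
    rw [this]
    exact (f1d t).congr_of_eventuallyEq hev
  · rw [h1]
    have hleft : HasDerivWithinAt (pX ω ν t1 T) (-(ω * Real.sin (ω * t1))) (Iic t1) t1 := by
      refine (f1d t1).hasDerivWithinAt.congr (fun s hs => ?_) ?_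
      · simp [pX, mem_Iic.1 hs]
      · simp [pX]
    have hright : HasDerivWithinAt (pX ω ν t1 T) (-(ω * Real.sin (ω * t1))) (Ici t1) t1 := by
      have h0 : HasDerivWithinAt (pX ω ν t1 T)
          (ν * Real.cos (ω * t1) * Real.sinh (ν * (t1 - t1))
            - ω * Real.sin (ω * t1) * Real.cosh (ν * (t1 - t1))) (Icc t1 (T - t1)) t1 := by
        refine (f2d hν t1).hasDerivWithinAt.congr (fun s hs => hxIcc s hs) ?_
        exact hxIcc t1 ⟨le_rfl, hmid.le⟩
      have h0' := h0.mono_of_mem_nhdsWithin (Icc_mem_nhdsGE hmid)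
      refine h0'.congr_deriv ?_
      simp
    have := hleft.union hright
    rw [Iic_union_Ici] at this
    have h2 := this.hasDerivAt (by simp)
    have : pY ω ν t1 T t1 = -(ω * Real.sin (ω * t1)) := by simp [pY]
    rw [this]; exact h2
  rcases lt_trichotomy t (T - t1) with h2 | h2 | h2
  · have hev : pX ω ν t1 T =ᶠ[𝓝 t] fun s => Real.cos (ω * t1) * Real.cosh (ν * (s - t1))
        - ω / ν * Real.sin (ω * t1) * Real.sinh (ν * (s - t1)) := by
      filter_upwards [Ioo_mem_nhds h1 h2] with s hs
      exact hxIcc s ⟨hs.1.le, hs.2.le⟩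
    have : pY ω ν t1 T t = ν * Real.cos (ω * t1) * Real.sinh (ν * (t - t1))
        - ω * Real.sin (ω * t1) * Real.cosh (ν * (t - t1)) := by
      simp [pY, not_le.2 h1, h2.le]
    rw [this]
    exact (f2d hν t).congr_of_eventuallyEq hev
  · rw [h2]
    have hval : pY ω ν t1 T (T - t1) = ω * Real.sin (ω * t1) := by
      have : ¬ T - t1 ≤ t1 := by linarith
      simp only [pY, this, if_false, le_refl, if_true]
      rw [show ν * (T - t1 - t1) = ν * (T - 2 * t1) by ring]
      exact M2
    have hleft : HasDerivWithinAt (pX ω ν t1 T) (ω * Real.sin (ω * t1)) (Iic (T - t1)) (T - t1) := by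
      have h0 : HasDerivWithinAt (pX ω ν t1 T)
          (ν * Real.cos (ω * t1) * Real.sinh (ν * (T - t1 - t1))
            - ω * Real.sin (ω * t1) * Real.cosh (ν * (T - t1 - t1))) (Icc t1 (T - t1)) (T - t1) := by
        refine (f2d hν (T - t1)).hasDerivWithinAt.congr (fun s hs => hxIcc s hs) ?_
        exact hxIcc (T - t1) ⟨hmid.le, le_rfl⟩
      have h0' := h0.mono_of_mem_nhdsWithin (Icc_mem_nhdsLE hmid)
      refine h0'.congr_deriv ?_
      rw [show ν * (T - t1 - t1) = ν * (T - 2 * t1) by ring, M2]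
    have hright : HasDerivWithinAt (pX ω ν t1 T) (ω * Real.sin (ω * t1)) (Ici (T - t1)) (T - t1) := by
      have h0 := (f3d (ω := ω) (T := T) (T - t1)).hasDerivWithinAt (s := Ici (T - t1))
      have h0' := h0.congr (fun s hs => hxIci s hs) (hxIci (T - t1) (mem_Ici.2 le_rfl))
      refine h0'.congr_deriv ?_
      rw [show T - (T - t1) = t1 by ring]
    have := hleft.union hright
    rw [Iic_union_Ici] at this
    have h2 := this.hasDerivAt (by simp)
    rw [hval]; exact h2
  · have hev : pX ω ν t1 T =ᶠ[𝓝 t] fun s => Real.cos (ω * (T - s)) := by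
      filter_upwards [Ioi_mem_nhds h2] with s hs
      exact hxIci s (mem_Ici.2 (le_of_lt hs))
    have : pY ω ν t1 T t = ω * Real.sin (ω * (T - t)) := by
      simp [pY, not_le.2 h1, not_le.2 h2]
    rw [this]
    exact (f3d t).congr_of_eventuallyEq hev

theorem pY_cont (hν : 0 < ν) (ht1 : 0 < t1) (hmid : t1 < T - t1)
    (M2 : ν * Real.cos (ω * t1) * Real.sinh (ν * (T - 2 * t1))
      - ω * Real.sin (ω * t1) * Real.cosh (ν * (T - 2 * t1)) = ω * Real.sin (ω * t1)) :
    Continuous (pY ω ν t1 T) := by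
  have hg2 : Continuous fun s : ℝ => ν * Real.cos (ω * t1) * Real.sinh (ν * (s - t1))
      - ω * Real.sin (ω * t1) * Real.cosh (ν * (s - t1)) := by fun_prop
  have hg3 : Continuous fun s : ℝ => ω * Real.sin (ω * (T - s)) := by fun_prop
  have hinner : Continuous fun s : ℝ => if s ≤ T - t1 then
      ν * Real.cos (ω * t1) * Real.sinh (ν * (s - t1))
        - ω * Real.sin (ω * t1) * Real.cosh (ν * (s - t1))
      else ω * Real.sin (ω * (T - s)) := by
    refine Continuous.if_le hg2 hg3 continuous_id continuous_const fun s hs => ?_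
    rw [hs]
    rw [show ν * (T - t1 - t1) = ν * (T - 2 * t1) by ring, M2,
      show T - (T - t1) = t1 by ring]
  have hg1 : Continuous fun s : ℝ => -(ω * Real.sin (ω * s)) := by fun_prop
  have houter := Continuous.if_le hg1 hinner continuous_id continuous_const (fun s hs => by
    simp only [id_eq] at hs
    rw [hs, if_pos hmid.le]
    simp)
  exact houter

theorem pY_hasDeriv (hν : 0 < ν) (ht1 : 0 < t1) (hmid : t1 < T - t1) :
    ∀ t, t ≠ t1 → t ≠ T - t1 →
      HasDerivAt (pY ω ν t1 T) (-(pU ω ν t1 T t * pX ω ν t1 T t)) t := by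
  intro t hne1 hne2
  rcases lt_trichotomy t t1 with h1 | h1 | h1
  · have hev : pY ω ν t1 T =ᶠ[𝓝 t] fun s => -(ω * Real.sin (ω * s)) := by
      filter_upwards [Iio_mem_nhds h1] with s hs
      simp [pY, (mem_Iio.1 hs).le]
    have hu : pU ω ν t1 T t = ω ^ 2 := by
      have hc : ¬ (t1 < t ∧ t < T - t1) := by rintro ⟨c1, -⟩; linarith
      simp [pU, hc]
    have hx : pX ω ν t1 T t = Real.cos (ω * t) := by simp [pX, h1.le]
    rw [hu, hx]
    exact (g1d t).congr_of_eventuallyEq hev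
  · exact absurd h1 hne1
  rcases lt_trichotomy t (T - t1) with h2 | h2 | h2
  · have hev : pY ω ν t1 T =ᶠ[𝓝 t] fun s => ν * Real.cos (ω * t1) * Real.sinh (ν * (s - t1))
        - ω * Real.sin (ω * t1) * Real.cosh (ν * (s - t1)) := by
      filter_upwards [Ioo_mem_nhds h1 h2] with s hs
      simp [pY, not_le.2 hs.1, hs.2.le]
    have hu : pU ω ν t1 T t = -(ν ^ 2) := by simp [pU, h1, h2]
    have hx : pX ω ν t1 T t = Real.cos (ω * t1) * Real.cosh (ν * (t - t1))
        - ω / ν * Real.sin (ω * t1) * Real.sinh (ν * (t - t1)) := by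
      simp [pX, not_le.2 h1, h2.le]
    rw [hu, hx, neg_mul, neg_neg]
    exact (g2d hν t).congr_of_eventuallyEq hev
  · exact absurd h2 hne2
  · have hev : pY ω ν t1 T =ᶠ[𝓝 t] fun s => ω * Real.sin (ω * (T - s)) := by
      filter_upwards [Ioi_mem_nhds h2] with s hs
      have hs1 : ¬ s ≤ t1 := by simp only [mem_Ioi] at hs; push_neg; linarith
      have hs2 : ¬ s ≤ T - t1 := by simp only [mem_Ioi] at hs; push_neg; linarith
      simp [pY, hs1, hs2]
    have hu : pU ω ν t1 T t = ω ^ 2 := by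
      have hc : ¬ (t1 < t ∧ t < T - t1) := by rintro ⟨-, c2⟩; linarith
      simp [pU, hc]
    have hx : pX ω ν t1 T t = Real.cos (ω * (T - t)) := by
      have hs1 : ¬ t ≤ t1 := by linarith
      have hs2 : ¬ t ≤ T - t1 := by linarith
      simp [pX, hs1, hs2]
    rw [hu, hx]
    exact (g3d t).congr_of_eventuallyEq hev

end master

/-- The explicit function `x*` is `C¹` on `[0, T]`, the triple `(x*, (x*)', u*)` is
admissible on `[0, T]`, it satisfies `x*(0) = x*(T) = 1`, `(x*)'(0) = (x*)'(T) = 0`,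
and its cost equals `C(t1) = 2·t1·u_max + (T − 2·t1)·u_min`. -/
theorem explicit_triple_admissible (umin umax : ℝ)
    (humin : umin < 0) (humax : 0 < umax)
    (t1 : ℝ) (ht1 : t1 ∈ Ioo 0 (OCt1star umin umax)) (T : ℝ) (hT : T = OCT umin umax t1) :
    ContDiffOn ℝ 1 (OCxstar umin umax t1 T) (Icc (0:ℝ) T) ∧
    OCAdmissible umin umax T (OCxstar umin umax t1 T) (deriv (OCxstar umin umax t1 T))
      (OCustar umin umax t1 T) ∧
    OCxstar umin umax t1 T 0 = 1 ∧ OCxstar umin umax t1 T T = 1 ∧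
    deriv (OCxstar umin umax t1 T) 0 = 0 ∧ deriv (OCxstar umin umax t1 T) T = 0 ∧
    OCcost T (OCustar umin umax t1 T) = OCC umin umax t1 := by
  obtain ⟨ht1pos, ht1lt⟩ := ht1
  have humin' : (0:ℝ) < -umin := by linarith
  obtain ⟨ω, hωdef⟩ : ∃ w : ℝ, w = Real.sqrt umax := ⟨_, rfl⟩
  obtain ⟨ν, hνdef⟩ : ∃ w : ℝ, w = Real.sqrt (-umin) := ⟨_, rfl⟩
  have hω : 0 < ω := hωdef ▸ Real.sqrt_pos.2 humax
  have hν : 0 < ν := hνdef ▸ Real.sqrt_pos.2 humin'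
  have hω2 : ω ^ 2 = umax := by rw [hωdef]; exact Real.sq_sqrt humax.le
  have hν2 : ν ^ 2 = -umin := by rw [hνdef]; exact Real.sq_sqrt humin'.le
  unfold OCt1star at ht1lt
  rw [← hωdef, ← hνdef] at ht1lt
  have harc : ω * t1 < Real.arctan (ν / ω) := by
    calc ω * t1 < ω * (1 / ω * Real.arctan (ν / ω)) := mul_lt_mul_of_pos_left ht1lt hω
    _ = Real.arctan (ν / ω) := by field_simp
  have hapos : 0 < ω * t1 := mul_pos hω ht1pos
  have ha2 : ω * t1 < π / 2 := harc.trans (Real.arctan_lt_pi_div_two _)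
  have hcosa : 0 < Real.cos (ω * t1) :=
    Real.cos_pos_of_mem_Ioo ⟨by linarith [Real.pi_div_two_pos], ha2⟩
  have htanpos : 0 < Real.tan (ω * t1) := Real.tan_pos_of_pos_of_lt_pi_div_two hapos ha2
  have htana : Real.tan (ω * t1) < ν / ω := by
    have h := Real.tan_lt_tan_of_nonneg_of_lt_pi_div_two hapos.le
      (Real.arctan_lt_pi_div_two _) harc
    rwa [Real.tan_arctan] at h
  obtain ⟨k, hkdef⟩ : ∃ c : ℝ, c = ω / ν * Real.tan (ω * t1) := ⟨_, rfl⟩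
  have hk0 : 0 < k := by rw [hkdef]; exact mul_pos (div_pos hω hν) htanpos
  have hk1 : k < 1 := by
    have h1 : ω / ν * Real.tan (ω * t1) < ω / ν * (ν / ω) :=
      mul_lt_mul_of_pos_left htana (div_pos hω hν)
    have h2 : ω / ν * (ν / ω) = 1 := by field_simp
    rw [hkdef]; linarith
  have hT0 := hT
  unfold OCT at hT
  rw [← hωdef, ← hνdef, ← hkdef] at hT
  have hone_k : (0:ℝ) < 1 - k := by linarith
  have hone_k' : (0:ℝ) < 1 + k := by linarith
  have hdivpos : 0 < (1 + k) / (1 - k) := div_pos hone_k' hone_k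
  have hνL : ν * (T - 2 * t1) = Real.log ((1 + k) / (1 - k)) := by
    rw [hT]; field_simp; ring
  have hlogpos : 0 < Real.log ((1 + k) / (1 - k)) :=
    Real.log_pos (by rw [lt_div_iff₀ hone_k]; linarith)
  rw [← hνL] at hlogpos
  have hTpos : 0 < T - 2 * t1 := by nlinarith [hlogpos, hν]
  rw [hνL] at hlogpos
  have hmid : t1 < T - t1 := by linarith
  have hE : Real.exp (ν * (T - 2 * t1)) = (1 + k) / (1 - k) := by
    rw [hνL]; exact Real.exp_log hdivpos
  have hEneg : Real.exp (-(ν * (T - 2 * t1))) = (1 - k) / (1 + k) := by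
    rw [Real.exp_neg, hE, inv_div]
  have I1 : Real.cosh (ν * (T - 2 * t1)) - k * Real.sinh (ν * (T - 2 * t1)) = 1 := by
    rw [Real.cosh_eq, Real.sinh_eq, hE, hEneg]; field_simp; ring
  have I2 : Real.sinh (ν * (T - 2 * t1)) - k * Real.cosh (ν * (T - 2 * t1)) = k := by
    rw [Real.cosh_eq, Real.sinh_eq, hE, hEneg]; field_simp; ring
  have hks : ω / ν * Real.sin (ω * t1) = k * Real.cos (ω * t1) := by
    rw [hkdef, Real.tan_eq_sin_div_cos]; field_simp
  have M1 : Real.cos (ω * t1) * Real.cosh (ν * (T - 2 * t1))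
      - ω / ν * Real.sin (ω * t1) * Real.sinh (ν * (T - 2 * t1)) = Real.cos (ω * t1) := by
    linear_combination Real.cos (ω * t1) * I1 - Real.sinh (ν * (T - 2 * t1)) * hks
  have hks2 : ω * Real.sin (ω * t1) = ν * k * Real.cos (ω * t1) := by
    rw [hkdef, Real.tan_eq_sin_div_cos]; field_simp
  have M2 : ν * Real.cos (ω * t1) * Real.sinh (ν * (T - 2 * t1))
      - ω * Real.sin (ω * t1) * Real.cosh (ν * (T - 2 * t1)) = ω * Real.sin (ω * t1) := by
    linear_combination ν * Real.cos (ω * t1) * I2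
      - (Real.cosh (ν * (T - 2 * t1)) + 1) * hks2
  have hxeq : OCxstar umin umax t1 T = pX ω ν t1 T := by
    rw [hωdef, hνdef]; rfl
  have hueq : OCustar umin umax t1 T = pU ω ν t1 T := by
    funext s; simp only [OCustar, pU]
    split_ifs
    · linarith [hν2]
    · exact hω2.symm
  have hdX := pX_hasDeriv hν ht1pos hmid M1 M2
  have hYcont := pY_cont (ω := ω) (T := T) hν ht1pos hmid M2
  have hdY := pY_hasDeriv (ω := ω) (T := T) hν ht1pos hmid
  have hXcont : Continuous (pX ω ν t1 T) :=
    continuous_iff_continuousAt.2 fun t => (hdX t).continuousAt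
  have hderiv : deriv (OCxstar umin umax t1 T) = pY ω ν t1 T := by
    funext s; rw [hxeq]; exact (hdX s).deriv
  have hUmeas : Measurable (pU ω ν t1 T) := by
    have hms : MeasurableSet {s : ℝ | t1 < s ∧ s < T - t1} := measurableSet_Ioo
    exact Measurable.ite hms measurable_const measurable_const
  have hUint : ∀ a b : ℝ, IntervalIntegrable (pU ω ν t1 T) volume a b := by
    intro a b
    rw [intervalIntegrable_iff]
    refine MeasureTheory.Integrable.mono' (g := fun _ => ν ^ 2 + ω ^ 2)
      (integrableOn_const measure_Ioc_lt_top.ne) hUmeas.aestronglyMeasurable.restrict ?_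
    refine ae_of_all _ fun s => ?_
    simp only [pU, Real.norm_eq_abs]
    split_ifs
    · rw [abs_neg, abs_of_nonneg (sq_nonneg ν)]; linarith [sq_nonneg ω]
    · rw [abs_of_nonneg (sq_nonneg ω)]; linarith [sq_nonneg ν]
  have hT1 : ¬ T ≤ t1 := by linarith
  have hT2 : ¬ T ≤ T - t1 := by linarith
  refine ⟨?_, ⟨?_, ?_, ?_, ?_⟩, ?_, ?_, ?_, ?_, ?_⟩
  · rw [hxeq]
    refine (contDiff_one_iff_deriv.mpr ⟨fun t => (hdX t).differentiableAt, ?_⟩).contDiffOn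
    rw [show deriv (pX ω ν t1 T) = pY ω ν t1 T from funext fun s => (hdX s).deriv]
    exact hYcont
  · rw [hueq]; exact hUmeas
  · refine ae_of_all _ fun s => ?_
    simp only [OCustar]
    split_ifs <;> constructor <;> linarith
  · intro t ht
    rw [hderiv, hxeq]
    have hInt := intervalIntegral.integral_eq_sub_of_hasDerivAt
      (f := pX ω ν t1 T) (f' := pY ω ν t1 T) (fun s _ => hdX s)
      (hYcont.intervalIntegrable 0 t)
    linarith [hInt]
  · intro t ht
    rw [hderiv, hueq, hxeq]
    have hcount : ({t1, T - t1} : Set ℝ).Countable := (Set.countable_singleton _).insert _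
    have hInt2 : IntervalIntegrable (fun s => -(pU ω ν t1 T s * pX ω ν t1 T s)) volume 0 t :=
      ((hUint 0 t).mul_continuousOn hXcont.continuousOn).neg
    have h := MeasureTheory.integral_eq_of_hasDerivAt_off_countable
      (f := pY ω ν t1 T) (f' := fun s => -(pU ω ν t1 T s * pX ω ν t1 T s))
      (a := 0) (b := t) hcount hYcont.continuousOn ?_ hInt2
    · rw [intervalIntegral.integral_neg] at h
      linarith [h]
    · intro s hs
      obtain ⟨hs1, hs2⟩ := hs
      simp only [mem_insert_iff, mem_singleton_iff, not_or] at hs2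
      exact hdY s hs2.1 hs2.2
  · rw [hxeq]; simp [pX, ht1pos.le]
  · rw [hxeq]; simp [pX, hT1, hT2]
  · rw [hderiv]; simp [pY, ht1pos.le]
  · rw [hderiv]; simp [pY, hT1, hT2]
  · have hU2 : ∀ a b : ℝ, IntervalIntegrable (OCustar umin umax t1 T) volume a b := by
      intro a b; rw [hueq]; exact hUint a b
    have e1 : ∫ s in (0:ℝ)..t1, OCustar umin umax t1 T s = t1 * umax := by
      rw [intervalIntegral.integral_congr (g := fun _ => umax) ?_,
        intervalIntegral.integral_const]
      · rw [smul_eq_mul]; ring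
      · intro s hs
        rw [uIcc_of_le ht1pos.le] at hs
        simp only [OCustar]
        rw [if_neg]; rintro ⟨c1, -⟩; exact absurd c1 (not_lt.2 hs.2)
    have e3 : ∫ s in (T - t1)..T, OCustar umin umax t1 T s = t1 * umax := by
      rw [intervalIntegral.integral_congr (g := fun _ => umax) ?_,
        intervalIntegral.integral_const]
      · rw [smul_eq_mul]; ring
      · intro s hs
        rw [uIcc_of_le (by linarith : T - t1 ≤ T)] at hs
        simp only [OCustar]
        rw [if_neg]; rintro ⟨-, c2⟩; exact absurd c2 (not_lt.2 hs.1)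
    have hae : ∀ᵐ s : ℝ, s ≠ T - t1 := by
      have hset : {s : ℝ | ¬ s ≠ T - t1} = {T - t1} := by ext s; simp
      rw [ae_iff, hset]
      exact Real.volume_singleton
    have e2 : ∫ s in t1..(T - t1), OCustar umin umax t1 T s = (T - 2 * t1) * umin := by
      rw [intervalIntegral.integral_congr_ae (g := fun _ => umin) ?_,
        intervalIntegral.integral_const]
      · rw [smul_eq_mul]; ring
      · filter_upwards [hae] with s hsne hmem
        rw [Set.uIoc_of_le hmid.le] at hmem
        have hlt : s < T - t1 := lt_of_le_of_ne hmem.2 hsne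
        simp [OCustar, hmem.1, hlt]
    have s2 := intervalIntegral.integral_add_adjacent_intervals (hU2 t1 (T - t1)) (hU2 (T - t1) T)
    have s1 := intervalIntegral.integral_add_adjacent_intervals (hU2 0 t1) (hU2 t1 T)
    simp only [OCcost, OCC]
    rw [← hT0]
    linarith [s1, s2, e1, e2, e3]


end
end

section
/- The function t1 ↦ T(t1) is differentiable on (0, t1*) with derivative T′(t1) = 2·(1 + ω_max²/ω_min²)/(1 − (ω_max²/ω_min²)·tan²(ω_max·t1)) > 0, hence strictly increasing on (0, t1*); moreover T(t1) → 0 as t1 → 0⁺ and T(t1) → +∞ as t1 → t1*⁻, so that t1 ↦ T(t1) is a bijection from (0, t1*) onto (0, +∞). -/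
open MeasureTheory Real Set Filter Topology

noncomputable section

lemma OC_hasDerivAt_aux (a b : ℝ) (ha : 0 < a) (hb : 0 < b) (t1 : ℝ)
    (hc : 0 < Real.cos (b * t1)) (h0 : 0 ≤ Real.tan (b * t1))
    (h1 : b / a * Real.tan (b * t1) < 1) :
    HasDerivAt (fun t => (1 / a) * Real.log ((1 + (b / a) * Real.tan (b * t)) /
        (1 - (b / a) * Real.tan (b * t))) + 2 * t)
      (2 * (1 + b ^ 2 / a ^ 2) / (1 - (b ^ 2 / a ^ 2) * Real.tan (b * t1) ^ 2)) t1 := by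
  have hcne : Real.cos (b * t1) ≠ 0 := hc.ne'
  have hfnn : 0 ≤ b / a * Real.tan (b * t1) := by positivity
  have hN : (0:ℝ) < 1 + b / a * Real.tan (b * t1) := by linarith
  have hD : (0:ℝ) < 1 - b / a * Real.tan (b * t1) := by linarith
  have h1' : HasDerivAt (fun t : ℝ => b * t) b t1 := by
    simpa using (hasDerivAt_id t1).const_mul b
  have h2 : HasDerivAt Real.tan (1 / Real.cos (b * t1) ^ 2) (b * t1) :=
    Real.hasDerivAt_tan hcne
  have h3 : HasDerivAt (fun t => Real.tan (b * t)) (1 / Real.cos (b * t1) ^ 2 * b) t1 :=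
    h2.comp t1 h1'
  have h4 : HasDerivAt (fun t => (b / a) * Real.tan (b * t))
      ((b / a) * (1 / Real.cos (b * t1) ^ 2 * b)) t1 := h3.const_mul _
  have hNd : HasDerivAt (fun t => 1 + (b / a) * Real.tan (b * t))
      ((b / a) * (1 / Real.cos (b * t1) ^ 2 * b)) t1 := h4.const_add 1
  have hDd : HasDerivAt (fun t => 1 - (b / a) * Real.tan (b * t))
      (-((b / a) * (1 / Real.cos (b * t1) ^ 2 * b))) t1 := h4.const_sub 1
  have hQ := hNd.div hDd hD.ne'
  have hQpos : 0 < (1 + b / a * Real.tan (b * t1)) / (1 - b / a * Real.tan (b * t1)) :=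
    div_pos hN hD
  have hL := hQ.log hQpos.ne'
  have hF := (hL.const_mul (1 / a)).add ((hasDerivAt_id t1).const_mul 2)
  have hsc := Real.sin_sq_add_cos_sq (b * t1)
  have hid : 1 / Real.cos (b * t1) ^ 2 = Real.tan (b * t1) ^ 2 + 1 := by
    rw [Real.tan_eq_sin_div_cos]
    field_simp
    linarith [hsc]
  rw [hid] at hF
  have hx : b ^ 2 / a ^ 2 * Real.tan (b * t1) ^ 2 = (b / a * Real.tan (b * t1)) ^ 2 := by ring
  have hd2 : (0:ℝ) < 1 - b ^ 2 / a ^ 2 * Real.tan (b * t1) ^ 2 := by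
    rw [hx]; nlinarith [h1, hfnn]
  refine HasDerivAt.congr_deriv hF ?_
  have hba : b * Real.tan (b * t1) < a := by
    have h1'' : b * Real.tan (b * t1) / a < 1 := by rw [← div_mul_eq_mul_div]; exact h1
    exact (div_lt_one ha).1 h1''
  have hbT : 0 ≤ b * Real.tan (b * t1) := by positivity
  have haN : (a + b * Real.tan (b * t1)) ≠ 0 := by positivity
  have haD : (a - b * Real.tan (b * t1)) ≠ 0 := (sub_pos.2 hba).ne'
  have hd2' : a ^ 2 - b ^ 2 * Real.tan (b * t1) ^ 2 ≠ 0 := by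
    nlinarith [mul_pos (sub_pos.2 hba) (show (0:ℝ) < a + b * Real.tan (b * t1) by linarith)]
  simp only [Pi.div_apply]
  field_simp
  ring

/-- The function `t1 ↦ T(t1)` is differentiable on `(0, t1*)` with the explicit positive
derivative, hence strictly increasing; it tends to `0` at `0⁺` and to `+∞` at `t1*⁻`,
and is a bijection from `(0, t1*)` onto `(0, +∞)`. -/
theorem T_strictMono_bijective (umin umax : ℝ) (humin : umin < 0) (humax : 0 < umax) :
    (∀ t1 ∈ Ioo 0 (OCt1star umin umax),
      HasDerivAt (OCT umin umax)
        (2 * (1 + Real.sqrt umax ^ 2 / Real.sqrt (-umin) ^ 2) /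
          (1 - (Real.sqrt umax ^ 2 / Real.sqrt (-umin) ^ 2) *
            Real.tan (Real.sqrt umax * t1) ^ 2)) t1 ∧
      0 < 2 * (1 + Real.sqrt umax ^ 2 / Real.sqrt (-umin) ^ 2) /
          (1 - (Real.sqrt umax ^ 2 / Real.sqrt (-umin) ^ 2) *
            Real.tan (Real.sqrt umax * t1) ^ 2)) ∧
    StrictMonoOn (OCT umin umax) (Ioo 0 (OCt1star umin umax)) ∧
    Tendsto (OCT umin umax) (nhdsWithin 0 (Ioi 0)) (nhds 0) ∧
    Tendsto (OCT umin umax) (nhdsWithin (OCt1star umin umax) (Iio (OCt1star umin umax)))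
      atTop ∧
    BijOn (OCT umin umax) (Ioo 0 (OCt1star umin umax)) (Ioi 0) := by
  have ha : 0 < Real.sqrt (-umin) := Real.sqrt_pos.2 (by linarith)
  have hb : 0 < Real.sqrt umax := Real.sqrt_pos.2 humax
  set a := Real.sqrt (-umin) with ha_def
  set b := Real.sqrt umax with hb_def
  have hOCT : OCT umin umax = fun t => (1 / a) * Real.log ((1 + (b / a) * Real.tan (b * t)) /
      (1 - (b / a) * Real.tan (b * t))) + 2 * t := rfl
  have hstar : OCt1star umin umax = (1 / b) * Real.arctan (a / b) := rfl
  set s := OCt1star umin umax with hs_def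
  have hbs : b * s = Real.arctan (a / b) := by rw [hstar]; field_simp
  have harc : Real.arctan (a / b) < π / 2 := Real.arctan_lt_pi_div_two _
  have harc_pos : 0 < Real.arctan (a / b) := by
    have := Real.arctan_strictMono (show (0:ℝ) < a / b by positivity)
    simpa [Real.arctan_zero] using this
  have hspos : 0 < s := by
    rw [hstar]; positivity
  -- pointwise facts on Ico 0 s
  have hmem : ∀ t ∈ Ico 0 s, 0 < Real.cos (b * t) ∧ 0 ≤ Real.tan (b * t) ∧
      b / a * Real.tan (b * t) < 1 := by
    intro t ht
    have h0t : 0 ≤ b * t := mul_nonneg hb.le ht.1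
    have hlt : b * t < Real.arctan (a / b) := by
      rw [← hbs]; exact (mul_lt_mul_iff_right₀ hb).2 ht.2
    have hlt2 : b * t < π / 2 := hlt.trans harc
    have htanlt : Real.tan (b * t) < a / b := by
      have := Real.tan_lt_tan_of_nonneg_of_lt_pi_div_two h0t harc hlt
      rwa [Real.tan_arctan] at this
    refine ⟨Real.cos_pos_of_mem_Ioo ⟨by linarith [Real.pi_pos], hlt2⟩,
      Real.tan_nonneg_of_nonneg_of_le_pi_div_two h0t hlt2.le, ?_⟩
    have h1 : b / a * Real.tan (b * t) < b / a * (a / b) :=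
      mul_lt_mul_of_pos_left htanlt (by positivity)
    have h2 : b / a * (a / b) = 1 := by field_simp
    linarith [h1, h2.le, h2.ge]
  have hderiv : ∀ t ∈ Ico 0 s, HasDerivAt (OCT umin umax)
      (2 * (1 + b ^ 2 / a ^ 2) / (1 - (b ^ 2 / a ^ 2) * Real.tan (b * t) ^ 2)) t := by
    intro t ht
    obtain ⟨hc, h0, h1⟩ := hmem t ht
    rw [hOCT]
    exact OC_hasDerivAt_aux a b ha hb t hc h0 h1
  have hden : ∀ t ∈ Ico 0 s, 0 < 1 - (b ^ 2 / a ^ 2) * Real.tan (b * t) ^ 2 := by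
    intro t ht
    obtain ⟨hc, h0, h1⟩ := hmem t ht
    have hx : b ^ 2 / a ^ 2 * Real.tan (b * t) ^ 2 = (b / a * Real.tan (b * t)) ^ 2 := by ring
    have hfnn : 0 ≤ b / a * Real.tan (b * t) := by positivity
    rw [hx]; nlinarith [h1, hfnn]
  have hdpos : ∀ t ∈ Ico 0 s,
      0 < 2 * (1 + b ^ 2 / a ^ 2) / (1 - (b ^ 2 / a ^ 2) * Real.tan (b * t) ^ 2) := by
    intro t ht
    exact div_pos (by positivity) (hden t ht)
  have hcont : ContinuousOn (OCT umin umax) (Ico 0 s) := fun t ht =>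
    (hderiv t ht).continuousAt.continuousWithinAt
  have hmono : StrictMonoOn (OCT umin umax) (Ico 0 s) := by
    apply strictMonoOn_of_deriv_pos (convex_Ico 0 s) hcont
    intro t ht
    rw [interior_Ico] at ht
    have ht' : t ∈ Ico 0 s := ⟨ht.1.le, ht.2⟩
    rw [(hderiv t ht').deriv]
    exact hdpos t ht'
  have hT0 : OCT umin umax 0 = 0 := by simp [OCT]
  have hzero_mem : (0:ℝ) ∈ Ico 0 s := ⟨le_refl 0, hspos⟩
  have htend0 : Tendsto (OCT umin umax) (𝓝[>] 0) (𝓝 0) := by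
    have := (hderiv 0 hzero_mem).continuousAt.continuousWithinAt (s := Ioi 0)
    rwa [ContinuousWithinAt, hT0] at this
  -- tendsto atTop at s⁻
  have hc_s : Real.cos (b * s) ≠ 0 := by rw [hbs]; exact (Real.cos_arctan_pos _).ne'
  have hfs : (b / a) * Real.tan (b * s) = 1 := by
    rw [hbs, Real.tan_arctan]; field_simp
  have hfun : Tendsto (fun t => (b / a) * Real.tan (b * t)) (𝓝[<] s) (𝓝 1) := by
    have hcA : ContinuousAt (fun t => (b / a) * Real.tan (b * t)) s := by
      exact (((Real.continuousAt_tan).2 hc_s).comp ((continuous_mul_left b).continuousAt)).const_mul _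
    have := hcA.continuousWithinAt (s := Iio s)
    rwa [ContinuousWithinAt, hfs] at this
  have hioo_mem : Ioo 0 s ∈ 𝓝[<] s := Ioo_mem_nhdsLT hspos
  have g1 : Tendsto (fun t => 1 + (b / a) * Real.tan (b * t)) (𝓝[<] s) (𝓝 2) := by
    have := tendsto_const_nhds (α := ℝ) (x := (1:ℝ)) (f := 𝓝[<] s) |>.add hfun
    norm_num at this; exact this
  have g2 : Tendsto (fun t => 1 - (b / a) * Real.tan (b * t)) (𝓝[<] s) (𝓝[>] 0) := by
    apply tendsto_nhdsWithin_of_tendsto_nhds_of_eventually_within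
    · have := tendsto_const_nhds (α := ℝ) (x := (1:ℝ)) (f := 𝓝[<] s) |>.sub hfun
      norm_num at this; exact this
    · filter_upwards [hioo_mem] with t ht
      have := (hmem t ⟨ht.1.le, ht.2⟩).2.2
      simpa using sub_pos.2 this
  have ginv : Tendsto (fun t => (1 - (b / a) * Real.tan (b * t))⁻¹) (𝓝[<] s) atTop :=
    tendsto_inv_nhdsGT_zero.comp g2
  have gdiv : Tendsto (fun t => (1 + (b / a) * Real.tan (b * t)) /
      (1 - (b / a) * Real.tan (b * t))) (𝓝[<] s) atTop := by
    simpa [div_eq_mul_inv] using g1.pos_mul_atTop (by norm_num) ginv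
  have glog := Real.tendsto_log_atTop.comp gdiv
  have gmul : Tendsto (fun t => (1 / a) * Real.log ((1 + (b / a) * Real.tan (b * t)) /
      (1 - (b / a) * Real.tan (b * t)))) (𝓝[<] s) atTop := by
    apply Tendsto.const_mul_atTop (by positivity) glog
  have htends : Tendsto (OCT umin umax) (𝓝[<] s) atTop := by
    rw [hOCT]
    exact gmul.atTop_add (((continuous_const.mul continuous_id).tendsto s).mono_left
      nhdsWithin_le_nhds)
  refine ⟨?_, ?_, htend0, htends, ?_, ?_, ?_⟩
  · intro t1 ht1
    exact ⟨hderiv t1 ⟨ht1.1.le, ht1.2⟩, hdpos t1 ⟨ht1.1.le, ht1.2⟩⟩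
  · exact hmono.mono Ioo_subset_Ico_self
  · -- MapsTo
    intro t ht
    have := hmono hzero_mem ⟨ht.1.le, ht.2⟩ ht.1
    rw [hT0] at this
    exact this
  · exact (hmono.injOn).mono Ioo_subset_Ico_self
  · -- SurjOn
    intro y hy
    have hev1 : ∀ᶠ t in 𝓝[<] s, y < OCT umin umax t := htends.eventually_gt_atTop y
    obtain ⟨c, hc1, hc2⟩ := (hev1.and (eventually_of_mem hioo_mem fun t ht => ht)).exists
    have hev2 : ∀ᶠ t in 𝓝[>] (0:ℝ), OCT umin umax t < y :=
      htend0.eventually (eventually_lt_nhds hy)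
    have hioo2 : Ioo (0:ℝ) c ∈ 𝓝[>] (0:ℝ) := Ioo_mem_nhdsGT hc2.1
    obtain ⟨e, he1, he2⟩ := (hev2.and (eventually_of_mem hioo2 fun t ht => ht)).exists
    have hsub : Icc e c ⊆ Ico 0 s := fun x hx => ⟨he2.1.le.trans hx.1, lt_of_le_of_lt hx.2 hc2.2⟩
    have hy_mem : y ∈ Icc (OCT umin umax e) (OCT umin umax c) := ⟨he1.le, hc1.le⟩
    obtain ⟨x, hx1, hx2⟩ := intermediate_value_Icc he2.2.le (hcont.mono hsub) hy_mem
    exact ⟨x, ⟨lt_of_lt_of_le he2.1 hx1.1, lt_of_le_of_lt hx1.2 hc2.2⟩, hx2⟩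


end
end

section
/- For every t1 ∈ (0, t1*) one has the identity C(t1) = 2·t1·u_max + (T(t1) − 2·t1)·u_min = −ω_min·ln((1 + (ω_max/ω_min)·tan(ω_max·t1))/(1 − (ω_max/ω_min)·tan(ω_max·t1))) + 2·ω_max²·t1; the function t1 ↦ C(t1) is differentiable on (0, t1*) with derivative C′(t1) = −2·(ω_max²/ω_min²)·(ω_min² + ω_max²)·tan²(ω_max·t1)/(1 − (ω_max²/ω_min²)·tan²(ω_max·t1)) < 0, hence strictly decreasing; since C(t1) → 0 as t1 → 0⁺, it follows that C(t1) < 0 for every t1 ∈ (0, t1*). -/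
open MeasureTheory Real Set Filter Topology

noncomputable section

lemma OCaux (umin umax : ℝ) (humin : umin < 0) (humax : 0 < umax) {t1 : ℝ}
    (ht : t1 ∈ Ioo 0 (OCt1star umin umax)) :
    0 < Real.tan (Real.sqrt umax * t1) ∧
    (Real.sqrt umax / Real.sqrt (-umin)) * Real.tan (Real.sqrt umax * t1) < 1 ∧
    Real.cos (Real.sqrt umax * t1) ≠ 0 := by
  set ωm := Real.sqrt (-umin) with hωmdef
  set ωM := Real.sqrt umax with hωMdef
  have hωm : 0 < ωm := Real.sqrt_pos.mpr (by linarith)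
  have hωM : 0 < ωM := Real.sqrt_pos.mpr humax
  obtain ⟨ht0, ht1⟩ := ht
  have harg : ωM * t1 < Real.arctan (ωm / ωM) := by
    have := mul_lt_mul_of_pos_left ht1 hωM
    rw [OCt1star] at this
    calc ωM * t1 < ωM * ((1/ωM) * Real.arctan (ωm / ωM)) := this
      _ = Real.arctan (ωm / ωM) := by field_simp
  have hpos : 0 < ωM * t1 := mul_pos hωM ht0
  have hlt : ωM * t1 < π / 2 := lt_trans harg (Real.arctan_lt_pi_div_two _)
  have hmem : ωM * t1 ∈ Ioo (-(π/2)) (π/2) := ⟨by linarith [Real.pi_pos], hlt⟩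
  have hcos : 0 < Real.cos (ωM * t1) :=
    Real.cos_pos_of_mem_Ioo (by simpa using hmem)
  have htanpos : 0 < Real.tan (ωM * t1) := Real.tan_pos_of_pos_of_lt_pi_div_two hpos hlt
  have htanlt : Real.tan (ωM * t1) < ωm / ωM := by
    have := Real.tan_lt_tan_of_nonneg_of_lt_pi_div_two hpos.le
      (Real.arctan_lt_pi_div_two _) harg
    rwa [Real.tan_arctan] at this
  refine ⟨htanpos, ?_, ne_of_gt hcos⟩
  calc (ωM/ωm) * Real.tan (ωM * t1) < (ωM/ωm) * (ωm/ωM) := by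
        exact mul_lt_mul_of_pos_left htanlt (by positivity)
    _ = 1 := by field_simp

lemma OCkey (wm wM a S : ℝ) (hwm : wm ≠ 0) (ha : wM = a * wm)
    (h1 : (1 + a*S) ≠ 0) (h2 : (1 - a*S) ≠ 0) :
    -2 * (wM^2/wm^2) * (wm^2+wM^2) * S^2 / (1 - (wM^2/wm^2)*S^2)
      = 2*1*(wM^2) + (((1/wm) * ((a * (wM*(1+S^2)) * (1 - a*S)
          - (1 + a*S) * -(a * (wM*(1+S^2)))) /
          (1 - a*S)^2 / ((1 + a*S)/(1 - a*S))) + 2*1) - 2*1) * (-wm^2) := by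
  subst ha
  have h : (a*wm)^2/wm^2 = a^2 := by field_simp
  rw [h]
  have hfac : 1 - a^2*S^2 = (1+a*S)*(1-a*S) := by ring
  rw [hfac]
  field_simp [h1, h2]
  ring

lemma OCderiv (umin umax : ℝ) (humin : umin < 0) (humax : 0 < umax) {t1 : ℝ}
    (ht : t1 ∈ Ioo 0 (OCt1star umin umax)) :
    HasDerivAt (OCC umin umax)
      (-2 * (Real.sqrt umax ^ 2 / Real.sqrt (-umin) ^ 2) *
        (Real.sqrt (-umin) ^ 2 + Real.sqrt umax ^ 2) *
        Real.tan (Real.sqrt umax * t1) ^ 2 /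
        (1 - (Real.sqrt umax ^ 2 / Real.sqrt (-umin) ^ 2) *
          Real.tan (Real.sqrt umax * t1) ^ 2)) t1 := by
  obtain ⟨hs, has, hcos⟩ := OCaux umin umax humin humax ht
  set ωm := Real.sqrt (-umin) with hωmdef
  set ωM := Real.sqrt umax with hωMdef
  have hωm : 0 < ωm := Real.sqrt_pos.mpr (by linarith)
  have hωM : 0 < ωM := Real.sqrt_pos.mpr humax
  have hm2 : ωm^2 = -umin := Real.sq_sqrt (by linarith)
  have hM2 : ωM^2 = umax := Real.sq_sqrt humax.le
  set s := Real.tan (ωM * t1) with hsdef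
  set a := ωM / ωm with hadef
  have haspos : 0 < a * s := by positivity
  have hNv : 0 < 1 + a * s := by linarith
  have hDv : 0 < 1 - a * s := by linarith
  have hc2 : 1 + s^2 = 1 / Real.cos (ωM*t1)^2 := by
    rw [hsdef, Real.tan_eq_sin_div_cos]
    field_simp
    linarith [Real.sin_sq_add_cos_sq (ωM*t1)]
  have htan : HasDerivAt (fun t => Real.tan (ωM * t)) (ωM * (1 + s^2)) t1 := by
    have h := (Real.hasDerivAt_tan hcos).comp t1 ((hasDerivAt_id t1).const_mul ωM)
    exact h.congr_deriv (by rw [hc2]; ring)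
  have hN : HasDerivAt (fun t => 1 + a * Real.tan (ωM*t)) (a * (ωM*(1+s^2))) t1 :=
    (htan.const_mul a).const_add 1
  have hD : HasDerivAt (fun t => 1 - a * Real.tan (ωM*t)) (-(a * (ωM*(1+s^2)))) t1 :=
    (htan.const_mul a).const_sub 1
  have hQ := hN.div hD (ne_of_gt hDv)
  have hL := hQ.log (by positivity : (1 + a*s)/(1 - a*s) ≠ 0)
  have hT : HasDerivAt (OCT umin umax)
      ((1/ωm) * ((a * (ωM*(1+s^2)) * (1 - a*s) - (1 + a*s) * -(a * (ωM*(1+s^2)))) /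
        (1 - a*s)^2 / ((1 + a*s)/(1 - a*s))) + 2 * 1) t1 := by
    have := (hL.const_mul (1/ωm)).add ((hasDerivAt_id t1).const_mul 2)
    exact this
  have hC : HasDerivAt (OCC umin umax)
      (2 * 1 * umax + (((1/ωm) * ((a * (ωM*(1+s^2)) * (1 - a*s) - (1 + a*s) * -(a * (ωM*(1+s^2)))) /
        (1 - a*s)^2 / ((1 + a*s)/(1 - a*s))) + 2 * 1) - 2 * 1) * umin) t1 := by
    exact (((hasDerivAt_id t1).const_mul 2).mul_const umax).add
      ((hT.sub ((hasDerivAt_id t1).const_mul 2)).mul_const umin)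
  convert hC using 1
  rw [← hM2, show umin = -ωm^2 by linarith]
  exact OCkey ωm ωM a s hωm.ne'
    (by rw [hadef, div_mul_cancel₀ _ hωm.ne']) hNv.ne' hDv.ne'

lemma OCderiv_neg (umin umax : ℝ) (humin : umin < 0) (humax : 0 < umax) {t1 : ℝ}
    (ht : t1 ∈ Ioo 0 (OCt1star umin umax)) :
    -2 * (Real.sqrt umax ^ 2 / Real.sqrt (-umin) ^ 2) *
        (Real.sqrt (-umin) ^ 2 + Real.sqrt umax ^ 2) *
        Real.tan (Real.sqrt umax * t1) ^ 2 /
        (1 - (Real.sqrt umax ^ 2 / Real.sqrt (-umin) ^ 2) *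
          Real.tan (Real.sqrt umax * t1) ^ 2) < 0 := by
  obtain ⟨hs, has, hcos⟩ := OCaux umin umax humin humax ht
  set ωm := Real.sqrt (-umin) with hωmdef
  set ωM := Real.sqrt umax with hωMdef
  have hωm : 0 < ωm := Real.sqrt_pos.mpr (by linarith)
  have hωM : 0 < ωM := Real.sqrt_pos.mpr humax
  set s := Real.tan (ωM * t1) with hsdef
  apply div_neg_of_neg_of_pos
  · have h : 0 < 2 * (ωM^2/ωm^2) * (ωm^2+ωM^2) * s^2 := by positivity
    nlinarith
  · have hfac : 1 - (ωM^2/ωm^2)*s^2 = (1+(ωM/ωm)*s)*(1-(ωM/ωm)*s) := by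
      field_simp; ring
    rw [hfac]
    have h1 : 0 < (ωM/ωm)*s := mul_pos (div_pos hωM hωm) hs
    exact mul_pos (by linarith) (by linarith)

/-- The identity for `C(t1)`, its explicit negative derivative on `(0, t1*)`, strict
decrease, limit `0` at `0⁺`, and negativity of `C` on `(0, t1*)`. -/
theorem C_identity_strictAnti_neg (umin umax : ℝ) (humin : umin < 0) (humax : 0 < umax) :
    (∀ t1 ∈ Ioo 0 (OCt1star umin umax),
      OCC umin umax t1 =
        -Real.sqrt (-umin) *
          Real.log ((1 + (Real.sqrt umax / Real.sqrt (-umin)) *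
              Real.tan (Real.sqrt umax * t1)) /
            (1 - (Real.sqrt umax / Real.sqrt (-umin)) * Real.tan (Real.sqrt umax * t1)))
          + 2 * Real.sqrt umax ^ 2 * t1) ∧
    (∀ t1 ∈ Ioo 0 (OCt1star umin umax),
      HasDerivAt (OCC umin umax)
        (-2 * (Real.sqrt umax ^ 2 / Real.sqrt (-umin) ^ 2) *
          (Real.sqrt (-umin) ^ 2 + Real.sqrt umax ^ 2) *
          Real.tan (Real.sqrt umax * t1) ^ 2 /
          (1 - (Real.sqrt umax ^ 2 / Real.sqrt (-umin) ^ 2) *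
            Real.tan (Real.sqrt umax * t1) ^ 2)) t1 ∧
      -2 * (Real.sqrt umax ^ 2 / Real.sqrt (-umin) ^ 2) *
          (Real.sqrt (-umin) ^ 2 + Real.sqrt umax ^ 2) *
          Real.tan (Real.sqrt umax * t1) ^ 2 /
          (1 - (Real.sqrt umax ^ 2 / Real.sqrt (-umin) ^ 2) *
            Real.tan (Real.sqrt umax * t1) ^ 2) < 0) ∧
    StrictAntiOn (OCC umin umax) (Ioo 0 (OCt1star umin umax)) ∧
    Tendsto (OCC umin umax) (nhdsWithin 0 (Ioi 0)) (nhds 0) ∧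
    (∀ t1 ∈ Ioo 0 (OCt1star umin umax), OCC umin umax t1 < 0) := by
  have hωm : 0 < Real.sqrt (-umin) := Real.sqrt_pos.mpr (by linarith)
  have hωM : 0 < Real.sqrt umax := Real.sqrt_pos.mpr humax
  have hm2 : Real.sqrt (-umin)^2 = -umin := Real.sq_sqrt (by linarith)
  have hM2 : Real.sqrt umax^2 = umax := Real.sq_sqrt humax.le
  have hanti : StrictAntiOn (OCC umin umax) (Ioo 0 (OCt1star umin umax)) := by
    apply strictAntiOn_of_deriv_neg (convex_Ioo _ _)
    · exact fun x hx =>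
        ((OCderiv umin umax humin humax hx).differentiableAt).continuousAt.continuousWithinAt
    · intro x hx
      rw [interior_Ioo] at hx
      rw [(OCderiv umin umax humin humax hx).deriv]
      exact OCderiv_neg umin umax humin humax hx
  have htend : Tendsto (OCC umin umax) (nhdsWithin 0 (Ioi 0)) (nhds 0) := by
    have htan : ContinuousAt (fun t : ℝ => Real.tan (Real.sqrt umax * t)) 0 := by
      have h1 : ContinuousAt Real.tan (Real.sqrt umax * 0) :=
        Real.continuousAt_tan.mpr (by simp)
      exact h1.comp ((continuous_const.mul continuous_id).continuousAt)
    have hN : ContinuousAt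
        (fun t => 1 + (Real.sqrt umax / Real.sqrt (-umin)) * Real.tan (Real.sqrt umax * t)) 0 :=
      continuousAt_const.add (continuousAt_const.mul htan)
    have hD : ContinuousAt
        (fun t => 1 - (Real.sqrt umax / Real.sqrt (-umin)) * Real.tan (Real.sqrt umax * t)) 0 :=
      continuousAt_const.sub (continuousAt_const.mul htan)
    have hQ := hN.div hD (by simp)
    have hlog := hQ.log (by simp)
    have hcont : ContinuousAt (OCC umin umax) 0 := by
      apply ContinuousAt.add
      · exact ((continuousAt_const.mul continuousAt_id).mul continuousAt_const)
      · apply ContinuousAt.mul ?_ continuousAt_const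
        apply ContinuousAt.sub ?_ (continuousAt_const.mul continuousAt_id)
        exact (hlog.const_mul _).add (continuousAt_const.mul continuousAt_id)
    have h0 : OCC umin umax 0 = 0 := by simp [OCC, OCT]
    have h := hcont.tendsto.mono_left (nhdsWithin_le_nhds (s := Ioi (0:ℝ)))
    rwa [h0] at h
  have hid : ∀ t1 ∈ Ioo 0 (OCt1star umin umax),
      OCC umin umax t1 =
        -Real.sqrt (-umin) *
          Real.log ((1 + (Real.sqrt umax / Real.sqrt (-umin)) *
              Real.tan (Real.sqrt umax * t1)) /
            (1 - (Real.sqrt umax / Real.sqrt (-umin)) * Real.tan (Real.sqrt umax * t1)))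
          + 2 * Real.sqrt umax ^ 2 * t1 := by
    intro t1 ht
    simp only [OCC, OCT]
    set ωm := Real.sqrt (-umin) with hωmdef
    set ωM := Real.sqrt umax with hωMdef
    rw [show umax = ωM^2 from hM2.symm, show umin = -ωm^2 by linarith]
    field_simp
    ring
  refine ⟨hid, fun t1 ht => ⟨OCderiv umin umax humin humax ht,
    OCderiv_neg umin umax humin humax ht⟩, hanti, htend, ?_⟩
  intro t1 ht
  obtain ⟨ht0, ht1⟩ := ht
  have hhalf : t1/2 ∈ Ioo 0 (OCt1star umin umax) := ⟨by linarith, by linarith⟩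
  have h1 : OCC umin umax t1 < OCC umin umax (t1/2) :=
    hanti hhalf ⟨ht0, ht1⟩ (by linarith)
  have h2 : OCC umin umax (t1/2) ≤ 0 := by
    apply ge_of_tendsto htend
    filter_upwards [Ioo_mem_nhdsGT_of_mem
      (show (0:ℝ) ∈ Ico 0 (t1/2) from ⟨le_refl _, by linarith⟩)] with x hx
    exact (hanti ⟨hx.1, by linarith [hx.2]⟩ hhalf hx.2).le
  linarith

end
end

section
/- For all real numbers s1 < s2 and every β > 0, there exists a triple (x, y, u) of functions on [s1, s2] with u Lebesgue measurable and u_min ≤ u(t) ≤ u_max for almost every t ∈ [s1, s2], x(t) = x(s1) + ∫_{s1}^{t} y(s) ds and y(t) = y(s1) − ∫_{s1}^{t} u(s)·x(s) ds for all t ∈ [s1, s2], such that x(s1) = x(s2) = β, y(s1) = y(s2) = 0, x(t) ≤ β for every t ∈ [s1, s2], and ∫_{s1}^{s2} u(t) dt < 0. -/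
open MeasureTheory Real Set Filter Topology

noncomputable section

/-- For all `s1 < s2` and `β > 0`, there exists an admissible loop on `[s1, s2]` from
`(β, 0)` back to `(β, 0)`, staying in `x ≤ β`, with negative cost. -/
theorem exists_negative_cost_loop (umin umax : ℝ) (humin : umin < 0) (humax : 0 < umax)
    (s1 s2 : ℝ) (hs : s1 < s2) (β : ℝ) (hβ : 0 < β) :
    ∃ x y u : ℝ → ℝ,
      Measurable u ∧
      (∀ᵐ t ∂(volume.restrict (Icc s1 s2)), umin ≤ u t ∧ u t ≤ umax) ∧
      (∀ t ∈ Icc s1 s2, x t = x s1 + ∫ s in s1..t, y s) ∧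
      (∀ t ∈ Icc s1 s2, y t = y s1 - ∫ s in s1..t, u s * x s) ∧
      x s1 = β ∧ x s2 = β ∧ y s1 = 0 ∧ y s2 = 0 ∧
      (∀ t ∈ Icc s1 s2, x t ≤ β) ∧
      (∫ t in s1..s2, u t) < 0 := by
  have hL : 0 < s2 - s1 := sub_pos.mpr hs
  set L := s2 - s1 with hLdef
  set ω := 2 * π / L with hωdef
  have hω : 0 < ω := by positivity
  set M := min (-umin) umax with hMdef
  have hM : 0 < M := lt_min (by linarith) humax
  set ε := min (1/4 : ℝ) (M / (2 * ω ^ 2)) with hεdef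
  have hε : 0 < ε := lt_min (by norm_num) (by positivity)
  have hε4 : ε ≤ 1/4 := min_le_left _ _
  have hεM : 2 * ε * ω ^ 2 ≤ M := by
    have := min_le_right (1/4 : ℝ) (M / (2 * ω ^ 2))
    have h2 : (0:ℝ) < 2 * ω ^ 2 := by positivity
    calc 2 * ε * ω ^ 2 ≤ 2 * (M / (2 * ω ^ 2)) * ω ^ 2 := by nlinarith
      _ = M := by field_simp
  set x : ℝ → ℝ := fun t => β * (1 - ε) + β * ε * Real.cos (ω * (t - s1)) with hxdef
  set y : ℝ → ℝ := fun t => -(β * ε * ω) * Real.sin (ω * (t - s1)) with hydef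
  have hxlb : ∀ t, β / 2 ≤ x t := by
    intro t
    have h1 : -1 ≤ Real.cos (ω * (t - s1)) := Real.neg_one_le_cos _
    simp only [hxdef]
    nlinarith [mul_nonneg (mul_nonneg hβ.le hε.le)
      (by linarith : (0:ℝ) ≤ Real.cos (ω * (t - s1)) + 1),
      mul_nonneg hβ.le (by linarith : (0:ℝ) ≤ 1/4 - ε)]
  have hxpos : ∀ t, 0 < x t := fun t => lt_of_lt_of_le (by positivity) (hxlb t)
  set u : ℝ → ℝ := fun t => β * ε * ω ^ 2 * Real.cos (ω * (t - s1)) / x t with hudef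
  -- derivative of the inner angle
  have hθ : ∀ t : ℝ, HasDerivAt (fun t => ω * (t - s1)) ω t := by
    intro t
    simpa using ((hasDerivAt_id t).sub_const s1).const_mul ω
  have hx' : ∀ t, HasDerivAt x (y t) t := by
    intro t
    have h1 : HasDerivAt (fun t => Real.cos (ω * (t - s1)))
        (-Real.sin (ω * (t - s1)) * ω) t := (Real.hasDerivAt_cos _).comp t (hθ t)
    have h2 := (h1.const_mul (β * ε)).const_add (β * (1 - ε))
    refine h2.congr_deriv ?_
    simp only [hydef]; ring
  have hy' : ∀ t, HasDerivAt y (-(β * ε * ω ^ 2) * Real.cos (ω * (t - s1))) t := by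
    intro t
    have h1 : HasDerivAt (fun t => Real.sin (ω * (t - s1)))
        (Real.cos (ω * (t - s1)) * ω) t := (Real.hasDerivAt_sin _).comp t (hθ t)
    have h2 := h1.const_mul (-(β * ε * ω))
    refine h2.congr_deriv ?_
    ring
  have hux : ∀ t, u t * x t = β * ε * ω ^ 2 * Real.cos (ω * (t - s1)) := by
    intro t
    simp only [hudef]
    exact div_mul_cancel₀ _ (hxpos t).ne'
  have hcont_inner : Continuous fun t : ℝ => ω * (t - s1) :=
    continuous_const.mul (continuous_id.sub continuous_const)
  have hxc : Continuous x :=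
    continuous_const.add (continuous_const.mul (Real.continuous_cos.comp hcont_inner))
  have hyc : Continuous y := continuous_const.mul (Real.continuous_sin.comp hcont_inner)
  have huc : Continuous u :=
    ((continuous_const.mul (Real.continuous_cos.comp hcont_inner))).div hxc
      fun t => (hxpos t).ne'
  -- endpoint values
  have hθ1 : ω * (s1 - s1) = 0 := by ring
  have hθ2 : ω * (s2 - s1) = 2 * π := by
    rw [hωdef, ← hLdef]; field_simp
  have hxs1 : x s1 = β := by
    show β * (1 - ε) + β * ε * Real.cos (ω * (s1 - s1)) = β
    rw [hθ1, Real.cos_zero]; ring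
  have hxs2 : x s2 = β := by
    show β * (1 - ε) + β * ε * Real.cos (ω * (s2 - s1)) = β
    rw [hθ2, Real.cos_two_pi]; ring
  have hys1 : y s1 = 0 := by simp [hydef, hθ1]
  have hys2 : y s2 = 0 := by
    show -(β * ε * ω) * Real.sin (ω * (s2 - s1)) = 0
    rw [hθ2, Real.sin_two_pi]; ring
  -- the bound on u
  have hubd : ∀ t, umin ≤ u t ∧ u t ≤ umax := by
    intro t
    have hc1 : |Real.cos (ω * (t - s1))| ≤ 1 := Real.abs_cos_le_one _
    have hxl := hxlb t
    have hxp := hxpos t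
    have habs : |u t| ≤ M := by
      have h1 : |u t| = β * ε * ω ^ 2 * |Real.cos (ω * (t - s1))| / x t := by
        rw [hudef]
        rw [abs_div, abs_of_pos hxp, abs_mul, abs_of_pos (by positivity : (0:ℝ) < β * ε * ω ^ 2)]
      have h2 : β * ε * ω ^ 2 * |Real.cos (ω * (t - s1))| / x t ≤ β * ε * ω ^ 2 / (β / 2) := by
        apply div_le_div₀ (by positivity)
          (mul_le_of_le_one_right (by positivity) hc1) (by positivity) hxl
      have h3 : β * ε * ω ^ 2 / (β / 2) = 2 * ε * ω ^ 2 := by field_simp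
      rw [h1]; rw [h3] at h2; linarith [hεM]
    rw [abs_le] at habs
    constructor
    · have : -M ≤ u t := habs.1
      have : -M ≥ umin := by
        have := min_le_left (-umin) umax
        simp only [← hMdef] at this ⊢
        linarith
      linarith [habs.1]
    · have := min_le_right (-umin) umax
      simp only [← hMdef] at this
      linarith [habs.2]
  refine ⟨x, y, u, huc.measurable, MeasureTheory.ae_of_all _ hubd, ?_, ?_, hxs1, hxs2, hys1, hys2, ?_, ?_⟩
  · intro t ht
    have := intervalIntegral.integral_eq_sub_of_hasDerivAt (f := x)
      (fun s _ => hx' s) ((hyc.intervalIntegrable s1 t))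
    linarith [this]
  · intro t ht
    have h1 := intervalIntegral.integral_eq_sub_of_hasDerivAt (f := y)
      (fun s _ => hy' s)
      ((continuous_const.mul
        (Real.continuous_cos.comp hcont_inner)).intervalIntegrable s1 t)
    have h2 : (∫ s in s1..t, u s * x s)
        = ∫ s in s1..t, -(-(β * ε * ω ^ 2) * Real.cos (ω * (s - s1))) := by
      congr 1; funext s; rw [hux s]; ring
    rw [h2, intervalIntegral.integral_neg, h1]
    ring
  · intro t ht
    have h1 : Real.cos (ω * (t - s1)) ≤ 1 := Real.cos_le_one _
    show β * (1 - ε) + β * ε * Real.cos (ω * (t - s1)) ≤ β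
    nlinarith [mul_nonneg (mul_nonneg hβ.le hε.le)
      (by linarith : (0:ℝ) ≤ 1 - Real.cos (ω * (t - s1)))]
  · -- cost is negative
    set g : ℝ → ℝ := fun t => y t / x t with hgdef
    have hgc : Continuous g := hyc.div hxc fun t => (hxpos t).ne'
    have hg' : ∀ t, HasDerivAt g (-(u t) - g t ^ 2) t := by
      intro t
      have h1 := (hy' t).div (hx' t) (hxpos t).ne'
      refine h1.congr_deriv ?_
      have hxne := (hxpos t).ne'
      simp only [hgdef, hudef]
      field_simp
    have hgint : Continuous fun t => -(u t) - g t ^ 2 :=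
      (huc.neg).sub (hgc.pow 2)
    have h1 := intervalIntegral.integral_eq_sub_of_hasDerivAt (f := g)
      (fun t _ => hg' t) (hgint.intervalIntegrable s1 s2)
    have hgs1 : g s1 = 0 := by simp [hgdef, hys1]
    have hgs2 : g s2 = 0 := by simp [hgdef, hys2]
    rw [hgs1, hgs2, sub_zero] at h1
    have hIu : IntervalIntegrable u volume s1 s2 := huc.intervalIntegrable _ _
    have hIg : IntervalIntegrable (fun t => g t ^ 2) volume s1 s2 :=
      (hgc.pow 2).intervalIntegrable _ _
    have h2 : (∫ t in s1..s2, u t) = -(∫ t in s1..s2, g t ^ 2) := by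
      have hsub := intervalIntegral.integral_sub
        ((huc.neg).intervalIntegrable s1 s2) hIg
      have hneg : (∫ t in s1..s2, -u t) = -(∫ t in s1..s2, u t) :=
        intervalIntegral.integral_neg
      simp only [Pi.neg_apply] at hsub
      rw [h1, hneg] at hsub
      linarith
    rw [h2, neg_lt, neg_zero]
    -- positivity of ∫ g²
    set m := s1 + L / 2 with hmdef
    have hm1 : s1 < m := by simp only [hmdef]; linarith
    have hm2 : m ≤ s2 := by simp only [hmdef, hLdef]; linarith
    have hsplit : (∫ t in s1..m, g t ^ 2) + (∫ t in m..s2, g t ^ 2)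
        = ∫ t in s1..s2, g t ^ 2 :=
      intervalIntegral.integral_add_adjacent_intervals
        ((hgc.pow 2).intervalIntegrable _ _) ((hgc.pow 2).intervalIntegrable _ _)
    have hpos1 : 0 < ∫ t in s1..m, g t ^ 2 := by
      apply intervalIntegral.intervalIntegral_pos_of_pos_on
        ((hgc.pow 2).intervalIntegrable _ _) _ hm1
      intro t ht
      have hθpos : 0 < ω * (t - s1) := by
        have := ht.1
        have : 0 < t - s1 := by linarith
        positivity
      have hθlt : ω * (t - s1) < π := by
        have h1 : t - s1 < L / 2 := by
          have := ht.2; simp only [hmdef] at this; linarith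
        have h2 : ω * (t - s1) < ω * (L / 2) :=
          mul_lt_mul_of_pos_left h1 hω
        have h3 : ω * (L / 2) = π := by
          rw [hωdef]; field_simp
        linarith
      have hsin : 0 < Real.sin (ω * (t - s1)) := Real.sin_pos_of_pos_of_lt_pi hθpos hθlt
      have hyneg : y t < 0 := by
        have h4 : 0 < β * ε * ω * Real.sin (ω * (t - s1)) :=
          mul_pos (by positivity) hsin
        show -(β * ε * ω) * Real.sin (ω * (t - s1)) < 0
        linarith
      have hg0 : g t < 0 := by
        show y t / x t < 0
        exact div_neg_of_neg_of_pos hyneg (hxpos t)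
      have h5 : 0 < g t * g t := mul_pos_of_neg_of_neg hg0 hg0
      calc (0:ℝ) < g t * g t := h5
        _ = g t ^ 2 := by ring
    have hpos2 : 0 ≤ ∫ t in m..s2, g t ^ 2 :=
      intervalIntegral.integral_nonneg hm2 fun t _ => sq_nonneg _
    linarith [hsplit]

end
end

section
/- Let (x, y, u) be admissible on [0, T] with x(0) = x(T) = 1 and y(0) = y(T), and let p_x, p_y : [0, T] → ℝ satisfy p_x(t) = p_x(0) + ∫₀ᵗ u(s)·p_y(s) ds and p_y(t) = p_y(0) − ∫₀ᵗ p_x(s) ds for all t ∈ [0, T], together with p_y(0) = p_y(T). Then p_x(0) = p_x(T), i.e., the adjoint vector (p_x, p_y) is T-periodic. -/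
open MeasureTheory Real Set Filter Topology

noncomputable section

/-- The primitive `t ↦ ∫ s in Ioc 0 t, w s` of an arbitrary function is a.e. measurable
on `[0, T]` (junk values are 0 beyond the integrability threshold). -/
lemma aemeas_primitive (w : ℝ → ℝ) (T : ℝ) :
    AEMeasurable (fun t => ∫ s in Ioc (0:ℝ) t, w s) (volume.restrict (Icc (0:ℝ) T)) := by
  set Q : ℝ → ℝ := fun t => ∫ s in Ioc (0:ℝ) t, w s with hQdef
  set J : Set ℝ := {t | t ∈ Icc (0:ℝ) T ∧ IntegrableOn w (Ioc 0 t)} with hJdef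
  have hJmono : ∀ ⦃t₁ t₂ : ℝ⦄, t₂ ∈ J → 0 ≤ t₁ → t₁ ≤ t₂ → t₁ ≤ T → t₁ ∈ J := by
    intro t₁ t₂ ht₂ h0 h12 h1T
    exact ⟨⟨h0, h1T⟩, ht₂.2.mono_set (Ioc_subset_Ioc le_rfl h12)⟩
  have hJconn : OrdConnected J := by
    constructor
    intro t₁ h1 t₂ h2 t ht
    exact hJmono h2 (le_trans h1.1.1 ht.1) ht.2 (le_trans ht.2 h2.1.2)
  have hJmeas : MeasurableSet J := hJconn.measurableSet
  have hcontJ : ContinuousOn Q J := by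
    intro t ht
    by_cases hmax : ∃ s ∈ J, t < s
    · obtain ⟨s, hs, hts⟩ := hmax
      have hint : IntegrableOn w (Icc 0 s) := (integrableOn_Icc_iff_integrableOn_Ioc).2 hs.2
      have hcont : ContinuousOn Q (Icc 0 s) := intervalIntegral.continuousOn_primitive hint
      have htm : t ∈ Icc 0 s := ⟨ht.1.1, hts.le⟩
      refine (hcont t htm).mono_of_mem_nhdsWithin ?_
      refine Filter.mem_of_superset (inter_mem_nhdsWithin J (Iio_mem_nhds hts)) ?_
      exact fun z hz => ⟨hz.1.1.1, hz.2.le⟩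
    · push_neg at hmax
      have hsub : J ⊆ Icc 0 t := fun z hz => ⟨hz.1.1, hmax z hz⟩
      have hint : IntegrableOn w (Icc 0 t) := (integrableOn_Icc_iff_integrableOn_Ioc).2 ht.2
      have hcont : ContinuousOn Q (Icc 0 t) := intervalIntegral.continuousOn_primitive hint
      exact (hcont.mono hsub) t ht
  have hz : ∀ t ∈ Icc (0:ℝ) T \ J, Q t = 0 := by
    intro t ht
    have : ¬ IntegrableOn w (Ioc 0 t) := fun h => ht.2 ⟨ht.1, h⟩
    exact integral_undef this
  -- combine
  have hsplit : Icc (0:ℝ) T ⊆ (Icc (0:ℝ) T ∩ J) ∪ (Icc (0:ℝ) T \ J) := by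
    intro z hz'
    by_cases h : z ∈ J
    · exact Or.inl ⟨hz', h⟩
    · exact Or.inr ⟨hz', h⟩
  have h1 : AEMeasurable Q (volume.restrict (Icc (0:ℝ) T ∩ J)) :=
    (hcontJ.mono inter_subset_right).aemeasurable (measurableSet_Icc.inter hJmeas)
  have h2 : AEMeasurable Q (volume.restrict (Icc (0:ℝ) T \ J)) := by
    refine AEMeasurable.congr (f := fun _ => (0:ℝ)) aemeasurable_const ?_
    refine ((ae_restrict_iff' (measurableSet_Icc.diff hJmeas)).2 (ae_of_all _ ?_))
    exact fun t ht => (hz t ht).symm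
  have hset : Icc (0:ℝ) T = (Icc (0:ℝ) T ∩ J) ∪ (Icc (0:ℝ) T \ J) := (inter_union_diff _ _).symm
  rw [hset, Measure.restrict_union (disjoint_sdiff_self_right.mono_left inter_subset_right)
    (measurableSet_Icc.diff hJmeas)]
  exact aemeasurable_add_measure_iff.2 ⟨h1, h2⟩

/-- Bootstrap regularity for the linear integral system `f = f₀ + ∫ a g`, `g = g₀ + ∫ b f`. -/
lemma bootstrap (T M : ℝ) (hT : 0 ≤ T) (hM : 1 ≤ M) (a b f g : ℝ → ℝ)
    (ha : Measurable a) (hb : Measurable b)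
    (hab : ∀ᵐ t ∂(volume.restrict (Icc (0:ℝ) T)), |a t| ≤ M ∧ |b t| ≤ M)
    (hf : ∀ t ∈ Icc (0:ℝ) T, f t = f 0 + ∫ s in (0:ℝ)..t, a s * g s)
    (hg : ∀ t ∈ Icc (0:ℝ) T, g t = g 0 + ∫ s in (0:ℝ)..t, b s * f s) :
    ContinuousOn f (Icc 0 T) ∧ ContinuousOn g (Icc 0 T) ∧
      IntegrableOn (fun s => a s * g s) (Icc 0 T) ∧
      IntegrableOn (fun s => b s * f s) (Icc 0 T) := by
  have hM0 : (0:ℝ) ≤ M := by linarith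
  have habs2 : ∀ {t : ℝ}, t ∈ Icc (0:ℝ) T →
      (∀ᵐ s ∂(volume.restrict (Icc (0:ℝ) t)), |a s| ≤ M ∧ |b s| ≤ M) :=
    fun ht => ae_restrict_of_ae_restrict_of_subset (Icc_subset_Icc le_rfl ht.2) hab
  -- a.e. measurability of f and g on [0,T]
  have hfm : AEMeasurable f (volume.restrict (Icc (0:ℝ) T)) := by
    refine AEMeasurable.congr (f := fun t => f 0 + ∫ s in Ioc (0:ℝ) t, a s * g s)
      ((aemeasurable_const (b := f 0)).add (aemeas_primitive (fun s => a s * g s) T)) ?_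
    refine (ae_restrict_iff' measurableSet_Icc).2 (ae_of_all _ fun t ht => ?_)
    rw [hf t ht, intervalIntegral.integral_of_le ht.1]
  have hgm : AEMeasurable g (volume.restrict (Icc (0:ℝ) T)) := by
    refine AEMeasurable.congr (f := fun t => g 0 + ∫ s in Ioc (0:ℝ) t, b s * f s)
      ((aemeasurable_const (b := g 0)).add (aemeas_primitive (fun s => b s * f s) T)) ?_
    refine (ae_restrict_iff' measurableSet_Icc).2 (ae_of_all _ fun t ht => ?_)
    rw [hg t ht, intervalIntegral.integral_of_le ht.1]
  -- bounded-multiplier integrability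
  have hmul_a : ∀ {t : ℝ}, t ∈ Icc (0:ℝ) T → IntegrableOn g (Icc 0 t) →
      IntegrableOn (fun s => a s * g s) (Icc 0 t) := by
    intro t ht hgI
    refine Integrable.bdd_mul (c := M) hgI ha.aestronglyMeasurable ?_
    exact (habs2 ht).mono fun x hx => by rw [Real.norm_eq_abs]; exact hx.1
  have hmul_b : ∀ {t : ℝ}, t ∈ Icc (0:ℝ) T → IntegrableOn f (Icc 0 t) →
      IntegrableOn (fun s => b s * f s) (Icc 0 t) := by
    intro t ht hfI
    refine Integrable.bdd_mul (c := M) hfI hb.aestronglyMeasurable ?_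
    exact (habs2 ht).mono fun x hx => by rw [Real.norm_eq_abs]; exact hx.2
  -- continuity from integrability of the integrand
  have hcontf : ∀ {t : ℝ}, t ∈ Icc (0:ℝ) T → IntegrableOn (fun s => a s * g s) (Icc 0 t) →
      ContinuousOn f (Icc 0 t) := by
    intro t ht hI
    have h1 : ContinuousOn (fun s => f 0 + ∫ r in Ioc (0:ℝ) s, a r * g r) (Icc 0 t) :=
      continuousOn_const.add (intervalIntegral.continuousOn_primitive hI)
    refine h1.congr fun s hs => ?_
    rw [hf s ⟨hs.1, le_trans hs.2 ht.2⟩, intervalIntegral.integral_of_le hs.1]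
  have hcontg : ∀ {t : ℝ}, t ∈ Icc (0:ℝ) T → IntegrableOn (fun s => b s * f s) (Icc 0 t) →
      ContinuousOn g (Icc 0 t) := by
    intro t ht hI
    have h1 : ContinuousOn (fun s => g 0 + ∫ r in Ioc (0:ℝ) s, b r * f r) (Icc 0 t) :=
      continuousOn_const.add (intervalIntegral.continuousOn_primitive hI)
    refine h1.congr fun s hs => ?_
    rw [hg s ⟨hs.1, le_trans hs.2 ht.2⟩, intervalIntegral.integral_of_le hs.1]
  -- the good set
  set E : Set ℝ := {t | t ∈ Icc (0:ℝ) T ∧ IntegrableOn f (Icc 0 t) ∧ IntegrableOn g (Icc 0 t)}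
    with hE
  have h0mem : (0:ℝ) ∈ E := by
    have h0 : volume.restrict (Icc (0:ℝ) 0) = 0 := by
      rw [Icc_self]; exact Measure.restrict_eq_zero.2 (measure_singleton 0)
    refine ⟨⟨le_rfl, hT⟩, ?_, ?_⟩ <;>
      · show Integrable _ (volume.restrict (Icc (0:ℝ) 0))
        rw [h0]; exact integrable_zero_measure
  have hEdc : ∀ ⦃t' t : ℝ⦄, t ∈ E → 0 ≤ t' → t' ≤ t → t' ∈ E := fun t' t ht h0' h't =>
    ⟨⟨h0', le_trans h't ht.1.2⟩, ht.2.1.mono_set (Icc_subset_Icc le_rfl h't),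
      ht.2.2.mono_set (Icc_subset_Icc le_rfl h't)⟩
  have hEne : E.Nonempty := ⟨0, h0mem⟩
  have hEbdd : BddAbove E := ⟨T, fun t ht => ht.1.2⟩
  set τ := sSup E with hτdef
  have hτ0 : 0 ≤ τ := le_csSup hEbdd h0mem
  have hτT : τ ≤ T := csSup_le hEne fun t ht => ht.1.2
  have hIcoE : Ico (0:ℝ) τ ⊆ E := by
    intro t ht
    obtain ⟨e, he, hte⟩ := exists_lt_of_lt_csSup hEne ht.2
    exact hEdc he ht.1 hte.le
  -- key consequences of membership in E
  have hkey : ∀ t ∈ E, ContinuousOn f (Icc 0 t) ∧ ContinuousOn g (Icc 0 t) ∧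
      IntegrableOn (fun s => a s * g s) (Icc 0 t) ∧
      IntegrableOn (fun s => b s * f s) (Icc 0 t) := by
    intro t ht
    have hag := hmul_a ht.1 ht.2.2
    have hbf := hmul_b ht.1 ht.2.1
    exact ⟨hcontf ht.1 hag, hcontg ht.1 hbf, hag, hbf⟩
  -- Grönwall bound
  set C := |f 0| + |g 0| with hC
  have hC0 : 0 ≤ C := add_nonneg (abs_nonneg _) (abs_nonneg _)
  set K := 2 * M with hK
  have hK0 : (0:ℝ) < K := by rw [hK]; linarith
  set B : ℝ := C + K * (C / K * Real.exp (K * T)) with hB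
  have hBnd : ∀ t ∈ E, ∀ s ∈ Icc (0:ℝ) t, |f s| + |g s| ≤ B := by
    intro t ht
    obtain ⟨hfc, hgc, hag, hbf⟩ := hkey t ht
    have h0t : (0:ℝ) ≤ t := ht.1.1
    have htT : t ≤ T := ht.1.2
    have hIIof : ∀ (w : ℝ → ℝ), IntegrableOn w (Icc 0 t) → ∀ s ∈ Icc (0:ℝ) t,
        IntervalIntegrable w volume 0 s := by
      intro w hw s hs
      refine IntegrableOn.intervalIntegrable ?_
      rw [uIcc_of_le hs.1]
      exact hw.mono_set (Icc_subset_Icc le_rfl hs.2)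
    set h : ℝ → ℝ := fun s => |f s| + |g s| with hh
    have hhc : ContinuousOn h (Icc 0 t) := hfc.abs.add hgc.abs
    have hhint : IntegrableOn h (Icc 0 t) := hhc.integrableOn_Icc
    set H : ℝ → ℝ := fun s => ∫ r in (0:ℝ)..s, h r with hH
    have hHc : ContinuousOn H (Icc 0 t) := by
      have hu : IntegrableOn h (uIcc 0 t) := by rwa [uIcc_of_le h0t]
      exact intervalIntegral.continuousOn_primitive_interval hu |>.mono
        (by rw [uIcc_of_le h0t])
    have hHnonneg : ∀ s ∈ Icc (0:ℝ) t, 0 ≤ H s := fun s hs =>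
      intervalIntegral.integral_nonneg hs.1 fun r _ => add_nonneg (abs_nonneg _) (abs_nonneg _)
    have hptw : ∀ s ∈ Icc (0:ℝ) t, h s ≤ C + K * H s := by
      intro s hs
      have hsT : s ∈ Icc (0:ℝ) T := ⟨hs.1, le_trans hs.2 htT⟩
      have hIag := hIIof _ hag s hs
      have hIbf := hIIof _ hbf s hs
      have hIg : IntervalIntegrable (fun r => M * |g r|) volume 0 s :=
        hIIof _ ((continuousOn_const.mul hgc.abs).integrableOn_Icc) s hs
      have hIf : IntervalIntegrable (fun r => M * |f r|) volume 0 s :=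
        hIIof _ ((continuousOn_const.mul hfc.abs).integrableOn_Icc) s hs
      have hIgabs := hIIof _ hgc.abs.integrableOn_Icc s hs
      have hIfabs := hIIof _ hfc.abs.integrableOn_Icc s hs
      have haeg : (fun r => |a r * g r|) ≤ᶠ[ae (volume.restrict (Icc (0:ℝ) s))]
          fun r => M * |g r| := by
        refine (habs2 hsT).mono fun r hr => ?_
        show |a r * g r| ≤ M * |g r|
        rw [abs_mul]
        exact mul_le_mul_of_nonneg_right hr.1 (abs_nonneg _)
      have haef : (fun r => |b r * f r|) ≤ᶠ[ae (volume.restrict (Icc (0:ℝ) s))]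
          fun r => M * |f r| := by
        refine (habs2 hsT).mono fun r hr => ?_
        show |b r * f r| ≤ M * |f r|
        rw [abs_mul]
        exact mul_le_mul_of_nonneg_right hr.2 (abs_nonneg _)
      have h1 : |f s| ≤ |f 0| + M * ∫ r in (0:ℝ)..s, |g r| := by
        rw [hf s hsT]
        calc |f 0 + ∫ r in (0:ℝ)..s, a r * g r|
            ≤ |f 0| + |∫ r in (0:ℝ)..s, a r * g r| := abs_add_le _ _
          _ ≤ |f 0| + ∫ r in (0:ℝ)..s, |a r * g r| :=
              add_le_add_right (intervalIntegral.abs_integral_le_integral_abs hs.1) _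
          _ ≤ |f 0| + ∫ r in (0:ℝ)..s, M * |g r| :=
              add_le_add_right
                (intervalIntegral.integral_mono_ae_restrict hs.1 hIag.abs hIg haeg) _
          _ = |f 0| + M * ∫ r in (0:ℝ)..s, |g r| := by
              rw [intervalIntegral.integral_const_mul]
      have h2 : |g s| ≤ |g 0| + M * ∫ r in (0:ℝ)..s, |f r| := by
        rw [hg s hsT]
        calc |g 0 + ∫ r in (0:ℝ)..s, b r * f r|
            ≤ |g 0| + |∫ r in (0:ℝ)..s, b r * f r| := abs_add_le _ _
          _ ≤ |g 0| + ∫ r in (0:ℝ)..s, |b r * f r| :=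
              add_le_add_right (intervalIntegral.abs_integral_le_integral_abs hs.1) _
          _ ≤ |g 0| + ∫ r in (0:ℝ)..s, M * |f r| :=
              add_le_add_right
                (intervalIntegral.integral_mono_ae_restrict hs.1 hIbf.abs hIf haef) _
          _ = |g 0| + M * ∫ r in (0:ℝ)..s, |f r| := by
              rw [intervalIntegral.integral_const_mul]
      have h3 : (∫ r in (0:ℝ)..s, |g r|) ≤ H s :=
        intervalIntegral.integral_mono_on hs.1 hIgabs (hIIof _ hhint s hs)
          fun r _ => le_add_of_nonneg_left (abs_nonneg _)
      have h4 : (∫ r in (0:ℝ)..s, |f r|) ≤ H s :=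
        intervalIntegral.integral_mono_on hs.1 hIfabs (hIIof _ hhint s hs)
          fun r _ => le_add_of_nonneg_right (abs_nonneg _)
      have e3 := mul_le_mul_of_nonneg_left h3 hM0
      have e4 := mul_le_mul_of_nonneg_left h4 hM0
      show |f s| + |g s| ≤ C + K * H s
      rw [hC, hK]
      linarith
    have hder : ∀ s ∈ Ico (0:ℝ) t, HasDerivWithinAt H (h s) (Ici s) s := by
      intro s hs
      have hst : s < t := hs.2
      have hmem2 : Icc (0:ℝ) t ∈ 𝓝[Ioi s] s := by
        refine Filter.mem_of_superset (inter_mem_nhdsWithin (Ioi s) (Iio_mem_nhds hst)) ?_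
        exact fun z hz => ⟨le_trans hs.1 hz.1.le, hz.2.le⟩
      exact intervalIntegral.integral_hasDerivWithinAt_right (hIIof _ hhint s ⟨hs.1, hst.le⟩)
        ⟨Icc 0 t, hmem2, (hhc.aemeasurable measurableSet_Icc).aestronglyMeasurable⟩
        ((hhc s ⟨hs.1, hst.le⟩).mono_of_mem_nhdsWithin hmem2)
    have hgron := norm_le_gronwallBound_of_norm_deriv_right_le (f := H) (f' := h)
      (δ := 0) (K := K) (ε := C) (a := 0) (b := t) hHc hder
      (by simp [hH]) ?_
    · intro s hs
      have hHb := hgron s hs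
      rw [Real.norm_eq_abs, abs_of_nonneg (hHnonneg s hs)] at hHb
      have hgb : gronwallBound 0 K C (s - 0) ≤ C / K * Real.exp (K * T) := by
        rw [gronwallBound_of_K_ne_0 hK0.ne']
        have hsT' : K * (s - 0) ≤ K * T :=
          mul_le_mul_of_nonneg_left (by linarith [hs.1, hs.2, htT]) hK0.le
        have he := Real.exp_le_exp.2 hsT'
        have hek : 0 ≤ C / K := div_nonneg hC0 hK0.le
        have h5 : Real.exp (K * (s - 0)) - 1 ≤ Real.exp (K * T) := by linarith
        calc 0 * Real.exp (K * (s - 0)) + C / K * (Real.exp (K * (s - 0)) - 1)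
            = C / K * (Real.exp (K * (s - 0)) - 1) := by ring
          _ ≤ C / K * Real.exp (K * T) := mul_le_mul_of_nonneg_left h5 hek
      have hHB : H s ≤ C / K * Real.exp (K * T) := le_trans hHb hgb
      have := hptw s hs
      have e5 := mul_le_mul_of_nonneg_left hHB hK0.le
      show |f s| + |g s| ≤ B
      rw [hB]
      have hhs : h s = |f s| + |g s| := rfl
      linarith
    · intro s hs
      have := hptw s ⟨hs.1, hs.2.le⟩
      have hHn := hHnonneg s ⟨hs.1, hs.2.le⟩
      rw [Real.norm_eq_abs, Real.norm_eq_abs, abs_of_nonneg hHn,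
        abs_of_nonneg (add_nonneg (abs_nonneg (f s)) (abs_nonneg (g s)) :
          (0:ℝ) ≤ |f s| + |g s|)]
      have hhs : h s = |f s| + |g s| := rfl
      linarith
  -- τ ∈ E
  have hτE : τ ∈ E := by
    have hIcoT : Ico (0:ℝ) τ ⊆ Icc (0:ℝ) T := fun z hz => ⟨hz.1, le_trans hz.2.le hτT⟩
    have hfI : IntegrableOn f (Icc 0 τ) := by
      rw [integrableOn_Icc_iff_integrableOn_Ico]
      refine ⟨(hfm.mono_measure (Measure.restrict_mono hIcoT le_rfl)).aestronglyMeasurable,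
        HasFiniteIntegral.restrict_of_bounded (C := B)
          (measure_Ico_lt_top : volume (Ico (0:ℝ) τ) < ⊤) ?_⟩
      refine (ae_restrict_iff' measurableSet_Ico).2 (ae_of_all _ fun s hs => ?_)
      have := hBnd s (hIcoE hs) s ⟨hs.1, le_rfl⟩
      rw [Real.norm_eq_abs]
      linarith [abs_nonneg (g s)]
    have hgI : IntegrableOn g (Icc 0 τ) := by
      rw [integrableOn_Icc_iff_integrableOn_Ico]
      refine ⟨(hgm.mono_measure (Measure.restrict_mono hIcoT le_rfl)).aestronglyMeasurable,
        HasFiniteIntegral.restrict_of_bounded (C := B)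
          (measure_Ico_lt_top : volume (Ico (0:ℝ) τ) < ⊤) ?_⟩
      refine (ae_restrict_iff' measurableSet_Ico).2 (ae_of_all _ fun s hs => ?_)
      have := hBnd s (hIcoE hs) s ⟨hs.1, le_rfl⟩
      rw [Real.norm_eq_abs]
      linarith [abs_nonneg (f s)]
    exact ⟨⟨hτ0, hτT⟩, hfI, hgI⟩
  -- τ = T
  have hτeq : τ = T := by
    by_contra hne
    have hlt : τ < T := lt_of_le_of_ne hτT hne
    have hnotmem : ∀ t₁ ∈ Ioc τ T, t₁ ∉ E := by
      intro t₁ ht₁ hmem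
      exact absurd (le_csSup hEbdd hmem) (not_le.2 ht₁.1)
    by_cases hc1 : ∃ t₁, t₁ ∈ Ioc τ T ∧ IntegrableOn (fun s => b s * f s) (Icc 0 t₁)
    · obtain ⟨t₁, ht₁, hbf⟩ := hc1
      have ht₁T : t₁ ∈ Icc (0:ℝ) T := ⟨le_trans hτ0 ht₁.1.le, ht₁.2⟩
      have hgc := hcontg ht₁T hbf
      have hgI := hgc.integrableOn_Icc (μ := volume)
      have hag := hmul_a ht₁T hgI
      have hfc := hcontf ht₁T hag
      exact hnotmem t₁ ht₁ ⟨ht₁T, hfc.integrableOn_Icc (μ := volume), hgI⟩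
    by_cases hc2 : ∃ t₁, t₁ ∈ Ioc τ T ∧ IntegrableOn (fun s => a s * g s) (Icc 0 t₁)
    · obtain ⟨t₁, ht₁, hag⟩ := hc2
      have ht₁T : t₁ ∈ Icc (0:ℝ) T := ⟨le_trans hτ0 ht₁.1.le, ht₁.2⟩
      have hfc := hcontf ht₁T hag
      have hfI := hfc.integrableOn_Icc (μ := volume)
      have hbf := hmul_b ht₁T hfI
      have hgc := hcontg ht₁T hbf
      exact hnotmem t₁ ht₁ ⟨ht₁T, hfI, hgc.integrableOn_Icc (μ := volume)⟩
    push_neg at hc1 hc2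
    have hconst : ∀ t₁ ∈ Ioc τ T, f t₁ = f 0 ∧ g t₁ = g 0 := by
      intro t₁ ht₁
      have h0t₁ : (0:ℝ) ≤ t₁ := le_trans hτ0 ht₁.1.le
      have hnag : ¬ IntegrableOn (fun s => a s * g s) (Ioc 0 t₁) := fun hI =>
        hc2 t₁ ht₁ ((integrableOn_Icc_iff_integrableOn_Ioc).2 hI)
      have hnbf : ¬ IntegrableOn (fun s => b s * f s) (Ioc 0 t₁) := fun hI =>
        hc1 t₁ ht₁ ((integrableOn_Icc_iff_integrableOn_Ioc).2 hI)
      constructor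
      · rw [hf t₁ ⟨h0t₁, ht₁.2⟩, intervalIntegral.integral_of_le h0t₁,
          integral_undef hnag, add_zero]
      · rw [hg t₁ ⟨h0t₁, ht₁.2⟩, intervalIntegral.integral_of_le h0t₁,
          integral_undef hnbf, add_zero]
    have hunion : Icc (0:ℝ) τ ∪ Ioc τ T = Icc (0:ℝ) T := Icc_union_Ioc_eq_Icc hτ0 hτT
    have hfI : IntegrableOn f (Icc 0 T) := by
      rw [← hunion]
      refine hτE.2.1.union ?_
      refine (Integrable.congr (f := fun _ => f 0)
        (integrableOn_const measure_Ioc_lt_top.ne) ?_ : IntegrableOn f (Ioc τ T) volume)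
      exact (ae_restrict_iff' measurableSet_Ioc).2 (ae_of_all _ fun s hs =>
        ((hconst s hs).1).symm)
    have hgI : IntegrableOn g (Icc 0 T) := by
      rw [← hunion]
      refine hτE.2.2.union ?_
      refine (Integrable.congr (f := fun _ => g 0)
        (integrableOn_const measure_Ioc_lt_top.ne) ?_ : IntegrableOn g (Ioc τ T) volume)
      exact (ae_restrict_iff' measurableSet_Ioc).2 (ae_of_all _ fun s hs =>
        ((hconst s hs).2).symm)
    exact hnotmem T ⟨hlt, le_rfl⟩ ⟨⟨hT, le_rfl⟩, hfI, hgI⟩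
  rw [hτeq] at hτE
  exact hkey T hτE


/-- Symmetric Fubini identity for primitives. -/
lemma fubini_swap_key (T : ℝ) (f g : ℝ → ℝ)
    (hfi : IntegrableOn f (Ioc (0:ℝ) T)) (hgi : IntegrableOn g (Ioc (0:ℝ) T)) :
    (∫ s in Ioc (0:ℝ) T, f s * (∫ r in Ioc (0:ℝ) s, g r))
      + (∫ s in Ioc (0:ℝ) T, g s * (∫ r in Ioc (0:ℝ) s, f r))
      = (∫ s in Ioc (0:ℝ) T, f s) * (∫ s in Ioc (0:ℝ) T, g s) := by
  set μ := volume.restrict (Ioc (0:ℝ) T) with hμ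
  set k : ℝ × ℝ → ℝ := fun p => f p.1 * g p.2 with hk
  have hki : Integrable k (μ.prod μ) := hfi.mul_prod hgi
  set D : Set (ℝ × ℝ) := {p : ℝ × ℝ | p.2 < p.1} with hD
  have hDm : MeasurableSet D := measurableSet_lt measurable_snd measurable_fst
  have hI1 : ∫ p, D.indicator k p ∂(μ.prod μ)
      = ∫ s in Ioc (0:ℝ) T, f s * (∫ r in Ioc (0:ℝ) s, g r) := by
    rw [MeasureTheory.integral_prod _ (hki.indicator hDm)]
    refine setIntegral_congr_fun measurableSet_Ioc fun s hs => ?_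
    have heq : (fun r => D.indicator k (s, r)) = (Iio s).indicator (fun r => f s * g r) := by
      ext r
      by_cases hr : r < s
      · rw [indicator_of_mem (by exact hr : (s, r) ∈ D), indicator_of_mem (by exact hr)]
      · rw [indicator_of_notMem (by exact hr : (s, r) ∉ D), indicator_of_notMem (by exact hr)]
    rw [heq, integral_indicator measurableSet_Iio, hμ,
      Measure.restrict_restrict measurableSet_Iio]
    have hset : Iio s ∩ Ioc (0:ℝ) T = Ioo 0 s := by
      ext r
      constructor
      · rintro ⟨h1, h2, _⟩; exact ⟨h2, h1⟩
      · rintro ⟨h1, h2⟩; exact ⟨h2, h1, le_trans h2.le hs.2⟩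
    rw [hset, integral_const_mul, ← integral_Ioc_eq_integral_Ioo]
  have hI2 : ∫ p, Dᶜ.indicator k p ∂(μ.prod μ)
      = ∫ s in Ioc (0:ℝ) T, g s * (∫ r in Ioc (0:ℝ) s, f r) := by
    have hs1 : ∫ p, (fun q : ℝ × ℝ => Dᶜ.indicator k q.swap) p ∂(μ.prod μ)
        = ∫ p, Dᶜ.indicator k p ∂(μ.prod μ) := by
      have := MeasureTheory.integral_prod_swap (μ := μ) (ν := μ)
        (fun q : ℝ × ℝ => Dᶜ.indicator k q.swap)
      exact (by simpa using this : _ = _).symm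
    rw [← hs1]
    have hint : Integrable (fun q : ℝ × ℝ => Dᶜ.indicator k q.swap) (μ.prod μ) := by
      have := (hki.indicator hDm.compl).swap
      exact this
    rw [MeasureTheory.integral_prod _ hint]
    refine setIntegral_congr_fun measurableSet_Ioc fun s hs => ?_
    have heq : (fun r => Dᶜ.indicator k (Prod.swap (s, r)))
        = (Iic s).indicator (fun r => f r * g s) := by
      ext r
      simp only [Prod.swap_prod_mk]
      by_cases hr : r ≤ s
      · rw [indicator_of_mem (by simpa [hD] using not_lt.2 hr : ((r, s) : ℝ × ℝ) ∈ Dᶜ),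
          indicator_of_mem (by exact hr)]
      · rw [indicator_of_notMem
          (by simpa [hD] using not_le.1 hr : ¬ ((r, s) : ℝ × ℝ) ∈ Dᶜ),
          indicator_of_notMem (by exact hr)]
    rw [heq, integral_indicator measurableSet_Iic, hμ,
      Measure.restrict_restrict measurableSet_Iic]
    have hset : Iic s ∩ Ioc (0:ℝ) T = Ioc 0 s := by
      ext r
      constructor
      · rintro ⟨h1, h2, _⟩; exact ⟨h2, h1⟩
      · rintro ⟨h1, h2⟩; exact ⟨h2, h1, le_trans h2 hs.2⟩
    rw [hset, integral_mul_const, mul_comm]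
  have hsum : (∫ p, D.indicator k p ∂(μ.prod μ)) + ∫ p, Dᶜ.indicator k p ∂(μ.prod μ)
      = ∫ p, k p ∂(μ.prod μ) := by
    rw [← integral_add (hki.indicator hDm) (hki.indicator hDm.compl)]
    congr 1
    funext p
    by_cases hp : p ∈ D
    · rw [indicator_of_mem hp, indicator_of_notMem (by simpa using hp), add_zero]
    · rw [indicator_of_notMem hp, indicator_of_mem (by simpa using hp), zero_add]
  have hmul : ∫ p, k p ∂(μ.prod μ)
      = (∫ s in Ioc (0:ℝ) T, f s) * (∫ s in Ioc (0:ℝ) T, g s) :=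
    integral_prod_mul f g
  rw [hI1, hI2] at hsum
  rw [hsum, hmul]

/-- Product of an integrable function and a function continuous on `[0,T]` is integrable. -/
lemma int_mul_cont (T : ℝ) (f φ : ℝ → ℝ) (hfi : IntegrableOn f (Ioc (0:ℝ) T))
    (hφ : ContinuousOn φ (Icc (0:ℝ) T)) :
    IntegrableOn (fun s => f s * φ s) (Ioc (0:ℝ) T) := by
  obtain ⟨Cb, hCb⟩ := isCompact_Icc.exists_bound_of_continuousOn hφ
  have h1 : IntegrableOn (fun s => φ s * f s) (Ioc (0:ℝ) T) := by
    refine Integrable.bdd_mul (c := Cb) hfi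
      ((hφ.mono Ioc_subset_Icc_self).aestronglyMeasurable measurableSet_Ioc) ?_
    exact (ae_restrict_iff' measurableSet_Ioc).2
      (ae_of_all _ fun s hs => hCb s (Ioc_subset_Icc_self hs))
  exact h1.congr (ae_of_all _ fun s => mul_comm (φ s) (f s))

/-- Integration by parts for primitives of integrable functions. -/
lemma parts (T : ℝ) (hT : 0 ≤ T) (f g F G : ℝ → ℝ)
    (hfi : IntegrableOn f (Ioc (0:ℝ) T)) (hgi : IntegrableOn g (Ioc (0:ℝ) T))
    (hF : ∀ t ∈ Icc (0:ℝ) T, F t = F 0 + ∫ s in (0:ℝ)..t, f s)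
    (hG : ∀ t ∈ Icc (0:ℝ) T, G t = G 0 + ∫ s in (0:ℝ)..t, g s) :
    F T * G T - F 0 * G 0
      = (∫ s in Ioc (0:ℝ) T, f s * G s) + ∫ s in Ioc (0:ℝ) T, F s * g s := by
  have hφG : ContinuousOn (fun s => ∫ r in Ioc (0:ℝ) s, g r) (Icc (0:ℝ) T) :=
    intervalIntegral.continuousOn_primitive ((integrableOn_Icc_iff_integrableOn_Ioc).2 hgi)
  have hφF : ContinuousOn (fun s => ∫ r in Ioc (0:ℝ) s, f r) (Icc (0:ℝ) T) :=
    intervalIntegral.continuousOn_primitive ((integrableOn_Icc_iff_integrableOn_Ioc).2 hfi)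
  have h1 : ∫ s in Ioc (0:ℝ) T, f s * G s
      = G 0 * (∫ s in Ioc (0:ℝ) T, f s)
        + ∫ s in Ioc (0:ℝ) T, f s * (∫ r in Ioc (0:ℝ) s, g r) := by
    have heq : ∀ s ∈ Ioc (0:ℝ) T, f s * G s
        = G 0 * f s + f s * (∫ r in Ioc (0:ℝ) s, g r) := by
      intro s hs
      rw [hG s ⟨hs.1.le, hs.2⟩, intervalIntegral.integral_of_le hs.1.le]; ring
    rw [setIntegral_congr_fun measurableSet_Ioc heq,
      integral_add (hfi.const_mul (G 0)) (int_mul_cont T f _ hfi hφG), integral_const_mul]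
  have h2 : ∫ s in Ioc (0:ℝ) T, F s * g s
      = F 0 * (∫ s in Ioc (0:ℝ) T, g s)
        + ∫ s in Ioc (0:ℝ) T, g s * (∫ r in Ioc (0:ℝ) s, f r) := by
    have heq : ∀ s ∈ Ioc (0:ℝ) T, F s * g s
        = F 0 * g s + g s * (∫ r in Ioc (0:ℝ) s, f r) := by
      intro s hs
      rw [hF s ⟨hs.1.le, hs.2⟩, intervalIntegral.integral_of_le hs.1.le]; ring
    rw [setIntegral_congr_fun measurableSet_Ioc heq,
      integral_add (hgi.const_mul (F 0)) (int_mul_cont T g _ hgi hφF), integral_const_mul]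
  have hFT : F T = F 0 + ∫ s in Ioc (0:ℝ) T, f s := by
    rw [hF T ⟨hT, le_rfl⟩, intervalIntegral.integral_of_le hT]
  have hGT : G T = G 0 + ∫ s in Ioc (0:ℝ) T, g s := by
    rw [hG T ⟨hT, le_rfl⟩, intervalIntegral.integral_of_le hT]
  have key := fubini_swap_key T f g hfi hgi
  rw [h1, h2, hFT, hGT]
  linear_combination -key

/-- If `x(0) = x(T) = 1`, `y(0) = y(T)` and `p_y(0) = p_y(T)`, then `p_x(0) = p_x(T)`:
the adjoint vector is `T`-periodic. -/
theorem adjoint_periodic (umin umax : ℝ) (humin : umin < 0) (humax : 0 < umax)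
    (T : ℝ) (hT : 0 < T) (x y u : ℝ → ℝ) (hadm : OCAdmissible umin umax T x y u)
    (hx0 : x 0 = 1) (hxT : x T = 1) (hy : y 0 = y T)
    (px py : ℝ → ℝ)
    (hpx : ∀ t ∈ Icc (0:ℝ) T, px t = px 0 + ∫ s in (0:ℝ)..t, u s * py s)
    (hpy : ∀ t ∈ Icc (0:ℝ) T, py t = py 0 - ∫ s in (0:ℝ)..t, px s)
    (hpyper : py 0 = py T) :
    px 0 = px T := by
  obtain ⟨hu_meas, hu_bd, hx, hyeq⟩ := hadm
  set M : ℝ := max (max (-umin) umax) 1 with hM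
  have hM1 : (1:ℝ) ≤ M := le_max_right _ _
  have hMu : ∀ᵐ t ∂(volume.restrict (Icc (0:ℝ) T)), |u t| ≤ M := by
    refine hu_bd.mono fun t ht => ?_
    rw [abs_le]
    constructor
    · have : -umin ≤ M := le_trans (le_max_left _ _) (le_max_left _ _)
      linarith [ht.1]
    · have : umax ≤ M := le_trans (le_max_right _ _) (le_max_left _ _)
      linarith [ht.2]
  have hone : |(1:ℝ)| ≤ M := by rw [abs_one]; exact hM1
  -- system 1 : x' = y, y' = -u x
  obtain ⟨hxc, hyc, hIy1, hIux⟩ := bootstrap T M hT.le hM1 (fun _ => (1:ℝ))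
    (fun s => -(u s)) x y measurable_const hu_meas.neg
    (hMu.mono fun t ht => ⟨hone, by rwa [abs_neg]⟩)
    (fun t ht => by simp only [one_mul]; exact hx t ht)
    (fun t ht => by
      simp only [neg_mul]
      rw [intervalIntegral.integral_neg, ← sub_eq_add_neg]
      exact hyeq t ht)
  -- system 2 : px' = u py, py' = -px
  obtain ⟨hpxc, hpyc, hIupy, hIpx1⟩ := bootstrap T M hT.le hM1 u (fun _ => (-1:ℝ))
    px py hu_meas measurable_const
    (hMu.mono fun t ht => ⟨ht, by rw [abs_neg, abs_one]; exact hM1⟩)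
    (fun t ht => hpx t ht)
    (fun t ht => by
      simp only [neg_one_mul]
      rw [intervalIntegral.integral_neg, ← sub_eq_add_neg]
      exact hpy t ht)
  -- integrability on Ioc
  have hIupy' : IntegrableOn (fun s => u s * py s) (Ioc (0:ℝ) T) :=
    hIupy.mono_set Ioc_subset_Icc_self
  have hIy : IntegrableOn y (Ioc (0:ℝ) T) :=
    (hyc.integrableOn_Icc (μ := volume)).mono_set Ioc_subset_Icc_self
  have hIpx : IntegrableOn (fun s => -px s) (Ioc (0:ℝ) T) :=
    ((hpxc.integrableOn_Icc (μ := volume)).mono_set Ioc_subset_Icc_self).neg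
  have hIux' : IntegrableOn (fun s => -(u s * x s)) (Ioc (0:ℝ) T) := by
    refine ((hIux.mono_set Ioc_subset_Icc_self).congr (ae_of_all _ fun s => ?_) :
      IntegrableOn _ (Ioc (0:ℝ) T) volume)
    simp [neg_mul]
  -- integration by parts
  have E1 := parts T hT.le (fun s => u s * py s) y px x hIupy' hIy hpx hx
  have E2 := parts T hT.le (fun s => -px s) (fun s => -(u s * x s)) py y hIpx hIux'
    (fun t ht => by
      rw [intervalIntegral.integral_neg, ← sub_eq_add_neg]
      exact hpy t ht)
    (fun t ht => by
      rw [intervalIntegral.integral_neg, ← sub_eq_add_neg]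
      exact hyeq t ht)
  -- simplify the four integrals
  have e3 : ∫ s in Ioc (0:ℝ) T, (fun s => -px s) s * y s
      = - ∫ s in Ioc (0:ℝ) T, px s * y s := by
    rw [← integral_neg]
    congr 1
    funext s
    ring
  have e4 : ∫ s in Ioc (0:ℝ) T, py s * (fun s => -(u s * x s)) s
      = - ∫ s in Ioc (0:ℝ) T, py s * (u s * x s) := by
    rw [← integral_neg]
    congr 1
    funext s
    ring
  have e5 : ∫ s in Ioc (0:ℝ) T, (fun s => u s * py s) s * x s
      = ∫ s in Ioc (0:ℝ) T, py s * (u s * x s) := by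
    refine setIntegral_congr_fun measurableSet_Ioc fun s _ => ?_
    ring
  rw [e5] at E1
  rw [e3, e4] at E2
  rw [hx0, hxT, hpyper, ← hy] at *
  linarith [E1, E2]

end
end

section
/- Let (x, y, u) be a constrained-optimal triple on [0, T] and let (p_x, p_y, p⁰) be an extremal lift of it. Then the set I = {t ∈ [0, T] : p_y(t)·x(t) = p⁰} has Lebesgue measure zero; consequently, for almost every t ∈ [0, T], u(t) = u_min if −p_y(t)·x(t) + p⁰ < 0 and u(t) = u_max if −p_y(t)·x(t) + p⁰ > 0, i.e., the optimal control is bang-bang. -/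
open MeasureTheory Real Set Filter Topology

noncomputable section

/-- A constrained-admissible triple on `[0, T]`: admissible with `x(0) = x(T) = 1`,
`y(0) = y(T) = 0` and `x(t) ≤ 1` on `[0, T]`. -/
def OCConstrainedAdmissible (umin umax T : ℝ) (x y u : ℝ → ℝ) : Prop :=
  OCAdmissible umin umax T x y u ∧
  x 0 = 1 ∧ x T = 1 ∧ y 0 = 0 ∧ y T = 0 ∧ (∀ t ∈ Icc (0:ℝ) T, x t ≤ 1)

/-- A constrained-optimal triple on `[0, T]`. -/
def OCConstrainedOptimal (umin umax T : ℝ) (x y u : ℝ → ℝ) : Prop :=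
  OCConstrainedAdmissible umin umax T x y u ∧
  ∀ x' y' u' : ℝ → ℝ, OCConstrainedAdmissible umin umax T x' y' u' →
    OCcost T u ≤ OCcost T u'

/-- An extremal lift `(p_x, p_y, p⁰)` of an admissible triple `(x, y, u)` on `[0, T]`,
as given by the Pontryagin maximum principle: `p⁰ ≤ 0`, the adjoint integral equations,
nontriviality of `(p_x(T), p_y(T), p⁰)`, periodicity of `p_y`, the pointwise maximization
condition a.e., and constancy and nonnegativity of the maximized Hamiltonian. -/
def OCExtremalLift (umin umax T : ℝ) (x y u px py : ℝ → ℝ) (p0 : ℝ) : Prop :=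
  p0 ≤ 0 ∧
  (∀ t ∈ Icc (0:ℝ) T, px t = px 0 + ∫ s in (0:ℝ)..t, u s * py s) ∧
  (∀ t ∈ Icc (0:ℝ) T, py t = py 0 - ∫ s in (0:ℝ)..t, px s) ∧
  ((px T, py T, p0) : ℝ × ℝ × ℝ) ≠ (0, 0, 0) ∧
  py 0 = py T ∧
  (∀ᵐ t ∂(volume.restrict (Icc (0:ℝ) T)),
    (-py t * x t + p0) * u t =
      sSup ((fun v => (-py t * x t + p0) * v) '' Icc umin umax)) ∧
  (∃ c : ℝ, 0 ≤ c ∧ ∀ t ∈ Icc (0:ℝ) T,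
    px t * y t + sSup ((fun v => v * (-py t * x t + p0)) '' Icc umin umax) = c)

section HelperLemmas
open intervalIntegral

lemma sSup_mul_left (umin umax r : ℝ) (h : umin ≤ umax) :
    sSup ((fun v => r * v) '' Icc umin umax) = max (r * umin) (r * umax) := by
  apply IsGreatest.csSup_eq
  constructor
  · rcases le_total 0 r with hr | hr
    · rw [max_eq_right (by nlinarith)]
      exact ⟨umax, right_mem_Icc.2 h, rfl⟩
    · rw [max_eq_left (by nlinarith)]
      exact ⟨umin, left_mem_Icc.2 h, rfl⟩
  · rintro z ⟨v, hv, rfl⟩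
    simp only
    rcases le_total 0 r with hr | hr
    · exact le_max_of_le_right (by nlinarith [hv.1, hv.2])
    · exact le_max_of_le_left (by nlinarith [hv.1, hv.2])

lemma sSup_mul_right (umin umax r : ℝ) (h : umin ≤ umax) :
    sSup ((fun v => v * r) '' Icc umin umax) = max (umin * r) (umax * r) := by
  have : (fun v => v * r) = (fun v => r * v) := by ext v; ring
  rw [this, sSup_mul_left umin umax r h, mul_comm r umin, mul_comm r umax]

/-- Grönwall: continuous nonneg `r` with `r t ≤ δ + ∫₀ᵗ C r` is bounded by `δ e^{Ct}`. -/
lemma gronwall_int {C δ t1 : ℝ} {r : ℝ → ℝ} (hC : 0 ≤ C) (hδ : 0 ≤ δ)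
    (hr : Continuous r) (hr0 : ∀ t, 0 ≤ r t)
    (hb : ∀ t ∈ Icc (0:ℝ) t1, r t ≤ δ + ∫ s in (0:ℝ)..t, C * r s) :
    ∀ t ∈ Icc (0:ℝ) t1, r t ≤ δ * Real.exp (C * t) := by
  intro t ht
  set g : ℝ → ℝ := fun s => C * r s with hg
  have hgc : Continuous g := continuous_const.mul hr
  set R : ℝ → ℝ := fun τ => δ + ∫ s in (0:ℝ)..τ, g s with hR
  have hRd : ∀ τ : ℝ, HasDerivAt R (g τ) τ := by
    intro τ
    have H := (intervalIntegral.integral_hasStrictDerivAt_right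
      (hgc.intervalIntegrable (0:ℝ) τ)
      (hgc.stronglyMeasurable.stronglyMeasurableAtFilter (l := 𝓝 τ))
      (hgc.continuousAt (x := τ))).hasDerivAt
    exact H.const_add δ
  have hRnn : ∀ τ ∈ Icc (0:ℝ) t1, R τ = ‖R τ‖ := by
    intro τ hτ
    have : (0:ℝ) ≤ ∫ s in (0:ℝ)..τ, g s :=
      intervalIntegral.integral_nonneg hτ.1 (fun s _ => mul_nonneg hC (hr0 s))
    rw [Real.norm_eq_abs, abs_of_nonneg (by positivity)]
  have key : ∀ τ ∈ Icc (0:ℝ) t, ‖R τ‖ ≤ gronwallBound δ C 0 (τ - 0) := by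
    apply norm_le_gronwallBound_of_norm_deriv_right_le
    · exact (continuous_const.add
        (intervalIntegral.continuous_primitive (fun a b => hgc.intervalIntegrable a b) 0)).continuousOn
    · exact fun τ _ => (hRd τ).hasDerivWithinAt
    · simp [hR, Real.norm_eq_abs, abs_of_nonneg hδ]
    · intro τ hτ
      have hτ1 : τ ∈ Icc (0:ℝ) t1 := ⟨hτ.1, le_trans (le_of_lt hτ.2) ht.2⟩
      have h1 : r τ ≤ R τ := hb τ hτ1
      have h2 : ‖g τ‖ = C * r τ := by
        rw [Real.norm_eq_abs, abs_of_nonneg (mul_nonneg hC (hr0 τ))]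
      rw [h2, ← hRnn τ hτ1]
      have := mul_le_mul_of_nonneg_left h1 hC
      linarith
  have := key t ⟨ht.1, le_refl t⟩
  rw [gronwallBound_ε0, sub_zero] at this
  calc r t ≤ R t := hb t ht
    _ = ‖R t‖ := hRnn t ht
    _ ≤ δ * Real.exp (C * t) := this

lemma gronwall_zero {C t1 : ℝ} {r : ℝ → ℝ} (hC : 0 ≤ C)
    (hr : Continuous r) (hr0 : ∀ t, 0 ≤ r t)
    (hb : ∀ t ∈ Icc (0:ℝ) t1, r t ≤ ∫ s in (0:ℝ)..t, C * r s) :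
    ∀ t ∈ Icc (0:ℝ) t1, r t = 0 := by
  intro t ht
  have := gronwall_int hC (le_refl (0:ℝ)) hr hr0 (fun τ hτ => by simpa using hb τ hτ) t ht
  simp only [zero_mul] at this
  exact le_antisymm this (hr0 t)

/-- bounded a.e. times continuous-on is integrable on a compact interval. -/
lemma integrableOn_mul_of_bounded {K a b : ℝ} {u f : ℝ → ℝ} (hab : a ≤ b)
    (hu : Measurable u) (hub : ∀ᵐ s ∂(volume.restrict (Icc a b)), |u s| ≤ K)
    (hf : ContinuousOn f (Icc a b)) :
    IntegrableOn (fun s => u s * f s) (Icc a b) := by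
  obtain ⟨M, hM⟩ := (isCompact_Icc (a := a) (b := b)).exists_bound_of_continuousOn hf
  apply Integrable.mono' (integrable_const (K * max M 0))
  · exact ((hu.aemeasurable.restrict).mul (hf.aemeasurable measurableSet_Icc)).aestronglyMeasurable
  · filter_upwards [hub, ae_restrict_mem measurableSet_Icc] with s h1 h2
    have h3 : |f s| ≤ max M 0 := le_trans (hM s h2) (le_max_left _ _)
    have h4 : (0:ℝ) ≤ K := le_trans (abs_nonneg _) h1
    calc ‖u s * f s‖ = |u s| * |f s| := abs_mul _ _
      _ ≤ K * max M 0 := by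
          apply mul_le_mul h1 h3 (abs_nonneg _) h4

lemma boot {T K : ℝ} {u f g : ℝ → ℝ} (hT : 0 ≤ T) (hK : 0 ≤ K)
    (hu : Measurable u)
    (hub : ∀ᵐ s ∂(volume.restrict (Icc (0:ℝ) T)), |u s| ≤ K)
    (hf : ∀ t ∈ Icc (0:ℝ) T, f t = f 0 + ∫ s in (0:ℝ)..t, g s)
    (hg : ∀ t ∈ Icc (0:ℝ) T, g t = g 0 + ∫ s in (0:ℝ)..t, u s * f s) :
    ContinuousOn f (Icc (0:ℝ) T) ∧ ContinuousOn g (Icc (0:ℝ) T) ∧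
    IntegrableOn g (Icc (0:ℝ) T) ∧ IntegrableOn (fun s => u s * f s) (Icc (0:ℝ) T) := by
  have hIccU : uIcc (0:ℝ) T = Icc 0 T := uIcc_of_le hT
  suffices hGII : IntervalIntegrable g volume 0 T by
    have hgint : IntegrableOn g (Icc (0:ℝ) T) :=
      (intervalIntegrable_iff_integrableOn_Icc_of_le hT).1 hGII
    have hfC : ContinuousOn f (Icc (0:ℝ) T) := by
      have h := intervalIntegral.continuousOn_primitive_interval (by rwa [hIccU])
      rw [hIccU] at h
      exact (continuousOn_const.add h).congr (fun t ht => hf t ht)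
    have hufint : IntegrableOn (fun s => u s * f s) (Icc (0:ℝ) T) :=
      integrableOn_mul_of_bounded hT hu hub hfC
    have hgC : ContinuousOn g (Icc (0:ℝ) T) := by
      have h := intervalIntegral.continuousOn_primitive_interval (by rwa [hIccU])
      rw [hIccU] at h
      exact (continuousOn_const.add h).congr (fun t ht => hg t ht)
    exact ⟨hfC, hgC, hgint, hufint⟩
  by_contra hN
  set N := {t | t ∈ Icc (0:ℝ) T ∧ ¬ IntervalIntegrable g volume 0 t} with hN_def
  have hTN : T ∈ N := ⟨right_mem_Icc.2 hT, hN⟩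
  have hNne : N.Nonempty := ⟨T, hTN⟩
  have hNbdd : BddBelow N := ⟨0, fun t ht => ht.1.1⟩
  set τ := sInf N with hτ_def
  have hτ0 : 0 ≤ τ := le_csInf hNne (fun t ht => ht.1.1)
  have hτT : τ ≤ T := csInf_le hNbdd hTN
  have hup : ∀ t ∈ Icc (0:ℝ) T, τ < t → t ∈ N := by
    intro t ht hlt
    obtain ⟨s, hsN, hst⟩ := exists_lt_of_csInf_lt hNne hlt
    refine ⟨ht, fun hii => hsN.2 (hii.mono_set ?_)⟩
    rw [uIcc_of_le hsN.1.1, uIcc_of_le (le_trans hsN.1.1 hst.le)]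
    exact Icc_subset_Icc le_rfl hst.le
  have hlow : ∀ t, 0 ≤ t → t < τ → IntervalIntegrable g volume 0 t := by
    intro t h0 hlt
    by_contra hc
    exact absurd (csInf_le hNbdd ⟨⟨h0, le_trans hlt.le hτT⟩, hc⟩) (not_le.2 hlt)
  have hfN : ∀ t ∈ N, f t = f 0 := fun t ht => by
    rw [hf t ht.1, intervalIntegral.integral_undef ht.2, add_zero]
  -- continuity of f on [0, τ)
  have hfC1 : ContinuousOn f (Ico 0 τ) := by
    intro t ht
    obtain ⟨t', htt', ht'τ⟩ := exists_between ht.2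
    have h0t' : (0:ℝ) ≤ t' := le_trans ht.1 htt'.le
    have hii : IntegrableOn g (uIcc (0:ℝ) t') := by
      rw [uIcc_of_le h0t']
      exact (intervalIntegrable_iff_integrableOn_Icc_of_le h0t').1 (hlow t' h0t' ht'τ)
    have hP := intervalIntegral.continuousOn_primitive_interval hii
    rw [uIcc_of_le h0t'] at hP
    have hfc : ContinuousOn f (Icc 0 t') := (continuousOn_const.add hP).congr
      (fun s hs => hf s ⟨hs.1, le_trans hs.2 (le_trans ht'τ.le hτT)⟩)
    have hmem : Icc (0:ℝ) t' ∈ 𝓝[Ico (0:ℝ) τ] t := by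
      apply mem_nhdsWithin.mpr ⟨Iio t', isOpen_Iio, htt', ?_⟩
      rintro s ⟨hs1, hs2⟩
      exact ⟨hs2.1, le_of_lt hs1⟩
    exact (hfc t ⟨ht.1, htt'.le⟩).mono_of_mem_nhdsWithin hmem
  -- a priori Gronwall bound on [0, t1] for every t1 < τ
  set K1 : ℝ := max K 1 with hK1_def
  have hK1_1 : (1:ℝ) ≤ K1 := le_max_right _ _
  have hK1_0 : (0:ℝ) ≤ K1 := le_trans zero_le_one hK1_1
  have hKK1 : K ≤ K1 := le_max_left _ _
  set M0 : ℝ := (|f 0| + |g 0|) * Real.exp (2*K1*T) with hM0_def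
  have hM : ∀ t1, 0 ≤ t1 → t1 < τ → ∀ t ∈ Icc (0:ℝ) t1, |f t| + |g t| ≤ M0 := by
    intro t1 h01 h1τ
    have ht1T : t1 ≤ T := le_trans h1τ.le hτT
    have hsub1 : Icc (0:ℝ) t1 ⊆ Ico 0 τ := fun s hs => ⟨hs.1, lt_of_le_of_lt hs.2 h1τ⟩
    have hsub2 : Icc (0:ℝ) t1 ⊆ Icc 0 T := Icc_subset_Icc le_rfl ht1T
    have hfc : ContinuousOn f (Icc 0 t1) := hfC1.mono hsub1
    have hgint1 : IntegrableOn g (Icc (0:ℝ) t1) :=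
      (intervalIntegrable_iff_integrableOn_Icc_of_le h01).1 (hlow t1 h01 h1τ)
    have hufint1 : IntegrableOn (fun s => u s * f s) (Icc (0:ℝ) t1) :=
      integrableOn_mul_of_bounded h01 hu (ae_restrict_of_ae_restrict_of_subset hsub2 hub) hfc
    have hgc : ContinuousOn g (Icc 0 t1) := by
      have h := intervalIntegral.continuousOn_primitive_interval
        (by rwa [uIcc_of_le h01])
      rw [uIcc_of_le h01] at h
      exact (continuousOn_const.add h).congr (fun s hs => hg s (hsub2 hs))
    -- clamped sum
    set p : ℝ → ℝ := fun s => max 0 (min s t1) with hp_def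
    have hp : Continuous p := continuous_const.max (continuous_id.min continuous_const)
    have hpmem : ∀ s, p s ∈ Icc (0:ℝ) t1 :=
      fun s => ⟨le_max_left _ _, max_le h01 (min_le_right _ _)⟩
    have hpid : ∀ s ∈ Icc (0:ℝ) t1, p s = s := by
      intro s hs
      simp only [hp_def]
      rw [min_eq_left hs.2, max_eq_right hs.1]
    set r : ℝ → ℝ := fun s => |f (p s)| + |g (p s)| with hr_def
    have hrC : Continuous r :=
      ((hfc.comp_continuous hp hpmem).abs).add ((hgc.comp_continuous hp hpmem).abs)
    have hr0 : ∀ s, 0 ≤ r s := fun s => add_nonneg (abs_nonneg _) (abs_nonneg _)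
    have hre : ∀ s ∈ Icc (0:ℝ) t1, r s = |f s| + |g s| := by
      intro s hs; simp only [hr_def, hpid s hs]
    have hKrii : ∀ (c : ℝ), ∀ (s t : ℝ), IntervalIntegrable (fun σ => c * r σ) volume s t :=
      fun c s t => (continuous_const.mul hrC).intervalIntegrable s t
    have key : ∀ t ∈ Icc (0:ℝ) t1, r t ≤ (|f 0| + |g 0|) + ∫ s in (0:ℝ)..t, (2*K1) * r s := by
      intro t ht
      have htT : Icc (0:ℝ) t ⊆ Icc (0:ℝ) t1 := Icc_subset_Icc le_rfl ht.2
      have hgii : IntervalIntegrable g volume 0 t :=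
        (hgint1.mono_set (by rw [uIcc_of_le ht.1]; exact htT)).intervalIntegrable
      have hufii : IntervalIntegrable (fun s => u s * f s) volume 0 t :=
        (hufint1.mono_set (by rw [uIcc_of_le ht.1]; exact htT)).intervalIntegrable
      have hbf : |f t| ≤ |f 0| + ∫ s in (0:ℝ)..t, K1 * r s := by
        rw [hf t (hsub2 ht)]
        refine le_trans (abs_add_le _ _) (add_le_add_right ?_ _)
        refine le_trans (intervalIntegral.abs_integral_le_integral_abs ht.1) ?_
        apply intervalIntegral.integral_mono_on ht.1 hgii.abs (hKrii K1 0 t)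
        intro s hs
        have hs1 : s ∈ Icc (0:ℝ) t1 := htT hs
        rw [hre s hs1]
        nlinarith [abs_nonneg (f s), abs_nonneg (g s)]
      have hbg : |g t| ≤ |g 0| + ∫ s in (0:ℝ)..t, K1 * r s := by
        rw [hg t (hsub2 ht)]
        refine le_trans (abs_add_le _ _) (add_le_add_right ?_ _)
        refine le_trans (intervalIntegral.abs_integral_le_integral_abs ht.1) ?_
        apply intervalIntegral.integral_mono_ae_restrict ht.1 hufii.abs (hKrii K1 0 t)
        filter_upwards [ae_restrict_of_ae_restrict_of_subset (htT.trans hsub2) hub,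
          ae_restrict_mem measurableSet_Icc] with s h1 h2
        have hs1 : s ∈ Icc (0:ℝ) t1 := htT h2
        rw [hre s hs1, abs_mul]
        nlinarith [abs_nonneg (f s), abs_nonneg (g s), abs_nonneg (u s)]
      have hadd : (∫ s in (0:ℝ)..t, K1 * r s) + (∫ s in (0:ℝ)..t, K1 * r s)
          = ∫ s in (0:ℝ)..t, (2*K1) * r s := by
        rw [← intervalIntegral.integral_add (hKrii K1 0 t) (hKrii K1 0 t)]
        apply intervalIntegral.integral_congr
        intro s _
        ring
      rw [hre t ht, ← hadd]
      linarith
    intro t ht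
    have := gronwall_int (by linarith : (0:ℝ) ≤ 2*K1)
      (add_nonneg (abs_nonneg _) (abs_nonneg _)) hrC hr0 key t ht
    rw [← hre t ht]
    refine le_trans this ?_
    rw [hM0_def]
    apply mul_le_mul_of_nonneg_left _ (add_nonneg (abs_nonneg _) (abs_nonneg _))
    apply Real.exp_le_exp.2
    have := ht.2
    nlinarith [le_trans ht.2 ht1T]
  -- global bound and measurability of f
  set M1 : ℝ := max M0 |f 0| with hM1_def
  have hfb : ∀ t ∈ Icc (0:ℝ) T, t ≠ τ → |f t| ≤ M1 := by
    intro t ht htτ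
    rcases lt_or_gt_of_ne htτ with h | h
    · have h1 := hM t ht.1 h t ⟨ht.1, le_rfl⟩
      have := abs_nonneg (g t)
      exact le_trans (by linarith) (le_max_left _ _)
    · rw [hfN t (hup t ht h)]
      exact le_max_right _ _
  have hfm : AEMeasurable f (volume.restrict (Icc (0:ℝ) T)) := by
    have h1 : AEMeasurable f (volume.restrict (Ico (0:ℝ) τ)) :=
      hfC1.aemeasurable measurableSet_Ico
    have h2 : AEMeasurable f (volume.restrict (Icc τ T)) := by
      have he : f =ᵐ[volume.restrict (Icc τ T)] (fun _ => f 0) := by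
        rw [Filter.EventuallyEq, ae_restrict_iff' measurableSet_Icc]
        rw [ae_iff]
        apply measure_mono_null (t := {τ})
        · intro t h
          simp only [mem_setOf_eq, not_forall] at h
          obtain ⟨ht, hne⟩ := h
          by_contra hne'
          have : τ < t := lt_of_le_of_ne ht.1 (Ne.symm hne')
          exact hne (hfN t (hup t ⟨le_trans hτ0 ht.1, ht.2⟩ this))
        · exact measure_singleton τ
      exact aemeasurable_const.congr he.symm
    have hsub : Icc (0:ℝ) T ⊆ Ico 0 τ ∪ Icc τ T := by
      intro t ht
      by_cases h : t < τ
      · exact Or.inl ⟨ht.1, h⟩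
      · exact Or.inr ⟨not_lt.1 h, ht.2⟩
    have hcomb : AEMeasurable f (volume.restrict (Ico 0 τ ∪ Icc τ T)) :=
      (aemeasurable_union_iff.2 ⟨h1, h2⟩)
    exact hcomb.mono_measure (Measure.restrict_mono hsub le_rfl)
  -- integrability of u * f on [0, T]
  have hτae : ∀ᵐ t ∂(volume.restrict (Icc (0:ℝ) T)), t ≠ τ := by
    rw [ae_iff]
    apply measure_mono_null (t := {τ})
    · intro t ht
      simp only [mem_setOf_eq, not_not] at ht
      simp [ht]
    · exact le_antisymm (le_trans (Measure.restrict_apply_le _ _) (by simp)) zero_le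
  have hufint : IntegrableOn (fun s => u s * f s) (Icc (0:ℝ) T) := by
    apply Integrable.mono' (integrable_const (K * M1))
    · exact ((hu.aemeasurable.restrict).mul hfm).aestronglyMeasurable
    · filter_upwards [hub, ae_restrict_mem measurableSet_Icc, hτae] with s h1 h2 h3
      have h4 : |f s| ≤ M1 := hfb s h2 h3
      have h5 : (0:ℝ) ≤ K := le_trans (abs_nonneg _) h1
      calc ‖u s * f s‖ = |u s| * |f s| := abs_mul _ _
        _ ≤ K * M1 := mul_le_mul h1 h4 (abs_nonneg _) h5
  -- hence g is continuous on [0,T], contradiction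
  have hgC : ContinuousOn g (Icc (0:ℝ) T) := by
    have h := intervalIntegral.continuousOn_primitive_interval (by rwa [hIccU])
    rw [hIccU] at h
    exact (continuousOn_const.add h).congr (fun t ht => hg t ht)
  exact hN ((hgC.mono (by rw [hIccU])).intervalIntegrable)

lemma ode_unique {T K : ℝ} {a b A B : ℝ → ℝ} (hK : 0 ≤ K)
    (hAint : IntegrableOn A (Icc (0:ℝ) T)) (hBint : IntegrableOn B (Icc (0:ℝ) T))
    (ha : ∀ t ∈ Icc (0:ℝ) T, a t = a 0 + ∫ s in (0:ℝ)..t, A s)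
    (hb : ∀ t ∈ Icc (0:ℝ) T, b t = b 0 + ∫ s in (0:ℝ)..t, B s)
    (hbound : ∀ᵐ s ∂(volume.restrict (Icc (0:ℝ) T)),
      |A s| ≤ K * (|a s| + |b s|) ∧ |B s| ≤ K * (|a s| + |b s|))
    {t0 : ℝ} (ht0 : t0 ∈ Icc (0:ℝ) T) (ha0 : a t0 = 0) (hb0 : b t0 = 0) :
    ∀ t ∈ Icc (0:ℝ) T, a t = 0 ∧ b t = 0 := by
  have hT : (0:ℝ) ≤ T := le_trans ht0.1 ht0.2
  have hIccU : uIcc (0:ℝ) T = Icc 0 T := uIcc_of_le hT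
  have zmem : (0:ℝ) ∈ Icc (0:ℝ) T := ⟨le_refl _, hT⟩
  have hAu : IntegrableOn A (uIcc (0:ℝ) T) := by rwa [hIccU]
  have hBu : IntegrableOn B (uIcc (0:ℝ) T) := by rwa [hIccU]
  have haC : ContinuousOn a (Icc (0:ℝ) T) := by
    have h := intervalIntegral.continuousOn_primitive_interval hAu
    rw [hIccU] at h
    exact (continuousOn_const.add h).congr (fun t ht => ha t ht)
  have hbC : ContinuousOn b (Icc (0:ℝ) T) := by
    have h := intervalIntegral.continuousOn_primitive_interval hBu
    rw [hIccU] at h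
    exact (continuousOn_const.add h).congr (fun t ht => hb t ht)
  set p : ℝ → ℝ := fun s => max 0 (min s T) with hp_def
  have hp : Continuous p := continuous_const.max (continuous_id.min continuous_const)
  have hpmem : ∀ s, p s ∈ Icc (0:ℝ) T :=
    fun s => ⟨le_max_left _ _, max_le hT (min_le_right _ _)⟩
  have hpid : ∀ s ∈ Icc (0:ℝ) T, p s = s := by
    intro s hs
    simp only [hp_def]
    rw [min_eq_left hs.2, max_eq_right hs.1]
  set r : ℝ → ℝ := fun s => |a (p s)| + |b (p s)| with hr_def
  have hrC : Continuous r :=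
    ((haC.comp_continuous hp hpmem).abs).add ((hbC.comp_continuous hp hpmem).abs)
  have hr0 : ∀ s, 0 ≤ r s := fun s => add_nonneg (abs_nonneg _) (abs_nonneg _)
  have hre : ∀ s ∈ Icc (0:ℝ) T, r s = |a s| + |b s| := by
    intro s hs; simp only [hr_def, hpid s hs]
  have hAii : ∀ {s t : ℝ}, s ∈ Icc (0:ℝ) T → t ∈ Icc (0:ℝ) T → IntervalIntegrable A volume s t :=
    fun hs ht => (hAint.mono_set (uIcc_subset_Icc hs ht)).intervalIntegrable
  have hBii : ∀ {s t : ℝ}, s ∈ Icc (0:ℝ) T → t ∈ Icc (0:ℝ) T → IntervalIntegrable B volume s t :=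
    fun hs ht => (hBint.mono_set (uIcc_subset_Icc hs ht)).intervalIntegrable
  have haDiff : ∀ t ∈ Icc (0:ℝ) T, a t = ∫ s in t0..t, A s := by
    intro t ht
    have h1 := ha t ht
    have h2 := ha t0 ht0
    have h3 := intervalIntegral.integral_interval_sub_left (hAii zmem ht) (hAii zmem ht0)
    rw [ha0] at h2
    linarith
  have hbDiff : ∀ t ∈ Icc (0:ℝ) T, b t = ∫ s in t0..t, B s := by
    intro t ht
    have h1 := hb t ht
    have h2 := hb t0 ht0
    have h3 := intervalIntegral.integral_interval_sub_left (hBii zmem ht) (hBii zmem ht0)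
    rw [hb0] at h2
    linarith
  -- pointwise a.e. bounds in terms of r
  have hboundr : ∀ {s t : ℝ}, s ∈ Icc (0:ℝ) T → t ∈ Icc (0:ℝ) T → s ≤ t →
      (∀ᵐ σ ∂(volume.restrict (Icc s t)), |A σ| ≤ K * r σ ∧ |B σ| ≤ K * r σ) := by
    intro s t hs ht _
    have hsub : Icc s t ⊆ Icc (0:ℝ) T := Icc_subset_Icc hs.1 ht.2
    filter_upwards [ae_restrict_of_ae_restrict_of_subset hsub hbound,
      ae_restrict_mem measurableSet_Icc] with σ h1 h2
    rw [hre σ (hsub h2)]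
    exact h1
  have hKrii : ∀ (s t : ℝ), IntervalIntegrable (fun σ => K * r σ) volume s t :=
    fun s t => (continuous_const.mul hrC).intervalIntegrable s t
  -- forward bound
  have habs : ∀ {s t : ℝ} (g : ℝ → ℝ), s ∈ Icc (0:ℝ) T → t ∈ Icc (0:ℝ) T → s ≤ t →
      IntervalIntegrable g volume s t →
      (∀ᵐ σ ∂(volume.restrict (Icc s t)), |g σ| ≤ K * r σ) →
      |∫ σ in s..t, g σ| ≤ ∫ σ in s..t, K * r σ := by
    intro s t g hs ht hst hgi hgb
    refine le_trans (intervalIntegral.abs_integral_le_integral_abs hst) ?_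
    exact intervalIntegral.integral_mono_ae_restrict hst hgi.abs (hKrii s t) hgb
  have hsum : ∀ {s t : ℝ}, s ≤ t →
      (∫ σ in s..t, K * r σ) + (∫ σ in s..t, K * r σ) = ∫ σ in s..t, (2*K) * r σ := by
    intro s t _
    rw [← intervalIntegral.integral_add (hKrii s t) (hKrii s t)]
    apply intervalIntegral.integral_congr
    intro σ _
    ring
  have hFor : ∀ v ∈ Icc (0:ℝ) T, t0 ≤ v → r v ≤ ∫ σ in t0..v, (2*K) * r σ := by
    intro v hv htv
    have hbnd := hboundr ht0 hv htv
    have hA1 : |a v| ≤ ∫ σ in t0..v, K * r σ := by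
      rw [haDiff v hv]
      exact habs A ht0 hv htv (hAii ht0 hv) (by filter_upwards [hbnd] with σ h using h.1)
    have hB1 : |b v| ≤ ∫ σ in t0..v, K * r σ := by
      rw [hbDiff v hv]
      exact habs B ht0 hv htv (hBii ht0 hv) (by filter_upwards [hbnd] with σ h using h.2)
    rw [hre v hv, ← hsum htv]
    linarith
  have hBack : ∀ v ∈ Icc (0:ℝ) T, v ≤ t0 → r v ≤ ∫ σ in v..t0, (2*K) * r σ := by
    intro v hv hvt
    have hbnd := hboundr hv ht0 hvt
    have hA1 : |a v| ≤ ∫ σ in v..t0, K * r σ := by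
      have e : a v = -∫ σ in v..t0, A σ := by
        rw [haDiff v hv, intervalIntegral.integral_symm]
      rw [e, abs_neg]
      exact habs A hv ht0 hvt (hAii hv ht0) (by filter_upwards [hbnd] with σ h using h.1)
    have hB1 : |b v| ≤ ∫ σ in v..t0, K * r σ := by
      have e : b v = -∫ σ in v..t0, B σ := by
        rw [hbDiff v hv, intervalIntegral.integral_symm]
      rw [e, abs_neg]
      exact habs B hv ht0 hvt (hBii hv ht0) (by filter_upwards [hbnd] with σ h using h.2)
    rw [hre v hv, ← hsum hvt]
    linarith
  have h2K : (0:ℝ) ≤ 2*K := by linarith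
  -- Gronwall forward
  have hrzero_for : ∀ v ∈ Icc (0:ℝ) T, t0 ≤ v → r v = 0 := by
    intro v hv htv
    have hmain := gronwall_zero (r := fun s => r (t0 + s)) (t1 := T - t0) h2K
      (hrC.comp (continuous_const.add continuous_id)) (fun s => hr0 _) ?_ (v - t0)
      ⟨by linarith, by linarith [hv.2]⟩
    · simpa using hmain
    · intro s hs
      have hts : t0 + s ∈ Icc (0:ℝ) T := ⟨by linarith [ht0.1, hs.1], by linarith [hs.2]⟩
      have h1 := hFor (t0 + s) hts (by linarith [hs.1])
      have h2 : (∫ σ in (0:ℝ)..s, (2*K) * r (t0 + σ)) = ∫ x in t0..(t0+s), (2*K) * r x := by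
        have := intervalIntegral.integral_comp_add_left (a := (0:ℝ)) (b := s)
          (fun x => (2*K) * r x) t0
        simpa using this
      calc r (t0 + s) ≤ ∫ x in t0..(t0+s), (2*K) * r x := h1
        _ = _ := h2.symm
  -- Gronwall backward
  have hrzero_back : ∀ v ∈ Icc (0:ℝ) T, v ≤ t0 → r v = 0 := by
    intro v hv hvt
    have hmain := gronwall_zero (r := fun s => r (t0 - s)) (t1 := t0) h2K
      (hrC.comp (continuous_const.sub continuous_id)) (fun s => hr0 _) ?_ (t0 - v)
      ⟨by linarith, by linarith [hv.1]⟩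
    · simpa using hmain
    · intro s hs
      have hts : t0 - s ∈ Icc (0:ℝ) T := ⟨by linarith [hs.2], by linarith [hs.1, ht0.2]⟩
      have h1 := hBack (t0 - s) hts (by linarith [hs.1])
      have h2 : (∫ σ in (0:ℝ)..s, (2*K) * r (t0 - σ)) = ∫ x in (t0-s)..t0, (2*K) * r x := by
        have := intervalIntegral.integral_comp_sub_left (a := (0:ℝ)) (b := s)
          (fun x => (2*K) * r x) t0
        simpa using this
      calc r (t0 - s) ≤ ∫ x in (t0-s)..t0, (2*K) * r x := h1
        _ = _ := h2.symm
  intro t ht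
  have hrt : r t = 0 := by
    rcases le_total t t0 with h | h
    · exact hrzero_back t ht h
    · exact hrzero_for t ht h
  rw [hre t ht] at hrt
  constructor
  · have := abs_nonneg (a t); have := abs_nonneg (b t)
    have : |a t| = 0 := by linarith
    exact abs_eq_zero.mp this
  · have := abs_nonneg (a t); have := abs_nonneg (b t)
    have : |b t| = 0 := by linarith
    exact abs_eq_zero.mp this

lemma hasDerivWithinAt_of_integral_eq {T : ℝ} {f F : ℝ → ℝ}
    (hFint : IntegrableOn F (Icc (0:ℝ) T)) (hFcont : ContinuousOn F (Icc (0:ℝ) T))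
    (hf : ∀ t ∈ Icc (0:ℝ) T, f t = f 0 + ∫ s in (0:ℝ)..t, F s)
    {t0 : ℝ} (ht0 : t0 ∈ Icc (0:ℝ) T) :
    HasDerivWithinAt f (F t0) (Icc (0:ℝ) T) t0 := by
  haveI : Fact (t0 ∈ Icc (0:ℝ) T) := ⟨ht0⟩
  have hT : (0:ℝ) ≤ T := le_trans ht0.1 ht0.2
  have hii : IntervalIntegrable F volume 0 t0 :=
    (hFint.mono_set (uIcc_subset_Icc ⟨le_refl _, hT⟩ ht0)).intervalIntegrable
  have hP : HasDerivWithinAt (fun t => ∫ s in (0:ℝ)..t, F s) (F t0) (Icc (0:ℝ) T) t0 :=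
    intervalIntegral.integral_hasDerivWithinAt_right hii
      (hFcont.stronglyMeasurableAtFilter_nhdsWithin measurableSet_Icc t0)
      (hFcont t0 ht0)
  have hP' : HasDerivWithinAt (fun t => f 0 + ∫ s in (0:ℝ)..t, F s) (F t0) (Icc (0:ℝ) T) t0 :=
    hP.const_add (f 0)
  exact hP'.congr (fun t ht => (hf t ht)) (hf t0 ht0)

lemma deriv_eq_zero_of_accPt {f : ℝ → ℝ} {d t0 : ℝ} {U S : Set ℝ}
    (hSU : S ⊆ U) (hacc : AccPt t0 (𝓟 S)) (hd : HasDerivWithinAt f d U t0)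
    (hf : ∀ s ∈ S, f s = f t0) : d = 0 := by
  rw [hasDerivWithinAt_iff_tendsto_slope] at hd
  have hne : (𝓝[S \ {t0}] t0).NeBot := by
    rw [accPt_principal_iff_clusterPt] at hacc
    exact hacc
  have h1 : Tendsto (slope f t0) (𝓝[S \ {t0}] t0) (𝓝 d) :=
    hd.mono_left (nhdsWithin_mono _ (diff_subset_diff_left hSU))
  have h2 : Tendsto (slope f t0) (𝓝[S \ {t0}] t0) (𝓝 0) := by
    have hev : ∀ᶠ s in 𝓝[S \ {t0}] t0, slope f t0 s = 0 := by
      filter_upwards [self_mem_nhdsWithin] with s hs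
      rw [slope_def_field, hf s hs.1, sub_self, div_eq_mul_inv, zero_mul]
    exact tendsto_const_nhds.congr' (hev.mono fun s h => h.symm)
  exact tendsto_nhds_unique h1 h2

lemma exists_competitor {umin umax T : ℝ} (humin : umin < 0) (humax : 0 < umax)
    (hT : 0 < T) :
    ∃ x' y' u' : ℝ → ℝ, OCConstrainedAdmissible umin umax T x' y' u' ∧ OCcost T u' < 0 := by
  set ω : ℝ := 2 * π / T with hω_def
  have hω : 0 < ω := by positivity
  set ε : ℝ := min (-umin) umax with hε_def
  have hε : 0 < ε := lt_min (by linarith) humax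
  set δ : ℝ := min (1/4) (ε / (2*ω^2 + 2)) with hδ_def
  have hδ : 0 < δ := lt_min (by norm_num) (by positivity)
  have hδ4 : δ ≤ 1/4 := min_le_left _ _
  have hδε : 2*δ*ω^2 ≤ ε := by
    have h1 : δ ≤ ε / (2*ω^2 + 2) := min_le_right _ _
    have h2 : δ * (2*ω^2 + 2) ≤ ε := by
      rw [← le_div_iff₀ (by positivity)]
      exact h1
    nlinarith [sq_nonneg ω, hδ]
  set x' : ℝ → ℝ := fun t => 1 - δ * (1 - Real.cos (ω * t)) with hx'_def
  set y' : ℝ → ℝ := fun t => -(δ * ω) * Real.sin (ω * t) with hy'_def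
  set u' : ℝ → ℝ := fun t => δ * ω^2 * Real.cos (ω * t) / x' t with hu'_def
  have hx'lb : ∀ t, (1:ℝ)/2 ≤ x' t := by
    intro t
    have h1 : -1 ≤ Real.cos (ω * t) := Real.neg_one_le_cos _
    simp only [hx'_def]
    nlinarith
  have hx'pos : ∀ t, 0 < x' t := fun t => lt_of_lt_of_le (by norm_num) (hx'lb t)
  have hx'le : ∀ t, x' t ≤ 1 := by
    intro t
    have h1 : Real.cos (ω * t) ≤ 1 := Real.cos_le_one _
    simp only [hx'_def]
    nlinarith
  have hux : ∀ t, u' t * x' t = δ * ω^2 * Real.cos (ω * t) :=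
    fun t => div_mul_cancel₀ _ (ne_of_gt (hx'pos t))
  have hx'c : Continuous x' := by
    apply continuous_const.sub (continuous_const.mul _)
    exact continuous_const.sub (Real.continuous_cos.comp (continuous_const.mul continuous_id))
  have hy'c : Continuous y' :=
    continuous_const.mul (Real.continuous_sin.comp (continuous_const.mul continuous_id))
  have hu'c : Continuous u' := by
    apply Continuous.div
    · exact continuous_const.mul (Real.continuous_cos.comp (continuous_const.mul continuous_id))
    · exact hx'c
    · exact fun t => ne_of_gt (hx'pos t)
  have hx'd : ∀ t, HasDerivAt x' (y' t) t := by
    intro t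
    have h := ((((hasDerivAt_id t).const_mul ω).cos.const_sub 1).const_mul δ).const_sub 1
    refine h.congr_deriv ?_
    simp only [hy'_def, id_eq]
    ring
  have hy'd : ∀ t, HasDerivAt y' (-(u' t * x' t)) t := by
    intro t
    have h := (((hasDerivAt_id t).const_mul ω).sin).const_mul (-(δ * ω))
    refine h.congr_deriv ?_
    rw [hux t]
    simp only [id_eq]
    ring
  have hωT : ω * T = 2 * π := by
    rw [hω_def]
    field_simp
  have hx'0 : x' 0 = 1 := by simp [hx'_def]
  have hx'T : x' T = 1 := by
    simp only [hx'_def, hωT]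
    rw [Real.cos_two_pi]
    ring
  have hy'0 : y' 0 = 0 := by simp [hy'_def]
  have hy'T : y' T = 0 := by
    simp only [hy'_def, hωT]
    rw [Real.sin_two_pi]
    ring
  have hub : ∀ t, |u' t| ≤ 2*δ*ω^2 := by
    intro t
    have h0 : |u' t| = δ * ω^2 * |Real.cos (ω*t)| / x' t := by
      rw [hu'_def]
      rw [abs_div, abs_of_pos (hx'pos t), abs_mul, abs_of_pos (by positivity : (0:ℝ) < δ * ω^2)]
    rw [h0]
    have h1 : δ * ω^2 * |Real.cos (ω*t)| ≤ δ * ω^2 :=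
      mul_le_of_le_one_right (by positivity) (abs_cos_le_one _)
    calc δ * ω^2 * |Real.cos (ω*t)| / x' t ≤ δ * ω^2 / (1/2) :=
          div_le_div₀ (by positivity) h1 (by norm_num) (hx'lb t)
      _ = 2*δ*ω^2 := by ring
  have hbounds : ∀ t, umin ≤ u' t ∧ u' t ≤ umax := by
    intro t
    have h1 := hub t
    have h2 : ε ≤ -umin := min_le_left _ _
    have h3 : ε ≤ umax := min_le_right _ _
    have h4 := abs_le.1 h1
    constructor
    · linarith [h4.1]
    · linarith [h4.2]
  -- the integral equations
  have hxeq : ∀ t ∈ Icc (0:ℝ) T, x' t = x' 0 + ∫ s in (0:ℝ)..t, y' s := by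
    intro t _
    have := intervalIntegral.integral_eq_sub_of_hasDerivAt
      (fun s _ => hx'd s) (hy'c.intervalIntegrable 0 t)
    linarith
  have hyeq : ∀ t ∈ Icc (0:ℝ) T, y' t = y' 0 - ∫ s in (0:ℝ)..t, u' s * x' s := by
    intro t _
    have h := intervalIntegral.integral_eq_sub_of_hasDerivAt
      (fun s _ => hy'd s) (((hu'c.mul hx'c).neg).intervalIntegrable 0 t)
    rw [intervalIntegral.integral_neg] at h
    have : (∫ s in (0:ℝ)..t, u' s * x' s) = -(y' t - y' 0) := by linarith
    rw [this]
    ring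
  -- cost is negative
  set F : ℝ → ℝ := fun t => y' t / x' t with hF_def
  set G : ℝ → ℝ := fun t => (-(u' t * x' t) * x' t - y' t * y' t) / (x' t)^2 with hG_def
  have hFd : ∀ t, HasDerivAt F (G t) t := fun t => (hy'd t).div (hx'd t) (ne_of_gt (hx'pos t))
  have hGc : Continuous G := by
    apply Continuous.div
    · exact ((hu'c.mul hx'c).neg.mul hx'c).sub (hy'c.mul hy'c)
    · exact hx'c.pow 2
    · exact fun t => pow_ne_zero 2 (ne_of_gt (hx'pos t))
  have hFc : Continuous F := hy'c.div hx'c (fun t => ne_of_gt (hx'pos t))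
  have hID : ∀ t, u' t = -G t - (F t)^2 := by
    intro t
    have hx0 : x' t ≠ 0 := ne_of_gt (hx'pos t)
    simp only [hG_def, hF_def, hu'_def]
    field_simp
    ring
  have hGint : ∫ t in (0:ℝ)..T, G t = 0 := by
    have := intervalIntegral.integral_eq_sub_of_hasDerivAt
      (fun s _ => hFd s) (hGc.intervalIntegrable 0 T)
    rw [this, hF_def]
    simp [hy'T, hy'0]
  have hF2pos : 0 < ∫ t in (0:ℝ)..T, (F t)^2 := by
    have hsplit : (∫ t in (0:ℝ)..(T/2), (F t)^2) + (∫ t in (T/2)..T, (F t)^2)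
        = ∫ t in (0:ℝ)..T, (F t)^2 :=
      intervalIntegral.integral_add_adjacent_intervals
        ((hFc.pow 2).intervalIntegrable _ _) ((hFc.pow 2).intervalIntegrable _ _)
    have h1 : 0 < ∫ t in (0:ℝ)..(T/2), (F t)^2 := by
      refine intervalIntegral.intervalIntegral_pos_of_pos_on
        ((hFc.pow 2).intervalIntegrable _ _) (fun t ht => ?_) (by linarith)
      have hsin : 0 < Real.sin (ω * t) := by
        apply Real.sin_pos_of_pos_of_lt_pi (mul_pos hω ht.1)
        have : ω * t < ω * (T/2) := by
          apply mul_lt_mul_of_pos_left ht.2 hω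
        have h2 : ω * (T/2) = π := by
          rw [hω_def]; field_simp
        linarith
      have hy'neg : y' t < 0 := by
        simp only [hy'_def]
        nlinarith [mul_pos (mul_pos hδ hω) hsin]
      have hFne : F t ≠ 0 := div_ne_zero (ne_of_lt hy'neg) (ne_of_gt (hx'pos t))
      exact lt_of_le_of_ne (sq_nonneg _) (Ne.symm (pow_ne_zero 2 hFne))
    have h2 : 0 ≤ ∫ t in (T/2)..T, (F t)^2 :=
      intervalIntegral.integral_nonneg (by linarith) (fun t _ => sq_nonneg _)
    linarith
  have hcost : OCcost T u' < 0 := by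
    have hinteq : (∫ t in (0:ℝ)..T, u' t) = ∫ t in (0:ℝ)..T, (-G t - (F t)^2) := by
      apply intervalIntegral.integral_congr
      intro t _
      exact hID t
    have hsub : (∫ t in (0:ℝ)..T, (-G t - (F t)^2))
        = (∫ t in (0:ℝ)..T, -G t) - ∫ t in (0:ℝ)..T, (F t)^2 :=
      intervalIntegral.integral_sub (hGc.neg.intervalIntegrable _ _)
        ((hFc.pow 2).intervalIntegrable _ _)
    rw [OCcost, hinteq, hsub, intervalIntegral.integral_neg, hGint]
    linarith
  refine ⟨x', y', u', ⟨⟨hu'c.measurable, Filter.Eventually.of_forall (fun t => hbounds t),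
    hxeq, hyeq⟩, hx'0, hx'T, hy'0, hy'T, fun t _ => hx'le t⟩, hcost⟩

/-- For a constrained-optimal triple with extremal lift `(p_x, p_y, p⁰)`, the set where
the switching function `−p_y·x + p⁰` vanishes has Lebesgue measure zero; consequently the
optimal control is bang-bang almost everywhere. -/
theorem switching_set_null_and_bangbang (umin umax : ℝ)
    (humin : umin < 0) (humax : 0 < umax)
    (T : ℝ) (hT : 0 < T) (x y u px py : ℝ → ℝ) (p0 : ℝ)
    (hopt : OCConstrainedOptimal umin umax T x y u)
    (hlift : OCExtremalLift umin umax T x y u px py p0) :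
    volume {t : ℝ | t ∈ Icc (0:ℝ) T ∧ py t * x t = p0} = 0 ∧
    (∀ᵐ t ∂(volume.restrict (Icc (0:ℝ) T)),
      (-py t * x t + p0 < 0 → u t = umin) ∧ (0 < -py t * x t + p0 → u t = umax)) := by
  obtain ⟨⟨⟨hu_meas, hu_bdd, hx_eq, hy_eq⟩, hx0, hxT, hy0, hyT, hx_le⟩, hopt_min⟩ := hopt
  obtain ⟨hp0, hpx_eq, hpy_eq, hnontriv, hpy_per, hmax, c, hc0, hham⟩ := hlift
  have hT0 : (0:ℝ) ≤ T := hT.le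
  have huminmax : umin ≤ umax := by linarith
  set K : ℝ := max (-umin) umax with hK_def
  have hK0 : (0:ℝ) ≤ K := le_trans humax.le (le_max_right _ _)
  set K' : ℝ := max K 1 with hK'_def
  have hK'1 : (1:ℝ) ≤ K' := le_max_right _ _
  have hK'K : K ≤ K' := le_max_left _ _
  have hK'0 : (0:ℝ) ≤ K' := le_trans zero_le_one hK'1
  have huK : ∀ᵐ s ∂(volume.restrict (Icc (0:ℝ) T)), |u s| ≤ K := by
    filter_upwards [hu_bdd] with s hs
    rw [abs_le]
    constructor
    · have h1 : -umin ≤ K := le_max_left _ _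
      linarith [hs.1]
    · exact le_trans hs.2 (le_max_right _ _)
  -- regularity of the state
  have hy_eq' : ∀ t ∈ Icc (0:ℝ) T, y t = y 0 + ∫ s in (0:ℝ)..t, (fun s => -u s) s * x s := by
    intro t ht
    have h : (∫ s in (0:ℝ)..t, (fun s => -u s) s * x s) = -∫ s in (0:ℝ)..t, u s * x s := by
      simp only [neg_mul]
      exact intervalIntegral.integral_neg
    rw [hy_eq t ht, h]
    ring
  obtain ⟨hxC, hyC, hyInt, hnuxInt⟩ := boot hT0 hK0 hu_meas.neg
    (by filter_upwards [huK] with s hs; rwa [Pi.neg_apply, abs_neg]) hx_eq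
    (by intro t ht; exact hy_eq' t ht)
  have huxInt : IntegrableOn (fun s => u s * x s) (Icc (0:ℝ) T) := by
    exact hnuxInt.neg.congr
      (Filter.Eventually.of_forall (fun s => by simp only [Pi.neg_apply]; ring))
  -- regularity of the adjoint
  have hpy_eq' : ∀ t ∈ Icc (0:ℝ) T, py t = py 0 + ∫ s in (0:ℝ)..t, (fun s => -px s) s := by
    intro t ht
    have h : (∫ s in (0:ℝ)..t, (fun s => -px s) s) = -∫ s in (0:ℝ)..t, px s := by
      exact intervalIntegral.integral_neg
    rw [hpy_eq t ht, h]
    ring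
  have hnpx_eq : ∀ t ∈ Icc (0:ℝ) T,
      (fun s => -px s) t = (fun s => -px s) 0 + ∫ s in (0:ℝ)..t, (fun s => -u s) s * py s := by
    intro t ht
    have h : (∫ s in (0:ℝ)..t, (fun s => -u s) s * py s) = -∫ s in (0:ℝ)..t, u s * py s := by
      simp only [neg_mul]
      exact intervalIntegral.integral_neg
    simp only [h, hpx_eq t ht]
    ring
  obtain ⟨hpyC, hnpxC, hnpxInt, hnupyInt⟩ := boot hT0 hK0 hu_meas.neg
    (by filter_upwards [huK] with s hs; rwa [Pi.neg_apply, abs_neg]) hpy_eq' hnpx_eq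
  have hpxC : ContinuousOn px (Icc (0:ℝ) T) := by
    have := hnpxC.neg
    exact this.congr (fun t _ => by simp)
  have hpxInt : IntegrableOn px (Icc (0:ℝ) T) := by
    exact hnpxInt.neg.congr
      (Filter.Eventually.of_forall (fun s => by simp only [Pi.neg_apply]; ring))
  have hupyInt : IntegrableOn (fun s => u s * py s) (Icc (0:ℝ) T) := by
    exact hnupyInt.neg.congr
      (Filter.Eventually.of_forall (fun s => by simp only [Pi.neg_apply]; ring))
  -- interval integrability on subintervals
  have hmono : ∀ {t : ℝ}, t ∈ Icc (0:ℝ) T → uIcc (0:ℝ) t ⊆ Icc (0:ℝ) T := by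
    intro t ht
    rw [uIcc_of_le ht.1]
    exact Icc_subset_Icc le_rfl ht.2
  -- part 2 : bang-bang
  have hbang : ∀ᵐ t ∂(volume.restrict (Icc (0:ℝ) T)),
      (-py t * x t + p0 < 0 → u t = umin) ∧ (0 < -py t * x t + p0 → u t = umax) := by
    filter_upwards [hmax] with t htm
    constructor
    · intro hφ
      rw [sSup_mul_left umin umax _ huminmax,
        max_eq_left (by nlinarith : (-py t * x t + p0) * umax ≤ (-py t * x t + p0) * umin)] at htm
      exact mul_left_cancel₀ (ne_of_lt hφ) htm
    · intro hφ
      rw [sSup_mul_left umin umax _ huminmax,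
        max_eq_right (by nlinarith : (-py t * x t + p0) * umin ≤ (-py t * x t + p0) * umax)] at htm
      exact mul_left_cancel₀ (ne_of_gt hφ) htm
  refine ⟨?_, hbang⟩
  by_contra hIvol
  set I : Set ℝ := {t : ℝ | t ∈ Icc (0:ℝ) T ∧ py t * x t = p0} with hI_def
  have hIclosed : IsClosed I := by
    have he : I = Icc (0:ℝ) T ∩ (fun t => py t * x t) ⁻¹' {p0} := by
      ext t
      simp [hI_def]
    rw [he]
    exact (hpyC.mul hxC).preimage_isClosed_of_isClosed isClosed_Icc isClosed_singleton
  have hIunc : ¬ I.Countable := fun hc => hIvol (hc.measure_zero _)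
  obtain ⟨D, hDperf, hDne, hDI⟩ :=
    exists_perfect_nonempty_of_isClosed_of_not_countable hIclosed hIunc
  have hDIcc : D ⊆ Icc (0:ℝ) T := fun t ht => (hDI ht).1
  -- derivatives
  have hxD : ∀ t0 ∈ Icc (0:ℝ) T, HasDerivWithinAt x (y t0) (Icc (0:ℝ) T) t0 :=
    fun t0 ht0 => hasDerivWithinAt_of_integral_eq hyInt hyC hx_eq ht0
  have hpyD : ∀ t0 ∈ Icc (0:ℝ) T, HasDerivWithinAt py (-px t0) (Icc (0:ℝ) T) t0 :=
    fun t0 ht0 => hasDerivWithinAt_of_integral_eq hnpxInt hnpxC hpy_eq' ht0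
  have hgzero : ∀ t0 ∈ D, -px t0 * x t0 + py t0 * y t0 = 0 := by
    intro t0 ht0
    have ht0Icc := hDIcc ht0
    have hgd : HasDerivWithinAt (fun t => py t * x t)
        (-px t0 * x t0 + py t0 * y t0) (Icc (0:ℝ) T) t0 :=
      (hpyD t0 ht0Icc).mul (hxD t0 ht0Icc)
    exact deriv_eq_zero_of_accPt hDIcc (hDperf.acc t0 ht0) hgd
      (fun s hs => by show py s * x s = py t0 * x t0; rw [(hDI hs).2, (hDI ht0).2])
  -- Hamiltonian on I
  have hham' : ∀ t ∈ I, px t * y t = c := by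
    intro t ht
    have h1 := hham t ht.1
    have hφ : -py t * x t + p0 = 0 := by
      have := ht.2
      linarith
    rw [hφ] at h1
    have himg : (fun v : ℝ => v * (0:ℝ)) '' Icc umin umax = {0} := by
      rw [show (fun v : ℝ => v * (0:ℝ)) = fun _ => (0:ℝ) from funext fun v => mul_zero v]
      exact Set.Nonempty.image_const (nonempty_Icc.2 huminmax) 0
    rw [himg, csSup_singleton] at h1
    linarith
  have hMnn : ∀ t ∈ Icc (0:ℝ) T,
      0 ≤ sSup ((fun v => v * (-py t * x t + p0)) '' Icc umin umax) := by
    intro t ht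
    rw [sSup_mul_right umin umax _ huminmax]
    rcases le_total 0 (-py t * x t + p0) with h | h
    · exact le_max_of_le_right (mul_nonneg humax.le h)
    · exact le_max_of_le_left (by nlinarith [mul_nonneg (neg_nonneg.2 humin.le) (neg_nonneg.2 h)])
  have hpxyle : ∀ t ∈ Icc (0:ℝ) T, px t * y t ≤ c := by
    intro t ht
    have h1 := hham t ht
    have h2 := hMnn t ht
    linarith
  -- uniqueness instances
  have hstate_ne : ∀ t1 ∈ Icc (0:ℝ) T, ¬ (x t1 = 0 ∧ y t1 = 0) := by
    rintro t1 ht1 ⟨hx1, hy1⟩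
    have hyeqB : ∀ t ∈ Icc (0:ℝ) T, y t = y 0 + ∫ s in (0:ℝ)..t, -(u s * x s) := by
      intro t ht
      rw [hy_eq t ht, intervalIntegral.integral_neg]
      ring
    have hu2 := ode_unique (a := x) (b := y) (A := y) (B := fun s => -(u s * x s))
      (K := K') hK'0 hyInt huxInt.neg hx_eq hyeqB ?_ ht1 hx1 hy1
    · have h0 := (hu2 0 ⟨le_refl _, hT0⟩).1
      rw [hx0] at h0
      exact one_ne_zero h0
    · filter_upwards [huK] with s hs
      constructor
      · linarith [abs_nonneg (x s), abs_nonneg (y s),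
          mul_nonneg (by linarith : (0:ℝ) ≤ K' - 1) (abs_nonneg (y s)),
          mul_nonneg hK'0 (abs_nonneg (x s))]
      · rw [abs_neg, abs_mul]
        linarith [mul_le_mul_of_nonneg_right hs (abs_nonneg (x s)),
          mul_nonneg (by linarith : (0:ℝ) ≤ K' - K) (abs_nonneg (x s)),
          mul_nonneg hK'0 (abs_nonneg (y s))]
  have hadjT : ∀ t1 ∈ Icc (0:ℝ) T, px t1 = 0 → py t1 = 0 → (px T = 0 ∧ py T = 0) := by
    intro t1 ht1 h1 h2
    have hu2 := ode_unique (a := px) (b := py) (A := fun s => u s * py s)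
      (B := fun s => -(px s)) (K := K') hK'0 hupyInt hpxInt.neg hpx_eq
      (by intro t ht
          rw [hpy_eq t ht, intervalIntegral.integral_neg]
          ring) ?_ ht1 h1 h2
    · exact hu2 T (right_mem_Icc.2 hT0)
    · filter_upwards [huK] with s hs
      constructor
      · rw [abs_mul]
        linarith [mul_le_mul_of_nonneg_right hs (abs_nonneg (py s)),
          mul_nonneg (by linarith : (0:ℝ) ≤ K' - K) (abs_nonneg (py s)),
          mul_nonneg hK'0 (abs_nonneg (px s))]
      · rw [abs_neg]
        linarith [abs_nonneg (px s), abs_nonneg (py s),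
          mul_nonneg (by linarith : (0:ℝ) ≤ K' - 1) (abs_nonneg (px s)),
          mul_nonneg hK'0 (abs_nonneg (py s))]
  rcases eq_or_lt_of_le hp0 with hp0eq | hp0lt
  · -- abnormal case p0 = 0
    by_cases hDx : ∃ t0 ∈ D, x t0 ≠ 0
    · obtain ⟨t0, ht0D, hxne⟩ := hDx
      have ht0I := hDI ht0D
      have hpy0 : py t0 = 0 := by
        have h1 : py t0 * x t0 = 0 := by rw [ht0I.2, ← hp0eq]
        exact (mul_eq_zero.1 h1).resolve_right hxne
      have hpx0 : px t0 = 0 := by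
        have hg := hgzero t0 ht0D
        rw [hpy0, zero_mul, add_zero] at hg
        have h1 : px t0 * x t0 = 0 := by linarith
        exact (mul_eq_zero.1 h1).resolve_right hxne
      obtain ⟨hpxT, hpyT⟩ := hadjT t0 (hDIcc ht0D) hpx0 hpy0
      apply hnontriv
      rw [hpxT, hpyT, ← hp0eq]
      
    · push_neg at hDx
      obtain ⟨t0, ht0D⟩ := hDne
      have hx0' : x t0 = 0 := hDx t0 ht0D
      have hy0' : y t0 = 0 := by
        apply deriv_eq_zero_of_accPt hDIcc (hDperf.acc t0 ht0D) (hxD t0 (hDIcc ht0D))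
        intro s hs
        rw [hDx s hs, hx0']
      exact hstate_ne t0 (hDIcc ht0D) ⟨hx0', hy0'⟩
  · -- normal case p0 < 0
    obtain ⟨t0, ht0D⟩ := hDne
    have ht0I := hDI ht0D
    have ht0Icc := hDIcc ht0D
    have hprod : py t0 * x t0 = p0 := ht0I.2
    have hxne : x t0 ≠ 0 := by
      intro h
      rw [h, mul_zero] at hprod
      exact (ne_of_lt hp0lt) hprod.symm
    have hpyne : py t0 ≠ 0 := by
      intro h
      rw [h, zero_mul] at hprod
      exact (ne_of_lt hp0lt) hprod.symm
    have hg := hgzero t0 ht0D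
    have hhamt : px t0 * y t0 = c := hham' t0 ht0I
    have h1 : px t0 * x t0 = py t0 * y t0 := by linarith
    have hsq : (px t0 * x t0)^2 = p0 * c := by
      calc (px t0 * x t0)^2 = (px t0 * x t0) * (py t0 * y t0) := by rw [← h1]; ring
        _ = (py t0 * x t0) * (px t0 * y t0) := by ring
        _ = p0 * c := by rw [hprod, hhamt]
    have hp0c : p0 * c ≤ 0 := mul_nonpos_iff.2 (Or.inr ⟨hp0lt.le, hc0⟩)
    have hpxx0 : px t0 * x t0 = 0 := by
      nlinarith [sq_nonneg (px t0 * x t0)]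
    have hceq : c = 0 := by
      have h2 : p0 * c = 0 := by rw [← hsq, hpxx0]; ring
      rcases mul_eq_zero.1 h2 with h | h
      · exact absurd h (ne_of_lt hp0lt)
      · exact h
    have hpx0 : px t0 = 0 := (mul_eq_zero.1 hpxx0).resolve_right hxne
    have hy0' : y t0 = 0 := by
      have h2 : py t0 * y t0 = 0 := by rw [← h1, hpxx0]
      exact (mul_eq_zero.1 h2).resolve_left hpyne
    set μ : ℝ := x t0 / py t0 with hμ_def
    have hμpy : μ * py t0 = x t0 := div_mul_cancel₀ _ hpyne
    have hμp0 : μ * p0 = x t0 ^ 2 := by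
      rw [← hprod, hμ_def,
        show x t0 / py t0 * (py t0 * x t0) = py t0 / py t0 * (x t0 * x t0) from by ring,
        div_self hpyne]
      ring
    have hx2pos : 0 < x t0 ^ 2 := by
      have h := pow_pos (abs_pos.2 hxne) 2
      rwa [sq_abs] at h
    have hμneg : μ < 0 := by
      by_contra h
      push_neg at h
      have h2 : μ * p0 ≤ 0 := mul_nonpos_iff.2 (Or.inl ⟨h, hp0lt.le⟩)
      linarith
    -- dependence (x, y) = μ (py, -px)
    have haeq : ∀ t ∈ Icc (0:ℝ) T,
        x t - μ * py t = (x 0 - μ * py 0) + ∫ s in (0:ℝ)..t, (y s + μ * px s) := by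
      intro t ht
      have hsub := hmono ht
      have hyii : IntervalIntegrable y volume 0 t := (hyInt.mono_set hsub).intervalIntegrable
      have hpxii : IntervalIntegrable px volume 0 t := (hpxInt.mono_set hsub).intervalIntegrable
      rw [intervalIntegral.integral_add hyii (hpxii.const_mul μ),
        intervalIntegral.integral_const_mul, hx_eq t ht, hpy_eq t ht]
      ring
    have hbeq : ∀ t ∈ Icc (0:ℝ) T,
        y t + μ * px t = (y 0 + μ * px 0) + ∫ s in (0:ℝ)..t, -(u s * (x s - μ * py s)) := by
      intro t ht
      have hsub := hmono ht
      have huxii : IntervalIntegrable (fun s => u s * x s) volume 0 t :=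
        (huxInt.mono_set hsub).intervalIntegrable
      have hupyii : IntervalIntegrable (fun s => u s * py s) volume 0 t :=
        (hupyInt.mono_set hsub).intervalIntegrable
      have he : (∫ s in (0:ℝ)..t, -(u s * (x s - μ * py s)))
          = -(∫ s in (0:ℝ)..t, u s * x s) + μ * ∫ s in (0:ℝ)..t, u s * py s := by
        rw [show (fun s => -(u s * (x s - μ * py s)))
            = fun s => -(u s * x s) + μ * (u s * py s) from funext fun s => by ring]
        have hne : IntervalIntegrable (fun s => -(u s * x s)) volume 0 t := huxii.neg
        rw [intervalIntegral.integral_add hne (hupyii.const_mul μ),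
          intervalIntegral.integral_neg, intervalIntegral.integral_const_mul]
      rw [he, hy_eq t ht, hpx_eq t ht]
      ring
    have hBint' : IntegrableOn (fun s => -(u s * (x s - μ * py s))) (Icc (0:ℝ) T) := by
      have h1 : IntegrableOn (fun s => -(u s * x s) + μ * (u s * py s)) (Icc (0:ℝ) T) :=
        Integrable.add
          (huxInt.neg.congr (Filter.Eventually.of_forall fun s => rfl))
          (hupyInt.const_mul μ)
      exact h1.congr (Filter.Eventually.of_forall fun s => by ring)
    have habound : ∀ᵐ s ∂(volume.restrict (Icc (0:ℝ) T)),
        |y s + μ * px s| ≤ K' * (|x s - μ * py s| + |y s + μ * px s|) ∧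
        |-(u s * (x s - μ * py s))| ≤ K' * (|x s - μ * py s| + |y s + μ * px s|) := by
      filter_upwards [huK] with s hs
      constructor
      · linarith [abs_nonneg (x s - μ * py s), abs_nonneg (y s + μ * px s),
          mul_nonneg (by linarith : (0:ℝ) ≤ K' - 1) (abs_nonneg (y s + μ * px s)),
          mul_nonneg hK'0 (abs_nonneg (x s - μ * py s))]
      · rw [abs_neg, abs_mul]
        linarith [mul_le_mul_of_nonneg_right hs (abs_nonneg (x s - μ * py s)),
          mul_nonneg (by linarith : (0:ℝ) ≤ K' - K) (abs_nonneg (x s - μ * py s)),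
          mul_nonneg hK'0 (abs_nonneg (y s + μ * px s))]
    have hdep := ode_unique (a := fun t => x t - μ * py t) (b := fun t => y t + μ * px t)
      (A := fun s => y s + μ * px s) (B := fun s => -(u s * (x s - μ * py s)))
      hK'0 (hyInt.add (hpxInt.const_mul μ)) hBint' haeq hbeq habound ht0Icc
      (by show x t0 - μ * py t0 = 0; rw [← hμpy]; ring)
      (by show y t0 + μ * px t0 = 0; rw [hy0', hpx0]; ring)
    have hpx_all : ∀ t ∈ Icc (0:ℝ) T, px t = 0 := by
      intro t ht
      have hle := hpxyle t ht
      rw [hceq] at hle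
      have h2' : y t + μ * px t = 0 := (hdep t ht).2
      have h2 : y t = -(μ * px t) := by linarith
      have h4 : px t * y t = -μ * px t ^ 2 := by rw [h2]; ring
      have h3 : -μ * px t ^ 2 ≤ 0 := by rw [← h4]; exact hle
      by_contra hne
      have h5 : 0 < px t ^ 2 := by positivity
      nlinarith [mul_pos (neg_pos.2 hμneg) h5]
    have hy_all : ∀ t ∈ Icc (0:ℝ) T, y t = 0 := by
      intro t ht
      have h2 : y t + μ * px t = 0 := (hdep t ht).2
      rw [hpx_all t ht, mul_zero, add_zero] at h2
      exact h2
    have hx_all : ∀ t ∈ Icc (0:ℝ) T, x t = 1 := by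
      intro t ht
      rw [hx_eq t ht, hx0]
      have hz : (∫ s in (0:ℝ)..t, y s) = ∫ s in (0:ℝ)..t, (0:ℝ) := by
        apply intervalIntegral.integral_congr
        intro s hs
        rw [uIcc_of_le ht.1] at hs
        exact hy_all s ⟨hs.1, le_trans hs.2 ht.2⟩
      rw [hz]
      simp
    have hcost0 : OCcost T u = 0 := by
      have h1 := hy_eq T (right_mem_Icc.2 hT0)
      rw [hy_all T (right_mem_Icc.2 hT0), hy0] at h1
      have h2 : (∫ s in (0:ℝ)..T, u s * x s) = 0 := by linarith
      have h3 : (∫ t in (0:ℝ)..T, u t) = ∫ s in (0:ℝ)..T, u s * x s := by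
        apply intervalIntegral.integral_congr
        intro s hs
        rw [uIcc_of_le hT0] at hs
        show u s = u s * x s
        rw [hx_all s hs, mul_one]
      rw [OCcost, h3, h2]
    obtain ⟨x2, y2, u2, hadm2, hcost2⟩ := exists_competitor humin humax hT
    have hcmp := hopt_min x2 y2 u2 hadm2
    rw [hcost0] at hcmp
    linarith

end HelperLemmas

end
end

section
/- Let t1 ∈ (0, t1*), T = T(t1), and M = u_max − u_min. Define ψ : [−T/2, T/2] → ℝ by ψ(t) = cos(ω_max·t) for |t| ≤ t1 and ψ(t) = cos(ω_max·t1)·cosh(ω_min·(|t| − t1)) − (ω_max/ω_min)·sin(ω_max·t1)·sinh(ω_min·(|t| − t1)) for t1 ≤ |t| ≤ T/2, and let V(t) = 0 if |t| ≤ t1 and V(t) = M if t1 < |t| ≤ T/2. Then ψ is of class C¹ on [−T/2, T/2], twice differentiable at every t ∈ (−T/2, T/2) with |t| ≠ t1, ψ(−T/2) = ψ(T/2), ψ′(−T/2) = ψ′(T/2) = 0, and −ψ″(t) + V(t)·ψ(t) = u_max·ψ(t) for every t ∈ (−T/2, T/2) with |t| ≠ t1; that is, ψ is a nontrivial periodic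 eigenfunction of the Schrödinger operator −d²/dt² + V with eigenvalue u_max. -/
open MeasureTheory Real Set Filter Topology

noncomputable section

set_option maxHeartbeats 1000000 in
/-- The explicit ground state `ψ` of the Schrödinger operator `−d²/dt² + V` with finite
potential well `V` of height `M = u_max − u_min` and half-width `t1`, on `[−T/2, T/2]`:
`ψ` is `C¹`, twice differentiable away from `|t| = t1`, satisfies periodic boundary
conditions, and is a nontrivial eigenfunction with eigenvalue `u_max`. -/
theorem schrodinger_ground_state (umin umax : ℝ) (humin : umin < 0) (humax : 0 < umax)
    (t1 : ℝ) (ht1 : t1 ∈ Ioo 0 (OCt1star umin umax)) (T : ℝ) (hT : T = OCT umin umax t1)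
    (M : ℝ) (hM : M = umax - umin) (ψ V : ℝ → ℝ)
    (hψ : ∀ t : ℝ, ψ t =
      if |t| ≤ t1 then Real.cos (Real.sqrt umax * t)
      else Real.cos (Real.sqrt umax * t1) * Real.cosh (Real.sqrt (-umin) * (|t| - t1))
        - (Real.sqrt umax / Real.sqrt (-umin)) * Real.sin (Real.sqrt umax * t1) *
          Real.sinh (Real.sqrt (-umin) * (|t| - t1)))
    (hV : ∀ t : ℝ, V t = if |t| ≤ t1 then 0 else M) :
    ContDiffOn ℝ 1 ψ (Icc (-(T / 2)) (T / 2)) ∧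
    (∀ t ∈ Ioo (-(T / 2)) (T / 2), |t| ≠ t1 → DifferentiableAt ℝ (deriv ψ) t) ∧
    ψ (-(T / 2)) = ψ (T / 2) ∧
    deriv ψ (-(T / 2)) = 0 ∧ deriv ψ (T / 2) = 0 ∧
    (∀ t ∈ Ioo (-(T / 2)) (T / 2), |t| ≠ t1 →
      -deriv (deriv ψ) t + V t * ψ t = umax * ψ t) ∧
    (∃ t ∈ Icc (-(T / 2)) (T / 2), ψ t ≠ 0) := by
  obtain ⟨ht1pos, ht1lt⟩ := ht1
  rw [OCt1star] at ht1lt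
  rw [OCT] at hT
  set a := Real.sqrt umax with ha_def
  set b := Real.sqrt (-umin) with hb_def
  have ha : 0 < a := Real.sqrt_pos.mpr humax
  have hb : 0 < b := Real.sqrt_pos.mpr (by linarith)
  have ha2 : a ^ 2 = umax := Real.sq_sqrt humax.le
  have hb2 : b ^ 2 = -umin := Real.sq_sqrt (by linarith)
  have hθlt : a * t1 < Real.arctan (b / a) := by
    have h := mul_lt_mul_of_pos_left ht1lt ha
    rwa [show a * (1 / a * Real.arctan (b / a)) = Real.arctan (b / a) by field_simp] at h
  have hθπ : a * t1 < π / 2 := hθlt.trans (Real.arctan_lt_pi_div_two _)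
  have hθ0 : 0 < a * t1 := mul_pos ha ht1pos
  have hcosθ : 0 < Real.cos (a * t1) :=
    Real.cos_pos_of_mem_Ioo ⟨by linarith [Real.pi_pos], hθπ⟩
  have hsinθ : 0 < Real.sin (a * t1) :=
    Real.sin_pos_of_pos_of_lt_pi hθ0 (by linarith [Real.pi_pos])
  have htanθ : Real.tan (a * t1) < b / a := by
    have h := Real.tan_lt_tan_of_nonneg_of_lt_pi_div_two hθ0.le
      (Real.arctan_lt_pi_div_two (b / a)) hθlt
    rwa [Real.tan_arctan] at h
  have htanpos : 0 < Real.tan (a * t1) := by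
    rw [Real.tan_eq_sin_div_cos]; positivity
  have hBkA0 : a / b * Real.sin (a * t1) =
      (a / b * Real.tan (a * t1)) * Real.cos (a * t1) := by
    rw [Real.tan_eq_sin_div_cos]
    field_simp
  set k := a / b * Real.tan (a * t1) with hk_def
  have hk0 : 0 < k := by positivity
  have hk1 : k < 1 := by
    have h : a / b * Real.tan (a * t1) < a / b * (b / a) :=
      mul_lt_mul_of_pos_left htanθ (by positivity)
    rwa [show a / b * (b / a) = 1 by field_simp] at h
  set A := Real.cos (a * t1) with hA_def
  set B := a / b * Real.sin (a * t1) with hB_def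
  have hBkA : B = k * A := hBkA0
  have honem : (0:ℝ) < 1 - k := by linarith
  have hq1 : 1 < (1 + k) / (1 - k) := (one_lt_div honem).mpr (by linarith)
  have hlogpos : 0 < Real.log ((1 + k) / (1 - k)) := Real.log_pos hq1
  have hT2t1 : T / 2 - t1 = 1 / (2 * b) * Real.log ((1 + k) / (1 - k)) := by
    rw [hT]; field_simp; ring
  have ht1T : t1 < T / 2 := by
    have h : 0 < T / 2 - t1 := by rw [hT2t1]; positivity
    linarith
  set L := b * (T / 2 - t1) with hL_def
  have hLval : L = 1 / 2 * Real.log ((1 + k) / (1 - k)) := by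
    rw [hL_def, hT2t1]; field_simp
  set E := Real.exp L with hE_def
  have hEpos : 0 < E := Real.exp_pos L
  have hE2 : E ^ 2 * (1 - k) = 1 + k := by
    have h1 : E ^ 2 = Real.exp (2 * L) := by
      rw [hE_def, sq, ← Real.exp_add]; ring_nf
    rw [h1, hLval, show 2 * (1 / 2 * Real.log ((1 + k) / (1 - k))) =
      Real.log ((1 + k) / (1 - k)) by ring, Real.exp_log (by positivity)]
    field_simp
  have hkey0 : A * Real.sinh L - B * Real.cosh L = 0 := by
    rw [Real.sinh_eq, Real.cosh_eq, hBkA, Real.exp_neg]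
    have hEne : E ≠ 0 := hEpos.ne'
    field_simp
    linear_combination A * hE2
  -- the outer branch function and its derivatives
  set g : ℝ → ℝ := fun s => A * Real.cosh (b * (s - t1)) - B * Real.sinh (b * (s - t1))
    with hg_def
  set g' : ℝ → ℝ := fun s =>
      A * (b * Real.sinh (b * (s - t1))) - B * (b * Real.cosh (b * (s - t1))) with hg'_def
  have hgt1 : g t1 = A := by rw [hg_def]; simp
  have hg't1 : g' t1 = -(a * Real.sin (a * t1)) := by
    rw [hg'_def]; simp [hB_def]
    field_simp
  have hblin : ∀ t : ℝ, HasDerivAt (fun s : ℝ => b * (s - t1)) b t := by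
    intro t
    simpa using ((hasDerivAt_id t).sub_const t1).const_mul b
  have hgd : ∀ t : ℝ, HasDerivAt g (g' t) t := by
    intro t
    have h1 := ((hblin t).cosh).const_mul A
    have h2 := ((hblin t).sinh).const_mul B
    have h := h1.sub h2
    rw [hg_def, hg'_def]
    refine h.congr_deriv ?_
    ring
  have hg'd : ∀ t : ℝ, HasDerivAt g' (b ^ 2 * g t) t := by
    intro t
    have h1 := (((hblin t).sinh).const_mul b).const_mul A
    have h2 := (((hblin t).cosh).const_mul b).const_mul B
    have h := h1.sub h2
    rw [hg'_def, hg_def]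
    refine h.congr_deriv ?_
    ring
  have hcosd : ∀ t : ℝ, HasDerivAt (fun s : ℝ => Real.cos (a * s))
      (-(a * Real.sin (a * t))) t := by
    intro t
    have h := (((hasDerivAt_id t).const_mul a)).cos
    refine h.congr_deriv ?_
    simp only [id_eq]
    ring
  have hsind : ∀ t : ℝ, HasDerivAt (fun s : ℝ => -(a * Real.sin (a * s)))
      (-(a ^ 2 * Real.cos (a * t))) t := by
    intro t
    have h := ((((hasDerivAt_id t).const_mul a)).sin.const_mul a).neg
    refine h.congr_deriv ?_
    simp only [id_eq]
    ring
  -- piecewise descriptions of ψ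
  have hψ1 : EqOn ψ (fun s => Real.cos (a * s)) (Icc (-t1) t1) := by
    intro s hs
    rw [hψ s, if_pos (abs_le.mpr ⟨hs.1, hs.2⟩)]
  have hψ2 : EqOn ψ g (Ici t1) := by
    intro s hs
    rcases eq_or_lt_of_le (mem_Ici.mp hs) with h | h
    · rw [hψ s, if_pos (by rw [← h, abs_of_pos ht1pos]), ← h, hgt1]
    · rw [hψ s, if_neg (by rw [abs_of_pos (ht1pos.trans h)]; exact not_le.mpr h), hg_def]
      rw [abs_of_pos (ht1pos.trans h)]
  have hψ3 : EqOn ψ (fun s => g (-s)) (Iic (-t1)) := by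
    intro s hs
    rcases eq_or_lt_of_le (mem_Iic.mp hs) with h | h
    · rw [hψ s, if_pos (by rw [h, abs_neg, abs_of_pos ht1pos]), h]
      simp [hgt1, hA_def]
    · have hsneg : s < 0 := by linarith
      have habs : |s| = -s := abs_of_neg hsneg
      rw [hψ s, if_neg (by rw [habs]; push_neg; linarith), hg_def, habs]
  -- the derivative function
  set D : ℝ → ℝ := fun s =>
      if |s| ≤ t1 then -(a * Real.sin (a * s)) else if 0 < s then g' s else -g' (-s)
    with hD_def
  have hD1 : EqOn D (fun s => -(a * Real.sin (a * s))) (Icc (-t1) t1) := by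
    intro s hs
    rw [hD_def]
    exact if_pos (abs_le.mpr ⟨hs.1, hs.2⟩)
  have hD2 : EqOn D g' (Ici t1) := by
    intro s hs
    rcases eq_or_lt_of_le (mem_Ici.mp hs) with h | h
    · rw [hD_def]
      simp only [← h]
      rw [if_pos (by rw [abs_of_pos ht1pos]), hg't1]
    · rw [hD_def]
      simp only
      rw [if_neg (by rw [abs_of_pos (ht1pos.trans h)]; exact not_le.mpr h),
        if_pos (ht1pos.trans h)]
  have hD3 : EqOn D (fun s => -g' (-s)) (Iic (-t1)) := by
    intro s hs
    rcases eq_or_lt_of_le (mem_Iic.mp hs) with h | h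
    · rw [hD_def]
      simp only [h]
      rw [if_pos (by rw [abs_neg, abs_of_pos ht1pos]), neg_neg, hg't1]
      rw [show a * -t1 = -(a * t1) by ring, Real.sin_neg]
      ring
    · have hsneg : s < 0 := by linarith
      rw [hD_def]
      simp only
      rw [if_neg (by rw [abs_of_neg hsneg]; push_neg; linarith), if_neg (by linarith)]
  -- ψ has derivative D everywhere
  have hDall : ∀ t : ℝ, HasDerivAt ψ (D t) t := by
    intro t
    rcases lt_trichotomy t (-t1) with h | h | h
    · have hev : ψ =ᶠ[𝓝 t] fun s => g (-s) := by
        filter_upwards [Iio_mem_nhds h] with s hs using hψ3 (mem_Iic.mpr (le_of_lt hs))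
      have hgd' : HasDerivAt (fun s : ℝ => g (-s)) (g' (-t) * (-1)) t :=
        (hgd (-t)).comp t (hasDerivAt_neg _)
      have hh : HasDerivAt ψ (g' (-t) * (-1)) t := hgd'.congr_of_eventuallyEq hev
      have hD : D t = g' (-t) * (-1) := by
        rw [hD3 (mem_Iic.mpr (le_of_lt h))]; ring
      rwa [← hD] at hh
    · subst h
      have hwd1 : HasDerivWithinAt ψ (-(a * Real.sin (a * (-t1)))) (Icc (-t1) t1) (-t1) :=
        ((hcosd (-t1)).hasDerivWithinAt).congr hψ1 (hψ1 ⟨le_refl _, by linarith⟩)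
      have hwd2' : HasDerivAt (fun s : ℝ => g (-s)) (g' t1 * (-1)) (-t1) := by
        have h := (hgd (-(-t1))).comp (-t1) (hasDerivAt_neg _)
        rwa [neg_neg] at h
      have hval : g' t1 * (-1) = -(a * Real.sin (a * (-t1))) := by
        rw [hg't1, show a * -t1 = -(a * t1) by ring, Real.sin_neg]; ring
      have hwd2 : HasDerivWithinAt ψ (-(a * Real.sin (a * (-t1)))) (Iic (-t1)) (-t1) := by
        rw [← hval]
        exact (hwd2'.hasDerivWithinAt).congr hψ3 (hψ3 (mem_Iic.mpr (le_refl _)))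
      have hmem : Iic (-t1) ∪ Icc (-t1) t1 ∈ 𝓝 (-t1) := by
        refine Filter.mem_of_superset (Iio_mem_nhds (by linarith : (-t1:ℝ) < t1)) ?_
        intro x hx
        rcases le_or_gt x (-t1) with h' | h'
        · exact Or.inl h'
        · exact Or.inr ⟨h'.le, le_of_lt hx⟩
      have hh := (hwd2.union hwd1).hasDerivAt hmem
      have hD : D (-t1) = -(a * Real.sin (a * (-t1))) :=
        hD1 ⟨le_refl _, by linarith⟩
      rwa [← hD] at hh
    · rcases lt_trichotomy t t1 with h2 | h2 | h2
      · have hev : ψ =ᶠ[𝓝 t] fun s => Real.cos (a * s) := by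
          filter_upwards [Ioo_mem_nhds h h2] with s hs using hψ1 ⟨hs.1.le, hs.2.le⟩
        have hh : HasDerivAt ψ (-(a * Real.sin (a * t))) t :=
          (hcosd t).congr_of_eventuallyEq hev
        have hD : D t = -(a * Real.sin (a * t)) := hD1 ⟨h.le, h2.le⟩
        rwa [← hD] at hh
      · rw [h2]
        have hwd1 : HasDerivWithinAt ψ (-(a * Real.sin (a * t1))) (Icc (-t1) t1) t1 :=
          ((hcosd t1).hasDerivWithinAt).congr hψ1 (hψ1 ⟨by linarith, le_refl _⟩)
        have hwd2 : HasDerivWithinAt ψ (-(a * Real.sin (a * t1))) (Ici t1) t1 := by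
          rw [← hg't1]
          exact ((hgd t1).hasDerivWithinAt).congr hψ2 (hψ2 (mem_Ici.mpr (le_refl _)))
        have hmem : Icc (-t1) t1 ∪ Ici t1 ∈ 𝓝 t1 := by
          refine Filter.mem_of_superset (Ioi_mem_nhds (by linarith : (-t1:ℝ) < t1)) ?_
          intro x hx
          rcases le_or_gt x t1 with h' | h'
          · exact Or.inl ⟨le_of_lt hx, h'⟩
          · exact Or.inr h'.le
        have hh := (hwd1.union hwd2).hasDerivAt hmem
        have hD : D t1 = -(a * Real.sin (a * t1)) := hD1 ⟨by linarith, le_refl _⟩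
        rwa [← hD] at hh
      · have hev : ψ =ᶠ[𝓝 t] g := by
          filter_upwards [Ioi_mem_nhds h2] with s hs using hψ2 (mem_Ici.mpr (le_of_lt hs))
        have hh : HasDerivAt ψ (g' t) t := (hgd t).congr_of_eventuallyEq hev
        have hD : D t = g' t := hD2 (mem_Ici.mpr h2.le)
        rwa [← hD] at hh
  have hderiv : deriv ψ = D := funext fun t => (hDall t).deriv
  have hdiffψ : Differentiable ℝ ψ := fun t => (hDall t).differentiableAt
  -- continuity of D
  have hgc : Continuous g := by
    rw [hg_def]; fun_prop
  have hg'c : Continuous g' := by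
    rw [hg'_def]; fun_prop
  have hsc : Continuous fun s : ℝ => -(a * Real.sin (a * s)) := by fun_prop
  have hDcont : Continuous D := by
    rw [continuous_iff_continuousAt]
    intro t
    rcases lt_trichotomy t (-t1) with h | h | h
    · have hev : D =ᶠ[𝓝 t] fun s => -g' (-s) := by
        filter_upwards [Iio_mem_nhds h] with s hs using hD3 (mem_Iic.mpr (le_of_lt hs))
      exact ContinuousAt.congr (by fun_prop) hev.symm
    · subst h
      have c1 : ContinuousWithinAt D (Iic (-t1)) (-t1) :=
        ((by fun_prop : Continuous fun s : ℝ => -g' (-s)).continuousWithinAt).congr hD3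
          (hD3 (mem_Iic.mpr (le_refl _)))
      have c2 : ContinuousWithinAt D (Icc (-t1) t1) (-t1) :=
        (hsc.continuousWithinAt).congr hD1 (hD1 ⟨le_refl _, by linarith⟩)
      refine (c1.union c2).continuousAt ?_
      refine Filter.mem_of_superset (Iio_mem_nhds (by linarith : (-t1:ℝ) < t1)) ?_
      intro x hx
      rcases le_or_gt x (-t1) with h' | h'
      · exact Or.inl h'
      · exact Or.inr ⟨h'.le, le_of_lt hx⟩
    · rcases lt_trichotomy t t1 with h2 | h2 | h2
      · have hev : D =ᶠ[𝓝 t] fun s => -(a * Real.sin (a * s)) := by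
          filter_upwards [Ioo_mem_nhds h h2] with s hs using hD1 ⟨hs.1.le, hs.2.le⟩
        exact ContinuousAt.congr hsc.continuousAt hev.symm
      · rw [h2]
        have c1 : ContinuousWithinAt D (Icc (-t1) t1) t1 :=
          (hsc.continuousWithinAt).congr hD1 (hD1 ⟨by linarith, le_refl _⟩)
        have c2 : ContinuousWithinAt D (Ici t1) t1 :=
          (hg'c.continuousWithinAt).congr hD2 (hD2 (mem_Ici.mpr (le_refl _)))
        refine (c1.union c2).continuousAt ?_
        refine Filter.mem_of_superset (Ioi_mem_nhds (by linarith : (-t1:ℝ) < t1)) ?_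
        intro x hx
        rcases le_or_gt x t1 with h' | h'
        · exact Or.inl ⟨le_of_lt hx, h'⟩
        · exact Or.inr h'.le
      · have hev : D =ᶠ[𝓝 t] g' := by
          filter_upwards [Ioi_mem_nhds h2] with s hs using hD2 (mem_Ici.mpr (le_of_lt hs))
        exact ContinuousAt.congr hg'c.continuousAt hev.symm
  -- second derivative away from the glue points
  have hsecond : ∀ t : ℝ, |t| ≠ t1 →
      HasDerivAt D ((if |t| < t1 then -umax else -umin) * ψ t) t := by
    intro t ht
    rcases lt_trichotomy |t| t1 with h | h | h
    · obtain ⟨h1, h2⟩ := abs_lt.mp h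
      have hev : D =ᶠ[𝓝 t] fun s => -(a * Real.sin (a * s)) := by
        filter_upwards [Ioo_mem_nhds h1 h2] with s hs using hD1 ⟨hs.1.le, hs.2.le⟩
      have hh : HasDerivAt D (-(a ^ 2 * Real.cos (a * t))) t :=
        (hsind t).congr_of_eventuallyEq hev
      have hval : (if |t| < t1 then -umax else -umin) * ψ t
          = -(a ^ 2 * Real.cos (a * t)) := by
        rw [if_pos h, hψ1 ⟨h1.le, h2.le⟩, ha2]
        ring
      rwa [← hval] at hh
    · exact absurd h ht
    · rcases lt_or_gt_of_ne (show t ≠ 0 by rintro rfl; simp at h; linarith) with hneg | hpos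
      · have hlt : t < -t1 := by
          rw [abs_of_neg hneg] at h; linarith
        have hev : D =ᶠ[𝓝 t] fun s => -g' (-s) := by
          filter_upwards [Iio_mem_nhds hlt] with s hs using hD3 (mem_Iic.mpr (le_of_lt hs))
        have hh0 : HasDerivAt (fun s : ℝ => -g' (-s)) (b ^ 2 * g (-t)) t := by
          have h1 := ((hg'd (-t)).comp t (hasDerivAt_neg _)).neg
          refine h1.congr_deriv ?_
          ring
        have hh : HasDerivAt D (b ^ 2 * g (-t)) t := hh0.congr_of_eventuallyEq hev
        have hval : (if |t| < t1 then -umax else -umin) * ψ t = b ^ 2 * g (-t) := by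
          rw [if_neg (not_lt.mpr h.le), hψ3 (mem_Iic.mpr (le_of_lt hlt)), hb2]
        rwa [← hval] at hh
      · have hgt : t1 < t := by
          rw [abs_of_pos hpos] at h; linarith
        have hev : D =ᶠ[𝓝 t] g' := by
          filter_upwards [Ioi_mem_nhds hgt] with s hs using hD2 (mem_Ici.mpr (le_of_lt hs))
        have hh : HasDerivAt D (b ^ 2 * g t) t := (hg'd t).congr_of_eventuallyEq hev
        have hval : (if |t| < t1 then -umax else -umin) * ψ t = b ^ 2 * g t := by
          rw [if_neg (not_lt.mpr h.le), hψ2 (mem_Ici.mpr (le_of_lt hgt)), hb2]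
        rwa [← hval] at hh
  -- boundary facts
  have hT2pos : 0 < T / 2 := by linarith
  have hg'T : g' (T / 2) = 0 := by
    rw [hg'_def]
    simp only
    rw [← hL_def]
    linear_combination b * hkey0
  refine ⟨?_, ?_, ?_, ?_, ?_, ?_, ?_⟩
  · exact (contDiff_one_iff_deriv.mpr ⟨hdiffψ, by rw [hderiv]; exact hDcont⟩).contDiffOn
  · intro t htmem hne
    rw [hderiv]
    exact (hsecond t hne).differentiableAt
  · have hTn : ¬ |T / 2| ≤ t1 := by rw [abs_of_pos hT2pos]; push_neg; linarith
    rw [hψ, hψ, abs_neg, if_neg hTn, if_neg hTn]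
  · rw [hderiv, hD3 (mem_Iic.mpr (by linarith : -(T / 2) ≤ -t1))]
    simp only [neg_neg]
    rw [hg'T, neg_zero]
  · rw [hderiv, hD2 (mem_Ici.mpr (by linarith : t1 ≤ T / 2)), hg'T]
  · intro t htmem hne
    rw [hderiv, (hsecond t hne).deriv, hV t, hM]
    by_cases hc : |t| < t1
    · rw [if_pos hc, if_pos hc.le]
      ring
    · rw [if_neg hc, if_neg (fun hle => hc (lt_of_le_of_ne hle hne))]
      ring
  · refine ⟨0, ⟨by linarith, by linarith⟩, ?_⟩
    rw [hψ 0]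
    simp [ht1pos.le]
end
end

section
/- As t1 → t1*⁻ the following limits hold: (i) T(t1) → +∞; (ii) C(t1)/T(t1) → u_min (turnpike behavior of the optimal cost); (iii) cos(ω_max·t1) → ω_max/√(ω_min² + ω_max²) and ω_max·sin(ω_max·t1) → ω_min·ω_max/√(ω_min² + ω_max²); (iv) c(t1) → 0, where c(t1) = cos²(ω_max·t1)·(1 − (ω_max²/ω_min²)·tan²(ω_max·t1)). -/
open MeasureTheory Real Set Filter Topology

noncomputable section

/-- Limits as `t1 → t1*⁻`: `T(t1) → +∞`, `C(t1)/T(t1) → u_min` (turnpike behavior),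
`cos(ω_max·t1) → ω_max/√(ω_min² + ω_max²)`,
`ω_max·sin(ω_max·t1) → ω_min·ω_max/√(ω_min² + ω_max²)`, and `c(t1) → 0`. -/
theorem limits_at_t1star (umin umax : ℝ) (humin : umin < 0) (humax : 0 < umax) :
    Tendsto (OCT umin umax)
      (nhdsWithin (OCt1star umin umax) (Iio (OCt1star umin umax))) atTop ∧
    Tendsto (fun t1 => OCC umin umax t1 / OCT umin umax t1)
      (nhdsWithin (OCt1star umin umax) (Iio (OCt1star umin umax))) (nhds umin) ∧
    Tendsto (fun t1 => Real.cos (Real.sqrt umax * t1))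
      (nhdsWithin (OCt1star umin umax) (Iio (OCt1star umin umax)))
      (nhds (Real.sqrt umax / Real.sqrt (Real.sqrt (-umin) ^ 2 + Real.sqrt umax ^ 2))) ∧
    Tendsto (fun t1 => Real.sqrt umax * Real.sin (Real.sqrt umax * t1))
      (nhdsWithin (OCt1star umin umax) (Iio (OCt1star umin umax)))
      (nhds (Real.sqrt (-umin) * Real.sqrt umax /
        Real.sqrt (Real.sqrt (-umin) ^ 2 + Real.sqrt umax ^ 2))) ∧
    Tendsto (fun t1 => Real.cos (Real.sqrt umax * t1) ^ 2 *
        (1 - (Real.sqrt umax ^ 2 / Real.sqrt (-umin) ^ 2) *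
          Real.tan (Real.sqrt umax * t1) ^ 2))
      (nhdsWithin (OCt1star umin umax) (Iio (OCt1star umin umax))) (nhds 0) := by
  have ha : 0 < Real.sqrt (-umin) := Real.sqrt_pos.mpr (by linarith)
  have hb : 0 < Real.sqrt umax := Real.sqrt_pos.mpr humax
  set a := Real.sqrt (-umin) with ha_def
  set b := Real.sqrt umax with hb_def
  set θ := Real.arctan (a / b) with hθ_def
  have hθpos : 0 < θ := by
    have := Real.arctan_strictMono (show (0:ℝ) < a / b from div_pos ha hb)
    rw [Real.arctan_zero] at this; exact this
  have hθlt : θ < π / 2 := Real.arctan_lt_pi_div_two _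
  have hts : OCt1star umin umax = (1 / b) * θ := rfl
  have hbt : b * OCt1star umin umax = θ := by rw [hts]; field_simp
  have htspos : 0 < OCt1star umin umax := by rw [hts]; positivity
  set L := nhdsWithin (OCt1star umin umax) (Iio (OCt1star umin umax)) with hL
  have hcosθ : Real.cos θ ≠ 0 := (Real.cos_arctan_pos _).ne'
  -- continuity of tan (b * t1) at t1*
  have hmulc : ContinuousAt (fun t1 : ℝ => b * t1) (OCt1star umin umax) :=
    (continuous_const.mul continuous_id).continuousAt
  have htanc : ContinuousAt (fun t1 => Real.tan (b * t1)) (OCt1star umin umax) := by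
    have h1 : ContinuousAt Real.tan (b * OCt1star umin umax) := by
      rw [hbt]; exact Real.continuousAt_tan.mpr hcosθ
    exact h1.comp hmulc
  -- tan (b t1) → (a/b)⁻
  have htan : Tendsto (fun t1 => Real.tan (b * t1)) L (nhdsWithin (a / b) (Iio (a / b))) := by
    rw [tendsto_nhdsWithin_iff]
    constructor
    · have h := htanc.tendsto
      rw [show Real.tan (b * OCt1star umin umax) = a / b by
        rw [hbt, hθ_def, Real.tan_arctan]] at h
      exact h.mono_left nhdsWithin_le_nhds
    · have hmem : Ioo 0 (OCt1star umin umax) ∈ L :=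
        Ioo_mem_nhdsLT_of_mem ⟨htspos, le_refl _⟩
      filter_upwards [hmem] with t1 ht1
      have h2 : b * t1 < θ := by
        rw [← hbt]; exact mul_lt_mul_of_pos_left ht1.2 hb
      have := Real.tan_lt_tan_of_nonneg_of_lt_pi_div_two
        (mul_pos hb ht1.1).le hθlt h2
      rw [hθ_def, Real.tan_arctan] at this
      exact this
  -- r = (b/a) tan (b t1) → 1⁻
  have hr : Tendsto (fun t1 => (b / a) * Real.tan (b * t1)) L
      (nhdsWithin 1 (Iio 1)) := by
    rw [tendsto_nhdsWithin_iff] at htan ⊢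
    refine ⟨?_, ?_⟩
    · have h := htan.1.const_mul (b / a)
      have hval : (b / a) * (a / b) = 1 := by field_simp
      rwa [hval] at h
    · filter_upwards [htan.2] with t1 h
      have : (b / a) * Real.tan (b * t1) < (b / a) * (a / b) :=
        mul_lt_mul_of_pos_left h (div_pos hb ha)
      rw [show (b / a) * (a / b) = 1 by field_simp] at this
      exact this
  have hr1 : Tendsto (fun t1 => (b / a) * Real.tan (b * t1)) L (nhds 1) :=
    hr.mono_right nhdsWithin_le_nhds
  -- the log argument → atTop
  have hnum : Tendsto (fun t1 => 1 + (b / a) * Real.tan (b * t1)) L (nhds 2) := by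
    have := hr1.const_add 1
    norm_num at this
    exact this
  have hden : Tendsto (fun t1 => 1 - (b / a) * Real.tan (b * t1)) L
      (nhdsWithin 0 (Ioi 0)) := by
    rw [tendsto_nhdsWithin_iff]
    refine ⟨?_, ?_⟩
    · have := hr1.const_sub 1
      norm_num at this
      exact this
    · rw [tendsto_nhdsWithin_iff] at hr
      filter_upwards [hr.2] with t1 h
      simp only [mem_Iio] at h
      simp only [mem_Ioi]
      linarith
  have hinv : Tendsto (fun t1 => (1 - (b / a) * Real.tan (b * t1))⁻¹) L atTop :=
    tendsto_inv_nhdsGT_zero.comp hden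
  have hlogarg : Tendsto (fun t1 =>
      (1 + (b / a) * Real.tan (b * t1)) / (1 - (b / a) * Real.tan (b * t1))) L atTop := by
    have := Filter.Tendsto.pos_mul_atTop (show (0:ℝ) < 2 by norm_num) hnum hinv
    simpa [div_eq_mul_inv] using this
  -- (i)
  have hT : Tendsto (OCT umin umax) L atTop := by
    have hlog : Tendsto (fun t1 => Real.log
        ((1 + (b / a) * Real.tan (b * t1)) / (1 - (b / a) * Real.tan (b * t1)))) L atTop :=
      Real.tendsto_log_atTop.comp hlogarg
    have h1 : Tendsto (fun t1 => (1 / a) * Real.log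
        ((1 + (b / a) * Real.tan (b * t1)) / (1 - (b / a) * Real.tan (b * t1)))) L atTop :=
      hlog.const_mul_atTop (by positivity)
    have h2 : Tendsto (fun t1 : ℝ => 2 * t1) L (nhds (2 * OCt1star umin umax)) :=
      ((continuous_const.mul continuous_id).tendsto _).mono_left nhdsWithin_le_nhds
    have := h1.atTop_add h2
    exact this.congr (fun t1 => by simp only [OCT, ← ha_def, ← hb_def])
  refine ⟨hT, ?_, ?_, ?_, ?_⟩
  -- (ii)
  · have hTpos : ∀ᶠ t1 in L, 0 < OCT umin umax t1 := hT.eventually_gt_atTop 0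
    have heq : (fun t1 => umin + (2 * t1 * (umax - umin)) / OCT umin umax t1) =ᶠ[L]
        (fun t1 => OCC umin umax t1 / OCT umin umax t1) := by
      filter_upwards [hTpos] with t1 h
      have hne : OCT umin umax t1 ≠ 0 := h.ne'
      simp only [OCC]
      field_simp
      ring
    have h2t1 : Tendsto (fun t1 : ℝ => 2 * t1 * (umax - umin)) L
        (nhds (2 * OCt1star umin umax * (umax - umin))) :=
      (((continuous_const.mul continuous_id).mul continuous_const).tendsto _).mono_left
        nhdsWithin_le_nhds
    have hinvT : Tendsto (fun t1 => (OCT umin umax t1)⁻¹) L (nhds 0) :=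
      hT.inv_tendsto_atTop
    have h0 : Tendsto (fun t1 => (2 * t1 * (umax - umin)) / OCT umin umax t1) L (nhds 0) := by
      have := h2t1.mul hinvT
      rw [mul_zero] at this
      simpa [div_eq_mul_inv] using this
    have := (tendsto_const_nhds : Tendsto (fun _ : ℝ => umin) L (nhds umin)).add h0
    rw [add_zero] at this
    exact Filter.Tendsto.congr' heq this
  -- common value computations
  all_goals {
    have hsq : Real.sqrt (1 + (a / b) ^ 2) = Real.sqrt (a ^ 2 + b ^ 2) / b := by
      rw [show 1 + (a / b) ^ 2 = (a ^ 2 + b ^ 2) / b ^ 2 by field_simp; ring,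
        Real.sqrt_div (by positivity), Real.sqrt_sq hb.le]
    have hcosval : Real.cos θ = b / Real.sqrt (a ^ 2 + b ^ 2) := by
      rw [hθ_def, Real.cos_arctan, hsq, one_div_div]
    have hsinval : Real.sin θ = a / Real.sqrt (a ^ 2 + b ^ 2) := by
      rw [hθ_def, Real.sin_arctan, hsq]
      have hs : Real.sqrt (a ^ 2 + b ^ 2) ≠ 0 := by positivity
      field_simp
    have hcos : Tendsto (fun t1 => Real.cos (b * t1)) L (nhds (Real.cos θ)) := by
      have hc : ContinuousAt (fun t1 => Real.cos (b * t1)) (OCt1star umin umax) :=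
        Real.continuous_cos.continuousAt.comp hmulc
      rw [← hbt]
      exact hc.tendsto.mono_left nhdsWithin_le_nhds
    first
    | -- (iii) cos
      (rw [← hcosval]; exact hcos)
    | -- (iii) sin
      (have hsin : Tendsto (fun t1 => Real.sin (b * t1)) L (nhds (Real.sin θ)) := by
        have hc : ContinuousAt (fun t1 => Real.sin (b * t1)) (OCt1star umin umax) :=
          Real.continuous_sin.continuousAt.comp hmulc
        rw [← hbt]
        exact hc.tendsto.mono_left nhdsWithin_le_nhds
       have := hsin.const_mul b
       rw [show b * Real.sin θ = a * b / Real.sqrt (a ^ 2 + b ^ 2) by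
         rw [hsinval]; ring] at this
       exact this)
    | -- (iv)
      (have htan1 : Tendsto (fun t1 => Real.tan (b * t1)) L (nhds (a / b)) := by
        have h := htanc.tendsto
        rw [show Real.tan (b * OCt1star umin umax) = a / b by
          rw [hbt, hθ_def, Real.tan_arctan]] at h
        exact h.mono_left nhdsWithin_le_nhds
       have hfin := (hcos.pow 2).mul
         (((tendsto_const_nhds : Tendsto (fun _ : ℝ => (1:ℝ)) L (nhds 1)).sub
           ((htan1.pow 2).const_mul (b ^ 2 / a ^ 2))))
       have hval : Real.cos θ ^ 2 * (1 - b ^ 2 / a ^ 2 * (a / b) ^ 2) = 0 := by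
         rw [show b ^ 2 / a ^ 2 * (a / b) ^ 2 = 1 by field_simp]
         ring
       rw [hval] at hfin
       exact hfin)
  }

end
end
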